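/- arXiv:2512.25030 — 8 statements merged into one kernel-verified Lean document; each statement's English description precedes it below -/
import Mathlib

section
/- Let r > 0, a > 0, θ ∈ (0,1) and x > 0. Then the negative binomial mixture of Gamma densities collapses to a single Gamma density: Σ_{n=0}^∞ w_r(n) · (a^{n+r} x^{n+r−1} e^{−a x} / Γ(n+r)) = ((1−θ)a)^r x^{r−1} e^{−(1−θ)a x} / Γ(r). In other words, the w_r-mixture over n ∈ ℕ of the Gamma(r+n, a) densities equals the Gamma(r, (1−θ)a) density. (This is the paper's claim that the gamma process Z(t) ∼ Γ(λt, a) evaluated at the negative-binomially randomized time t + λ^{−1}B^−(λt) is again a gamma process with law Γ(λt, (1−θ)a).) -/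
open scoped BigOperators

/-- Negative binomial weights with real size parameter `r` and success parameter `θ`. -/
noncomputable def negBinWeight (r θ : ℝ) (n : ℕ) : ℝ :=
  (1 - θ) ^ r * (Real.Gamma ((n : ℝ) + r) / ((n.factorial : ℝ) * Real.Gamma r)) * θ ^ n

theorem negBin_mixture_of_gamma_densities
    (r a θ x : ℝ) (hr : 0 < r) (ha : 0 < a) (hθ0 : 0 < θ) (hθ1 : θ < 1) (hx : 0 < x) :
    ∑' n : ℕ, negBinWeight r θ n *
        (a ^ ((n : ℝ) + r) * x ^ ((n : ℝ) + r - 1) * Real.exp (-(a * x)) /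
          Real.Gamma ((n : ℝ) + r))
      = ((1 - θ) * a) ^ r * x ^ (r - 1) * Real.exp (-((1 - θ) * a * x)) / Real.Gamma r := by
  have hΓr : Real.Gamma r ≠ 0 := (Real.Gamma_pos_of_pos hr).ne'
  have key : ∀ n : ℕ, negBinWeight r θ n *
      (a ^ ((n : ℝ) + r) * x ^ ((n : ℝ) + r - 1) * Real.exp (-(a * x)) /
        Real.Gamma ((n : ℝ) + r))
      = ((1 - θ) ^ r * a ^ r * x ^ (r - 1) * Real.exp (-(a * x)) / Real.Gamma r) *
        ((θ * a * x) ^ n / (n.factorial : ℝ)) := by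
    intro n
    have hΓn : Real.Gamma ((n : ℝ) + r) ≠ 0 :=
      (Real.Gamma_pos_of_pos (by positivity)).ne'
    have hfac : (n.factorial : ℝ) ≠ 0 := by positivity
    have ha' : a ^ ((n : ℝ) + r) = a ^ n * a ^ r := by
      rw [Real.rpow_add ha, Real.rpow_natCast]
    have hx' : x ^ ((n : ℝ) + r - 1) = x ^ n * x ^ (r - 1) := by
      rw [show (n : ℝ) + r - 1 = (n : ℝ) + (r - 1) by ring, Real.rpow_add hx,
        Real.rpow_natCast]
    rw [negBinWeight, ha', hx', mul_pow, mul_pow]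
    field_simp
  rw [tsum_congr key, tsum_mul_left]
  have hexp : ∑' n : ℕ, (θ * a * x) ^ n / (n.factorial : ℝ) = Real.exp (θ * a * x) := by
    rw [Real.exp_eq_exp_ℝ, NormedSpace.exp_eq_tsum_div]
  rw [hexp, Real.mul_rpow (by linarith) ha.le]
  rw [div_mul_eq_mul_div, mul_assoc, ← Real.exp_add,
    show -(a * x) + θ * a * x = -((1 - θ) * a * x) by ring]
end

section
/- The function x ↦ g(x,t) is a probability density on the open positive orthant: for every t > 0, ∫_{(0,∞)^q} g(x,t) dx = 1, where the integral is with respect to q-dimensional Lebesgue measure. -/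
open scoped BigOperators
open MeasureTheory
open scoped ENNReal NNReal

open Set Real in
lemma mvAux_integrableOn {b p : ℝ} (hb : 0 < b) (hp : 0 < p) :
    IntegrableOn (fun y : ℝ => (b * y) ^ p / y * Real.exp (-(b * y))) (Ioi 0) := by
  have h := integrableOn_rpow_mul_exp_neg_mul_rpow (p := 1) (s := p - 1) (by linarith) zero_lt_one hb
  simp_rw [Real.rpow_one] at h
  have h2 : IntegrableOn (fun y : ℝ => b ^ p * (y ^ (p - 1) * Real.exp (-b * y))) (Ioi 0) :=
    h.const_mul (b ^ p)
  refine IntegrableOn.congr_fun h2 (fun y hy => ?_) measurableSet_Ioi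
  have hy : (0:ℝ) < y := hy
  show b ^ p * (y ^ (p - 1) * Real.exp (-b * y)) = (b * y) ^ p / y * Real.exp (-(b * y))
  rw [Real.mul_rpow hb.le hy.le, Real.rpow_sub hy, Real.rpow_one, neg_mul]
  ring

open Set Real in
lemma mvAux_integral {b p : ℝ} (hb : 0 < b) (hp : 0 < p) :
    ∫ y in Ioi (0:ℝ), (b * y) ^ p / y * Real.exp (-(b * y)) = Real.Gamma p := by
  have heq : EqOn (fun y : ℝ => (b * y) ^ p / y * Real.exp (-(b * y)))
      (fun y : ℝ => b ^ p * (y ^ (p - 1) * Real.exp (-(b * y)))) (Ioi 0) := by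
    intro y hy
    have hy : (0:ℝ) < y := hy
    show (b * y) ^ p / y * Real.exp (-(b * y)) = b ^ p * (y ^ (p - 1) * Real.exp (-(b * y)))
    rw [Real.mul_rpow hb.le hy.le, Real.rpow_sub hy, Real.rpow_one]
    ring
  rw [setIntegral_congr_fun measurableSet_Ioi heq, integral_const_mul,
    Real.integral_rpow_mul_exp_neg_mul_Ioi hp hb, one_div, Real.inv_rpow hb.le,
    ← mul_assoc, mul_inv_cancel₀ (Real.rpow_pos_of_pos hb p).ne', one_mul]

open Set Real in
lemma mvAux_series {θ s : ℝ} (hθ0 : 0 < θ) (hθ1 : θ < 1) (hs : 0 < s) :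
    ∑' n : ℕ, ENNReal.ofReal (θ ^ n * Real.Gamma ((n : ℝ) + s) / n.factorial)
      = ENNReal.ofReal (Real.Gamma s / (1 - θ) ^ s) := by
  have hθ' : (0:ℝ) < 1 - θ := by linarith
  have h1 : ∀ n : ℕ, ENNReal.ofReal (θ ^ n * Real.Gamma ((n : ℝ) + s) / n.factorial)
      = ∫⁻ y in Ioi (0:ℝ),
          ENNReal.ofReal (θ ^ n / n.factorial * (Real.exp (-y) * y ^ ((n : ℝ) + s - 1))) := by
    intro n
    have hns : (0:ℝ) < (n : ℝ) + s := by positivity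
    have hint := (Real.GammaIntegral_convergent hns).const_mul
      ((θ : ℝ) ^ n / (n.factorial : ℝ))
    have hnn : 0 ≤ᵐ[volume.restrict (Ioi (0:ℝ))]
        fun y : ℝ => θ ^ n / (n.factorial : ℝ) * (Real.exp (-y) * y ^ ((n : ℝ) + s - 1)) := by
      filter_upwards [ae_restrict_mem measurableSet_Ioi] with y hy
      have hy : (0:ℝ) < y := hy
      positivity
    rw [← ofReal_integral_eq_lintegral_ofReal hint hnn, integral_const_mul,
      ← Real.Gamma_eq_integral hns]
    congr 1
    ring
  simp_rw [h1]
  rw [← lintegral_tsum (fun n => by fun_prop)]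
  have h2 : ∀ y ∈ Ioi (0:ℝ),
      (∑' n : ℕ, ENNReal.ofReal (θ ^ n / (n.factorial : ℝ)
          * (Real.exp (-y) * y ^ ((n : ℝ) + s - 1))))
        = ENNReal.ofReal (y ^ (s - 1) * Real.exp (-((1 - θ) * y))) := by
    intro y hy
    have hy : (0:ℝ) < y := hy
    have hterm : ∀ n : ℕ, θ ^ n / (n.factorial : ℝ) * (Real.exp (-y) * y ^ ((n : ℝ) + s - 1))
        = (Real.exp (-y) * y ^ (s - 1)) * ((θ * y) ^ n / (n.factorial : ℝ)) := by
      intro n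
      have hpow : y ^ ((n : ℝ) + s - 1) = y ^ (n : ℕ) * y ^ (s - 1) := by
        rw [← Real.rpow_natCast y n, ← Real.rpow_add hy]
        ring_nf
      rw [hpow, mul_pow]
      ring
    have hnn : ∀ n : ℕ, 0 ≤ (Real.exp (-y) * y ^ (s - 1)) * ((θ * y) ^ n / (n.factorial : ℝ)) := by
      intro n
      positivity
    have hsum : Summable fun n : ℕ =>
        (Real.exp (-y) * y ^ (s - 1)) * ((θ * y) ^ n / (n.factorial : ℝ)) :=
      (Real.summable_pow_div_factorial (θ * y)).mul_left _
    have hexp : ∑' n : ℕ, ((θ * y) ^ n / (n.factorial : ℝ)) = Real.exp (θ * y) := by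
      rw [Real.exp_eq_exp_ℝ, NormedSpace.exp_eq_tsum_div]
    calc (∑' n : ℕ, ENNReal.ofReal (θ ^ n / (n.factorial : ℝ)
          * (Real.exp (-y) * y ^ ((n : ℝ) + s - 1))))
        = ∑' n : ℕ, ENNReal.ofReal ((Real.exp (-y) * y ^ (s - 1))
            * ((θ * y) ^ n / (n.factorial : ℝ))) := by
          exact tsum_congr fun n => by rw [hterm n]
      _ = ENNReal.ofReal (∑' n : ℕ, (Real.exp (-y) * y ^ (s - 1))
            * ((θ * y) ^ n / (n.factorial : ℝ))) :=
          (ENNReal.ofReal_tsum_of_nonneg hnn hsum).symm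
      _ = ENNReal.ofReal (y ^ (s - 1) * Real.exp (-((1 - θ) * y))) := by
          rw [tsum_mul_left, hexp]
          congr 1
          rw [show -((1 - θ) * y) = -y + θ * y by ring, Real.exp_add]
          ring
  rw [setLIntegral_congr_fun measurableSet_Ioi h2]
  have hint2 : IntegrableOn (fun y : ℝ => y ^ (s - 1) * Real.exp (-((1 - θ) * y))) (Ioi 0) := by
    have h := integrableOn_rpow_mul_exp_neg_mul_rpow (p := 1) (s := s - 1) (by linarith) zero_lt_one hθ'
    simp_rw [Real.rpow_one] at h
    refine IntegrableOn.congr_fun h (fun y hy => ?_) measurableSet_Ioi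
    show y ^ (s - 1) * Real.exp (-(1 - θ) * y) = y ^ (s - 1) * Real.exp (-((1 - θ) * y))
    rw [neg_mul]
  have hnn2 : 0 ≤ᵐ[volume.restrict (Ioi (0:ℝ))]
      fun y : ℝ => y ^ (s - 1) * Real.exp (-((1 - θ) * y)) := by
    filter_upwards [ae_restrict_mem measurableSet_Ioi] with y hy
    have hy : (0:ℝ) < y := hy
    positivity
  rw [← ofReal_integral_eq_lintegral_ofReal hint2 hnn2,
    Real.integral_rpow_mul_exp_neg_mul_Ioi hs hθ', one_div, Real.inv_rpow hθ'.le,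
    inv_mul_eq_div]

/-- The density of the multivariate gamma subordinator at point `x` and time `t`. -/
noncomputable def mvGammaPdf (q : ℕ) (lam θ : ℝ) (a : Fin q → ℝ) (x : Fin q → ℝ) (t : ℝ) : ℝ :=
  ((1 - θ) ^ (lam * t) / Real.Gamma (lam * t)) *
    ∑' n : ℕ, (θ ^ n / ((n.factorial : ℝ) * Real.Gamma ((n : ℝ) + lam * t) ^ (q - 1))) *
      ∏ i, ((a i * x i) ^ ((n : ℝ) + lam * t) / x i * Real.exp (-(a i * x i)))

theorem mvGammaPdf_integral_eq_one
    (q : ℕ) (hq : 1 ≤ q) (lam θ : ℝ) (hlam : 0 < lam) (hθ0 : 0 < θ) (hθ1 : θ < 1)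
    (a : Fin q → ℝ) (ha : ∀ i, 0 < a i) (t : ℝ) (ht : 0 < t) :
    ∫ x in Set.univ.pi fun _ : Fin q => Set.Ioi (0 : ℝ), mvGammaPdf q lam θ a x t = 1 := by
  have hs : 0 < lam * t := mul_pos hlam ht
  have hθ' : (0:ℝ) < 1 - θ := by linarith
  have hΓs : 0 < Real.Gamma (lam * t) := Real.Gamma_pos_of_pos hs
  set f : ℕ → Fin q → ℝ → ℝ := fun n i =>
    (Set.Ioi (0:ℝ)).indicator fun y =>
      (a i * y) ^ ((n : ℝ) + lam * t) / y * Real.exp (-(a i * y)) with hf_def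
  set k : ℕ → ℝ := fun n =>
    θ ^ n / ((n.factorial : ℝ) * Real.Gamma ((n : ℝ) + lam * t) ^ (q - 1)) with hk_def
  set F : ℕ → (Fin q → ℝ) → ℝ := fun n x => k n * ∏ i, f n i (x i) with hF_def
  have hns : ∀ n : ℕ, (0:ℝ) < (n : ℝ) + lam * t := fun n => by positivity
  have hΓns : ∀ n : ℕ, 0 < Real.Gamma ((n : ℝ) + lam * t) :=
    fun n => Real.Gamma_pos_of_pos (hns n)
  have hk_nonneg : ∀ n, 0 ≤ k n := fun n =>
    div_nonneg (pow_nonneg hθ0.le n)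
      (mul_nonneg (Nat.cast_nonneg _) (pow_nonneg (hΓns n).le _))
  have hf_nonneg : ∀ n i y, 0 ≤ f n i y := by
    intro n i y
    refine Set.indicator_nonneg (fun y hy => ?_) y
    have hy : (0:ℝ) < y := hy
    have hai := ha i
    positivity
  have hF_nonneg : ∀ n x, 0 ≤ F n x := fun n x =>
    mul_nonneg (hk_nonneg n) (Finset.prod_nonneg fun i _ => hf_nonneg n i (x i))
  have hmeas_f : ∀ n i, Measurable (f n i) := by
    intro n i
    refine Measurable.indicator ?_ measurableSet_Ioi
    fun_prop
  have hmeas_F : ∀ n, Measurable (F n) := by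
    intro n
    refine Measurable.const_mul ?_ _
    exact Finset.measurable_prod _ fun i _ => (hmeas_f n i).comp (measurable_pi_apply i)
  have hint_f : ∀ n i, Integrable (f n i) := fun n i =>
    (integrable_indicator_iff measurableSet_Ioi).mpr (mvAux_integrableOn (ha i) (hns n))
  have hint_eq : ∀ n i, ∫ y, f n i y = Real.Gamma ((n : ℝ) + lam * t) := by
    intro n i
    rw [hf_def]
    rw [integral_indicator measurableSet_Ioi]
    exact mvAux_integral (ha i) (hns n)
  have hint_F : ∀ n, Integrable (F n) :=
    fun n => (Integrable.fintype_prod (f := f n) (hint_f n)).const_mul _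
  have hF_val : ∀ n, ∫ x, F n x = θ ^ n * Real.Gamma ((n : ℝ) + lam * t) / n.factorial := by
    intro n
    rw [hF_def]
    simp only
    rw [integral_const_mul, integral_fintype_prod_volume_eq_prod (ι := Fin q) (fun i => f n i)]
    have hprod : ∏ i : Fin q, ∫ y, f n i y = Real.Gamma ((n : ℝ) + lam * t) ^ q := by
      simp only [hint_eq]
      rw [Finset.prod_const, Finset.card_univ, Fintype.card_fin]
    rw [hprod, hk_def]
    obtain ⟨m, rfl⟩ : ∃ m, q = m + 1 := ⟨q - 1, (Nat.succ_pred_eq_of_pos hq).symm⟩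
    simp only [Nat.add_sub_cancel]
    rw [pow_succ]
    have h1 : Real.Gamma ((n : ℝ) + lam * t) ^ m ≠ 0 := (pow_pos (hΓns n) m).ne'
    have h2 : (n.factorial : ℝ) ≠ 0 := Nat.cast_ne_zero.mpr n.factorial_ne_zero
    field_simp
  have hsum_real : ∑' n : ℕ, θ ^ n * Real.Gamma ((n : ℝ) + lam * t) / n.factorial
      = Real.Gamma (lam * t) / (1 - θ) ^ (lam * t) := by
    have hofReal := mvAux_series hθ0 hθ1 hs
    have hnn : ∀ n : ℕ, 0 ≤ θ ^ n * Real.Gamma ((n : ℝ) + lam * t) / n.factorial := by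
      intro n
      have := hΓns n
      positivity
    have hsummable : Summable fun n : ℕ =>
        θ ^ n * Real.Gamma ((n : ℝ) + lam * t) / n.factorial := by
      have h := ENNReal.summable_toReal (hofReal ▸ ENNReal.ofReal_ne_top)
      exact h.congr fun n => ENNReal.toReal_ofReal (hnn n)
    have h3 := (ENNReal.ofReal_tsum_of_nonneg hnn hsummable).trans hofReal
    exact (ENNReal.ofReal_eq_ofReal_iff (tsum_nonneg hnn)
      (div_nonneg hΓs.le (Real.rpow_nonneg hθ'.le _))).mp h3
  have hlint : ∀ n, (∫⁻ x, (‖F n x‖₊ : ℝ≥0∞))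
      = ENNReal.ofReal (θ ^ n * Real.Gamma ((n : ℝ) + lam * t) / n.factorial) := by
    intro n
    rw [show (∫⁻ x, (‖F n x‖₊ : ℝ≥0∞)) = ∫⁻ x, ENNReal.ofReal (F n x) from
        lintegral_congr fun x => Real.enorm_eq_ofReal (hF_nonneg n x),
      ← ofReal_integral_eq_lintegral_ofReal (hint_F n) (ae_of_all _ (hF_nonneg n)), hF_val n]
  have key : (∫ x in Set.univ.pi fun _ : Fin q => Set.Ioi (0:ℝ),
      ∑' n : ℕ, k n * ∏ i, ((a i * x i) ^ ((n : ℝ) + lam * t) / x i * Real.exp (-(a i * x i))))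
      = Real.Gamma (lam * t) / (1 - θ) ^ (lam * t) := by
    have hset : MeasurableSet (Set.univ.pi fun _ : Fin q => Set.Ioi (0:ℝ)) :=
      MeasurableSet.univ_pi fun _ => measurableSet_Ioi
    rw [← integral_indicator hset]
    have hind : (Set.univ.pi fun _ : Fin q => Set.Ioi (0:ℝ)).indicator
        (fun x => ∑' n : ℕ,
          k n * ∏ i, ((a i * x i) ^ ((n : ℝ) + lam * t) / x i * Real.exp (-(a i * x i))))
        = fun x => ∑' n : ℕ, F n x := by
      funext x
      by_cases hx : x ∈ Set.univ.pi fun _ : Fin q => Set.Ioi (0:ℝ)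
      · rw [Set.indicator_of_mem hx]
        refine tsum_congr fun n => ?_
        rw [hF_def]
        simp only
        congr 1
        refine Finset.prod_congr rfl fun i _ => ?_
        rw [hf_def]
        simp only
        rw [Set.indicator_of_mem (hx i (Set.mem_univ i))]
      · rw [Set.indicator_of_notMem hx]
        rw [Set.mem_pi] at hx
        push_neg at hx
        obtain ⟨i, -, hi⟩ := hx
        have hz : ∀ n, F n x = 0 := by
          intro n
          rw [hF_def]
          simp only
          rw [Finset.prod_eq_zero (Finset.mem_univ i)
            (by rw [hf_def]; simp only; exact Set.indicator_of_notMem hi _), mul_zero]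
        simp only [hz, tsum_zero]
    have hfin : (∑' n : ℕ, ∫⁻ x, (‖F n x‖₊ : ℝ≥0∞)) ≠ ⊤ := by
      rw [tsum_congr hlint, mvAux_series hθ0 hθ1 hs]
      exact ENNReal.ofReal_ne_top
    rw [hind, integral_tsum (fun n => (hmeas_F n).aestronglyMeasurable) hfin]
    rw [tsum_congr hF_val, hsum_real]
  unfold mvGammaPdf
  rw [integral_const_mul, key]
  rw [div_mul_div_comm, mul_comm ((1 - θ) ^ (lam * t)) (Real.Gamma (lam * t)),
    div_self (mul_ne_zero hΓs.ne' (Real.rpow_pos_of_pos hθ' _).ne')]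
end

section
/- For every t > 0, every index i ∈ {1,…,q} and every x_i > 0, integrating g(x,t) over the remaining q−1 coordinates yields the Gamma(λt, (1−θ)a_i) density: ∫_{(0,∞)^{q−1}} g(x,t) ∏_{j≠i} dx_j = γ_{λt,(1−θ)a_i}(x_i). That is, the i-th marginal of the multivariate gamma subordinator at time t has the Gamma(λt, (1−θ)a_i) distribution. -/
open scoped BigOperators
open MeasureTheory

/-- The Gamma(r, b) probability density. -/
noncomputable def gammaPdf (r b x : ℝ) : ℝ :=
  b ^ r * x ^ (r - 1) * Real.exp (-(b * x)) / Real.Gamma r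

namespace MvGammaAux

noncomputable def auxG (b p : ℝ) : ℝ → ℝ := fun y => (b * y) ^ p / y * Real.exp (-(b * y))

lemma auxG_eqOn {b p : ℝ} (hb : 0 < b) :
    Set.EqOn (auxG b p) (fun y => b ^ p * (y ^ (p - 1) * Real.exp (-(b * y)))) (Set.Ioi 0) := by
  intro y hy
  have hy0 : (0 : ℝ) < y := hy
  simp only [auxG]
  rw [Real.mul_rpow hb.le hy0.le, Real.rpow_sub hy0, Real.rpow_one]
  field_simp

lemma auxG_nonneg {b p y : ℝ} (hb : 0 < b) (hy : 0 < y) : 0 ≤ auxG b p y := by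
  have : 0 < b * y := by positivity
  simp only [auxG]
  positivity

lemma auxG_integrableOn {b p : ℝ} (hb : 0 < b) (hp : 0 < p) :
    IntegrableOn (auxG b p) (Set.Ioi (0 : ℝ)) := by
  have h := (integrableOn_rpow_mul_exp_neg_mul_rpow (s := p - 1) (p := 1)
      (by linarith) zero_lt_one hb).const_mul (b ^ p)
  refine MeasureTheory.IntegrableOn.congr_fun h (fun y hy => ?_) measurableSet_Ioi
  rw [auxG_eqOn hb hy, Real.rpow_one, neg_mul]

lemma auxG_integral {b p : ℝ} (hb : 0 < b) (hp : 0 < p) :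
    ∫ y in Set.Ioi (0 : ℝ), auxG b p y = Real.Gamma p := by
  rw [setIntegral_congr_fun measurableSet_Ioi (auxG_eqOn hb), MeasureTheory.integral_const_mul,
    Real.integral_rpow_mul_exp_neg_mul_Ioi hp hb, ← mul_assoc,
    ← Real.mul_rpow hb.le (by positivity : (0:ℝ) ≤ 1 / b), mul_one_div, div_self hb.ne',
    Real.one_rpow, one_mul]

lemma indicator_pi_prod {ι : Type*} [Fintype ι] (f : ι → ℝ → ℝ) (y : ι → ℝ) :
    (Set.univ.pi fun _ : ι => Set.Ioi (0 : ℝ)).indicator (fun z => ∏ j, f j (z j)) y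
      = ∏ j, (Set.Ioi (0 : ℝ)).indicator (f j) (y j) := by
  by_cases h : y ∈ Set.univ.pi fun _ : ι => Set.Ioi (0 : ℝ)
  · rw [Set.indicator_of_mem h]
    exact Finset.prod_congr rfl fun j _ =>
      (Set.indicator_of_mem (h j (Set.mem_univ j)) _).symm
  · rw [Set.indicator_of_notMem h]
    rw [Set.mem_pi] at h
    push_neg at h
    obtain ⟨j, -, hj⟩ := h
    exact (Finset.prod_eq_zero (Finset.mem_univ j) (Set.indicator_of_notMem hj _)).symm

lemma real_exp_eq_tsum (z : ℝ) : Real.exp z = ∑' n : ℕ, z ^ n / n.factorial := by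
  rw [Real.exp_eq_exp_ℝ, NormedSpace.exp_eq_tsum_div]

end MvGammaAux

open MvGammaAux

theorem mvGammaPdf_marginal
    (q : ℕ) (hq : 1 ≤ q) (lam θ : ℝ) (hlam : 0 < lam) (hθ0 : 0 < θ) (hθ1 : θ < 1)
    (a : Fin q → ℝ) (ha : ∀ i, 0 < a i) (t : ℝ) (ht : 0 < t)
    (i : Fin q) (xi : ℝ) (hxi : 0 < xi) :
    (∫ y in Set.univ.pi fun _ : {j : Fin q // j ≠ i} => Set.Ioi (0 : ℝ),
        mvGammaPdf q lam θ a (fun j => if h : j = i then xi else y ⟨j, h⟩) t)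
      = gammaPdf (lam * t) ((1 - θ) * a i) xi := by
  classical
  have hr : 0 < lam * t := mul_pos hlam ht
  set r := lam * t with hr_def
  have hΓr : 0 < Real.Gamma r := Real.Gamma_pos_of_pos hr
  have hp : ∀ n : ℕ, (0 : ℝ) < (n : ℝ) + r := fun n => by positivity
  have hΓp : ∀ n : ℕ, (0 : ℝ) < Real.Gamma ((n : ℝ) + r) :=
    fun n => Real.Gamma_pos_of_pos (hp n)
  set S : Set ({j : Fin q // j ≠ i} → ℝ) := Set.univ.pi fun _ => Set.Ioi (0 : ℝ) with hS_def
  have hS : MeasurableSet S := MeasurableSet.univ_pi fun _ => measurableSet_Ioi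
  set F : ℕ → ({j : Fin q // j ≠ i} → ℝ) → ℝ := fun n y =>
    (θ ^ n / ((n.factorial : ℝ) * Real.Gamma ((n : ℝ) + r) ^ (q - 1))
        * auxG (a i) ((n : ℝ) + r) xi)
      * ∏ j' : {j : Fin q // j ≠ i}, auxG (a j') ((n : ℝ) + r) (y j') with hF_def
  have hcard : Fintype.card {j : Fin q // j ≠ i} = q - 1 := by
    simp [ne_eq, Fintype.card_subtype_compl, Fintype.card_subtype_eq, Fintype.card_fin]
  -- rewrite the integrand
  have hint_eq : ∀ y : {j : Fin q // j ≠ i} → ℝ,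
      mvGammaPdf q lam θ a (fun j => if h : j = i then xi else y ⟨j, h⟩) t
        = ((1 - θ) ^ r / Real.Gamma r) * ∑' n, F n y := by
    intro y
    unfold mvGammaPdf
    rw [← hr_def]
    congr 1
    refine tsum_congr fun n => ?_
    rw [hF_def]
    rw [Fintype.prod_eq_mul_prod_compl i, ← mul_assoc]
    congr 1
    · simp [auxG]
    · rw [Finset.prod_subtype (p := fun j => j ≠ i) ({i}ᶜ : Finset (Fin q)) (fun j => by simp)]
      refine Finset.prod_congr rfl fun j' _ => ?_
      simp [auxG, j'.prop]
  -- per-n integrability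
  have hPInt : ∀ n : ℕ, Integrable (fun y : {j : Fin q // j ≠ i} → ℝ =>
      ∏ j' : {j : Fin q // j ≠ i}, (Set.Ioi (0 : ℝ)).indicator (auxG (a j') ((n : ℝ) + r)) (y j')) := by
    intro n
    exact Integrable.fintype_prod fun j' =>
      (integrable_indicator_iff measurableSet_Ioi).2 (auxG_integrableOn (ha j') (hp n))
  have hPeq : ∀ n : ℕ, (fun y : {j : Fin q // j ≠ i} → ℝ =>
      ∏ j' : {j : Fin q // j ≠ i}, (Set.Ioi (0 : ℝ)).indicator (auxG (a j') ((n : ℝ) + r)) (y j'))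
      = S.indicator (fun y => ∏ j' : {j : Fin q // j ≠ i}, auxG (a j') ((n : ℝ) + r) (y j')) := by
    intro n
    funext y
    rw [hS_def, indicator_pi_prod]
  have hFInt : ∀ n, Integrable (F n) (volume.restrict S) := by
    intro n
    have h1 : IntegrableOn
        (fun y : {j : Fin q // j ≠ i} → ℝ =>
          ∏ j' : {j : Fin q // j ≠ i}, auxG (a j') ((n : ℝ) + r) (y j')) S := by
      have := hPInt n
      rw [hPeq n] at this
      exact (integrable_indicator_iff hS).1 this
    exact h1.const_mul _
  -- value of each integral
  have hFval : ∀ n, ∫ y in S, F n y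
      = θ ^ n / (n.factorial : ℝ) * auxG (a i) ((n : ℝ) + r) xi := by
    intro n
    rw [hF_def]
    rw [MeasureTheory.integral_const_mul]
    have hprod : ∫ y in S, ∏ j' : {j : Fin q // j ≠ i}, auxG (a j') ((n : ℝ) + r) (y j')
        = Real.Gamma ((n : ℝ) + r) ^ (q - 1) := by
      rw [← integral_indicator hS, ← hPeq n,
        MeasureTheory.integral_fintype_prod_volume_eq_prod]
      have : ∀ j' : {j : Fin q // j ≠ i},
          ∫ z, (Set.Ioi (0 : ℝ)).indicator (auxG (a j') ((n : ℝ) + r)) z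
            = Real.Gamma ((n : ℝ) + r) := by
        intro j'
        rw [integral_indicator measurableSet_Ioi, auxG_integral (ha j') (hp n)]
      rw [Finset.prod_congr rfl fun j' _ => this j', Finset.prod_const, Finset.card_univ, hcard]
    rw [hprod]
    have hΓ : Real.Gamma ((n : ℝ) + r) ^ (q - 1) ≠ 0 := pow_ne_zero _ (hΓp n).ne'
    have hfac : ((n.factorial : ℝ)) ≠ 0 := Nat.cast_ne_zero.2 n.factorial_ne_zero
    field_simp
  -- summability of norms
  have haxi : (0 : ℝ) < a i * xi := mul_pos (ha i) hxi
  have hVsum : Summable fun n : ℕ =>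
      θ ^ n / (n.factorial : ℝ) * auxG (a i) ((n : ℝ) + r) xi := by
    refine ((Real.summable_pow_div_factorial (θ * (a i * xi))).mul_right
      ((a i * xi) ^ r / xi * Real.exp (-(a i * xi)))).congr fun n => ?_
    simp only [auxG]
    rw [Real.rpow_add haxi, Real.rpow_natCast, mul_pow]
    field_simp
  have hFnorm : ∀ n, ∫ y in S, ‖F n y‖
      = θ ^ n / (n.factorial : ℝ) * auxG (a i) ((n : ℝ) + r) xi := by
    intro n
    rw [← hFval n]
    refine integral_congr_ae ?_
    filter_upwards [ae_restrict_mem hS] with y hy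
    rw [Real.norm_eq_abs, abs_of_nonneg]
    rw [hF_def]
    have h1 : 0 ≤ θ ^ n / ((n.factorial : ℝ) * Real.Gamma ((n : ℝ) + r) ^ (q - 1)) :=
      div_nonneg (pow_nonneg hθ0.le n)
        (mul_nonneg (Nat.cast_nonneg _) (pow_nonneg (hΓp n).le _))
    have h2 : 0 ≤ auxG (a i) ((n : ℝ) + r) xi := auxG_nonneg (ha i) hxi
    have h3 : 0 ≤ ∏ j' : {j : Fin q // j ≠ i}, auxG (a j') ((n : ℝ) + r) (y j') :=
      Finset.prod_nonneg fun j' _ => auxG_nonneg (ha j') (hy j' (Set.mem_univ j'))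
    exact mul_nonneg (mul_nonneg h1 h2) h3
  have hFsum : Summable fun n => ∫ y in S, ‖F n y‖ := by
    exact hVsum.congr fun n => (hFnorm n).symm
  -- main computation
  calc
    (∫ y in S, mvGammaPdf q lam θ a (fun j => if h : j = i then xi else y ⟨j, h⟩) t)
        = ∫ y in S, ((1 - θ) ^ r / Real.Gamma r) * ∑' n, F n y := by
          simp only [hint_eq]
    _ = ((1 - θ) ^ r / Real.Gamma r) * ∫ y in S, ∑' n, F n y := by
          rw [MeasureTheory.integral_const_mul]
    _ = ((1 - θ) ^ r / Real.Gamma r) * ∑' n, ∫ y in S, F n y := by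
          rw [integral_tsum_of_summable_integral_norm hFInt hFsum]
    _ = ((1 - θ) ^ r / Real.Gamma r) *
          ∑' n : ℕ, θ ^ n / (n.factorial : ℝ) * auxG (a i) ((n : ℝ) + r) xi := by
          rw [tsum_congr hFval]
    _ = gammaPdf r ((1 - θ) * a i) xi := by
          have hsum : ∑' n : ℕ, θ ^ n / (n.factorial : ℝ) * auxG (a i) ((n : ℝ) + r) xi
              = Real.exp (θ * (a i * xi)) * ((a i * xi) ^ r / xi * Real.exp (-(a i * xi))) := by
            rw [real_exp_eq_tsum, ← tsum_mul_right]
            refine tsum_congr fun n => ?_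
            simp only [auxG]
            rw [Real.rpow_add haxi, Real.rpow_natCast, mul_pow]
            field_simp
            ring
          have hE : Real.exp (-((1 - θ) * a i * xi))
              = Real.exp (θ * (a i * xi)) * Real.exp (-(a i * xi)) := by
            rw [← Real.exp_add]; ring_nf
          rw [hsum]
          unfold gammaPdf
          have h1θ : (0 : ℝ) < 1 - θ := by linarith
          rw [hE, Real.mul_rpow h1θ.le (ha i).le, Real.mul_rpow (ha i).le hxi.le,
            Real.rpow_sub hxi, Real.rpow_one]
          field_simp
end

section
/- Joint Laplace–Stieltjes transform of the multivariate gamma subordinator: for every t > 0 and all s_1,…,s_q ≥ 0, ∫_{(0,∞)^q} exp(−Σ_{i=1}^q s_i x_i) · g(x,t) dx = ( (1−θ) / ( ∏_{i=1}^q (1 + s_i/a_i) − θ ) )^{λt}. -/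
open scoped BigOperators
open MeasureTheory

section Aux
open Set Filter Topology

noncomputable def auxg (A B c : ℝ) : ℝ → ℝ :=
  (Set.Ioi 0).indicator fun y => A ^ c * (y ^ (c - 1) * Real.exp (-(B * y)))

lemma auxg_nonneg {A B c : ℝ} (hA : 0 ≤ A) (y : ℝ) : 0 ≤ auxg A B c y := by
  refine Set.indicator_nonneg (fun u hu => ?_) _
  have hu0 : (0:ℝ) < u := hu
  have := Real.rpow_nonneg hA c
  positivity

lemma auxg_of_pos {A B c y : ℝ} (hy : 0 < y) :
    auxg A B c y = A ^ c * (y ^ (c - 1) * Real.exp (-(B * y))) :=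
  Set.indicator_of_mem hy _

lemma auxg_of_nonpos {A B c y : ℝ} (hy : y ∉ Set.Ioi (0:ℝ)) : auxg A B c y = 0 :=
  Set.indicator_of_notMem hy _

lemma auxIntegrableOn {c b : ℝ} (hc : 0 < c) (hb : 0 < b) :
    IntegrableOn (fun y : ℝ => y ^ (c - 1) * Real.exp (-(b * y))) (Set.Ioi 0) := by
  have h := Real.GammaIntegral_convergent hc
  rw [← mul_zero b, ← integrableOn_Ioi_comp_mul_left_iff _ _ hb] at h
  refine IntegrableOn.congr_fun (h.const_mul ((b ^ (c - 1))⁻¹)) (fun y hy => ?_) measurableSet_Ioi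
  have hy0 : (0:ℝ) < y := hy
  have hbc : (0:ℝ) < b ^ (c - 1) := Real.rpow_pos_of_pos hb _
  rw [Real.mul_rpow hb.le hy0.le]
  field_simp

lemma auxg_integrable {A B c : ℝ} (hc : 0 < c) (hB : 0 < B) :
    Integrable (auxg A B c) :=
  (integrable_indicator_iff measurableSet_Ioi).mpr ((auxIntegrableOn hc hB).const_mul _)

lemma auxIntegral {c b A : ℝ} (hc : 0 < c) (hb : 0 < b) (hA : 0 < A) :
    ∫ y in Set.Ioi (0:ℝ), A ^ c * (y ^ (c - 1) * Real.exp (-(b * y)))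
      = Real.Gamma c * (A / b) ^ c := by
  rw [MeasureTheory.integral_const_mul, Real.integral_rpow_mul_exp_neg_mul_Ioi hc hb,
    Real.div_rpow hA.le hb.le, one_div, Real.inv_rpow hb.le]
  ring

lemma auxg_integral {A B c : ℝ} (hc : 0 < c) (hB : 0 < B) (hA : 0 < A) :
    ∫ y, auxg A B c y = Real.Gamma c * (A / B) ^ c := by
  rw [auxg, MeasureTheory.integral_indicator measurableSet_Ioi, auxIntegral hc hB hA]

lemma auxSummable {α y : ℝ} (hα : 0 < α) (hy0 : 0 < y) (hy1 : y < 1) :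
    Summable (fun n : ℕ => Real.Gamma ((n : ℝ) + α) / n.factorial * y ^ n) := by
  have hc : ∀ n : ℕ, (0:ℝ) < (n : ℝ) + α := fun n => by positivity
  have hpos : ∀ n : ℕ, 0 < Real.Gamma ((n : ℝ) + α) / n.factorial * y ^ n := fun n => by
    have h1 := Real.Gamma_pos_of_pos (hc n)
    have h2 := Nat.factorial_pos n
    positivity
  have hlim : Tendsto (fun n : ℕ => ((n : ℝ) + α) / ((n : ℝ) + 1)) atTop (𝓝 1) := by
    have heq : (fun n : ℕ => ((n : ℝ) + α) / ((n : ℝ) + 1))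
        = fun n : ℕ => 1 + (α - 1) / ((n : ℝ) + 1) := by
      funext n
      have : ((n : ℝ) + 1) ≠ 0 := by positivity
      field_simp
      ring
    rw [heq]
    have h3 : Tendsto (fun n : ℕ => (α - 1) / ((n : ℝ) + 1)) atTop (𝓝 0) :=
      Tendsto.div_atTop tendsto_const_nhds
        (tendsto_atTop_add_const_right _ 1 tendsto_natCast_atTop_atTop)
    simpa using tendsto_const_nhds.add h3
  refine summable_of_ratio_test_tendsto_lt_one hy1
    (Filter.Eventually.of_forall fun n => (hpos n).ne') ?_
  have key : ∀ n : ℕ, ‖Real.Gamma (((n+1 : ℕ) : ℝ) + α) / (n+1).factorial * y ^ (n+1)‖ /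
      ‖Real.Gamma ((n : ℝ) + α) / n.factorial * y ^ n‖
      = y * (((n : ℝ) + α) / ((n : ℝ) + 1)) := by
    intro n
    rw [Real.norm_of_nonneg (hpos (n+1)).le, Real.norm_of_nonneg (hpos n).le]
    have h1 : (((n+1 : ℕ) : ℝ) + α) = ((n : ℝ) + α) + 1 := by push_cast; ring
    rw [h1, Real.Gamma_add_one (hc n).ne', Nat.factorial_succ]
    have hG := (Real.Gamma_pos_of_pos (hc n)).ne'
    have hF : ((n.factorial : ℝ)) ≠ 0 := Nat.cast_ne_zero.mpr n.factorial_pos.ne'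
    have hy : y ^ n ≠ 0 := (pow_pos hy0 n).ne'
    have hn1 : ((n:ℝ) + 1) ≠ 0 := by positivity
    push_cast
    field_simp
    ring
  have := (tendsto_const_nhds (x := y) (f := atTop)).mul hlim
  rw [mul_one] at this
  exact Tendsto.congr (fun n => (key n).symm) this

lemma auxTsum {α y : ℝ} (hα : 0 < α) (hy0 : 0 < y) (hy1 : y < 1) :
    ∑' n : ℕ, Real.Gamma ((n : ℝ) + α) / n.factorial * y ^ n
      = Real.Gamma α * (1 - y) ^ (-α) := by
  have h1y : 0 < 1 - y := by linarith
  have hc : ∀ n : ℕ, (0:ℝ) < (n : ℝ) + α := fun n => by positivity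
  set f : ℕ → ℝ → ℝ := fun n => (Set.Ioi 0).indicator
      (fun u => (y ^ n / n.factorial) * (u ^ ((n:ℝ) + α - 1) * Real.exp (-(1 * u)))) with hf
  have hint : ∀ n, Integrable (f n) := fun n => by
    rw [hf]
    exact (integrable_indicator_iff measurableSet_Ioi).mpr
      (((auxIntegrableOn (hc n) one_pos).const_mul _))
  have hval : ∀ n, (∫ u, f n u) = Real.Gamma ((n:ℝ) + α) / n.factorial * y ^ n := fun n => by
    rw [hf]
    rw [MeasureTheory.integral_indicator measurableSet_Ioi, MeasureTheory.integral_const_mul,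
      Real.integral_rpow_mul_exp_neg_mul_Ioi (hc n) one_pos]
    norm_num
    ring
  have hnn : ∀ n u, 0 ≤ f n u := fun n u => by
    rw [hf]
    refine Set.indicator_nonneg (fun u hu => ?_) _
    have : (0:ℝ) < u := hu
    positivity
  have hnorm : ∀ n, (∫ u, ‖f n u‖) = Real.Gamma ((n:ℝ) + α) / n.factorial * y ^ n := fun n => by
    rw [← hval n]
    exact MeasureTheory.integral_congr_ae
      (Filter.Eventually.of_forall fun u => Real.norm_of_nonneg (hnn n u))
  have hsum : Summable fun n => ∫ u, ‖f n u‖ := by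
    simp_rw [hnorm]
    exact auxSummable hα hy0 hy1
  have hswap := MeasureTheory.integral_tsum_of_summable_integral_norm hint hsum
  have hpt : ∀ u : ℝ, (∑' n, f n u)
      = (Set.Ioi 0).indicator (fun u => u ^ (α - 1) * Real.exp (-((1 - y) * u))) u := by
    intro u
    by_cases hu : u ∈ Set.Ioi 0
    · have hu0 : (0:ℝ) < u := hu
      rw [hf]
      simp only [Set.indicator_of_mem hu]
      have hterm : ∀ n : ℕ, (y ^ n / n.factorial) * (u ^ ((n:ℝ) + α - 1) * Real.exp (-(1 * u)))
          = (u ^ (α - 1) * Real.exp (-u)) * ((y * u) ^ n / n.factorial) := by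
        intro n
        rw [show (n:ℝ) + α - 1 = (n:ℝ) + (α - 1) by ring, Real.rpow_add hu0,
          Real.rpow_natCast, mul_pow, one_mul]
        ring
      rw [tsum_congr hterm, tsum_mul_left]
      have hexp : (∑' n : ℕ, (y * u) ^ n / n.factorial) = Real.exp (y * u) := by
        rw [Real.exp_eq_exp_ℝ]
        exact (NormedSpace.expSeries_div_hasSum_exp (y * u)).tsum_eq
      rw [hexp, mul_assoc, ← Real.exp_add]
      congr 2
      ring
    · rw [Set.indicator_of_notMem hu, hf]
      calc (∑' n : ℕ, (Set.Ioi (0:ℝ)).indicator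
            (fun u => (y ^ n / n.factorial) * (u ^ ((n:ℝ) + α - 1) * Real.exp (-(1 * u)))) u)
          = ∑' n : ℕ, (0:ℝ) := tsum_congr fun n => Set.indicator_of_notMem hu _
        _ = 0 := tsum_zero
  calc ∑' n : ℕ, Real.Gamma ((n : ℝ) + α) / n.factorial * y ^ n
      = ∑' n, ∫ u, f n u := by simp_rw [hval]
    _ = ∫ u, ∑' n, f n u := hswap
    _ = ∫ u, (Set.Ioi 0).indicator (fun u => u ^ (α - 1) * Real.exp (-((1 - y) * u))) u :=
        MeasureTheory.integral_congr_ae (Filter.Eventually.of_forall hpt)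
    _ = ∫ u in Set.Ioi 0, u ^ (α - 1) * Real.exp (-((1 - y) * u)) :=
        MeasureTheory.integral_indicator measurableSet_Ioi
    _ = (1 / (1 - y)) ^ α * Real.Gamma α :=
        Real.integral_rpow_mul_exp_neg_mul_Ioi hα h1y
    _ = Real.Gamma α * (1 - y) ^ (-α) := by
        rw [one_div, Real.inv_rpow h1y.le, ← Real.rpow_neg h1y.le, mul_comm]

end Aux

theorem mvGammaPdf_laplace_stieltjes
    (q : ℕ) (hq : 1 ≤ q) (lam θ : ℝ) (hlam : 0 < lam) (hθ0 : 0 < θ) (hθ1 : θ < 1)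
    (a : Fin q → ℝ) (ha : ∀ i, 0 < a i) (t : ℝ) (ht : 0 < t)
    (s : Fin q → ℝ) (hs : ∀ i, 0 ≤ s i) :
    (∫ x in Set.univ.pi fun _ : Fin q => Set.Ioi (0 : ℝ),
        Real.exp (-(∑ i, s i * x i)) * mvGammaPdf q lam θ a x t)
      = ((1 - θ) / ((∏ i, (1 + s i / a i)) - θ)) ^ (lam * t) := by
  have hα : 0 < lam * t := mul_pos hlam ht
  have hb : ∀ i, 0 < a i + s i := fun i => add_pos_of_pos_of_nonneg (ha i) (hs i)
  have hr : ∀ i, 0 < a i / (a i + s i) := fun i => div_pos (ha i) (hb i)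
  set R : ℝ := ∏ i, a i / (a i + s i) with hRdef
  have hR : 0 < R := Finset.prod_pos fun i _ => hr i
  have hR1 : R ≤ 1 := Finset.prod_le_one (fun i _ => (hr i).le)
      (fun i _ => div_le_one_of_le₀ (le_add_of_nonneg_right (hs i)) (hb i).le)
  have hθR : θ * R < 1 := lt_of_le_of_lt (mul_le_of_le_one_right hθ0.le hR1) hθ1
  have hθR0 : 0 < θ * R := mul_pos hθ0 hR
  have h1θR : 0 < 1 - θ * R := by linarith
  have h1θ : 0 < 1 - θ := by linarith
  have hΓ : 0 < Real.Gamma (lam * t) := Real.Gamma_pos_of_pos hα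
  have hcn : ∀ n : ℕ, (0:ℝ) < (n:ℝ) + lam * t := fun n => by positivity
  have hΓn : ∀ n : ℕ, 0 < Real.Gamma ((n:ℝ) + lam * t) := fun n => Real.Gamma_pos_of_pos (hcn n)
  set F : ℕ → (Fin q → ℝ) → ℝ := fun n x =>
      ((1 - θ) ^ (lam * t) / Real.Gamma (lam * t) *
        (θ ^ n / ((n.factorial : ℝ) * Real.Gamma ((n : ℝ) + lam * t) ^ (q - 1)))) *
      ∏ i, auxg (a i) (a i + s i) ((n:ℝ) + lam * t) (x i) with hF
  have hS : MeasurableSet (Set.univ.pi fun _ : Fin q => Set.Ioi (0:ℝ)) :=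
    MeasurableSet.univ_pi fun _ => measurableSet_Ioi
  -- pointwise identity
  have hpt : ∀ x : Fin q → ℝ,
      (Set.univ.pi fun _ : Fin q => Set.Ioi (0:ℝ)).indicator
        (fun x => Real.exp (-(∑ i, s i * x i)) * mvGammaPdf q lam θ a x t) x
      = ∑' n : ℕ, F n x := by
    intro x
    by_cases hx : x ∈ Set.univ.pi fun _ : Fin q => Set.Ioi (0:ℝ)
    · rw [Set.indicator_of_mem hx]
      have hxi : ∀ i, 0 < x i := fun i => hx i (Set.mem_univ i)
      have hGx : ∀ n : ℕ,
          (∏ i, auxg (a i) (a i + s i) ((n:ℝ) + lam * t) (x i))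
          = Real.exp (-(∑ i, s i * x i)) *
            ∏ i, ((a i * x i) ^ ((n:ℝ) + lam * t) / x i * Real.exp (-(a i * x i))) := by
        intro n
        have hper : ∀ i, auxg (a i) (a i + s i) ((n:ℝ) + lam * t) (x i)
            = ((a i * x i) ^ ((n:ℝ) + lam * t) / x i * Real.exp (-(a i * x i))) *
              Real.exp (-(s i * x i)) := by
          intro i
          rw [auxg_of_pos (hxi i), Real.mul_rpow (ha i).le (hxi i).le,
            show (n:ℝ) + lam * t - 1 = (n:ℝ) + lam * t - 1 from rfl,
            Real.rpow_sub (hxi i), Real.rpow_one,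
            show -((a i + s i) * x i) = -(a i * x i) + -(s i * x i) by ring, Real.exp_add]
          ring
        rw [Finset.prod_congr rfl fun i _ => hper i, Finset.prod_mul_distrib, ← Real.exp_sum,
          show (∑ i, -(s i * x i)) = -(∑ i, s i * x i) by rw [← Finset.sum_neg_distrib]]
        ring
      simp only [mvGammaPdf]
      rw [← tsum_mul_left, ← tsum_mul_left]
      refine tsum_congr fun n => ?_
      rw [hF]
      simp only
      rw [hGx n]
      ring
    · rw [Set.indicator_of_notMem hx]
      rw [Set.mem_univ_pi] at hx
      push_neg at hx
      obtain ⟨i, hi⟩ := hx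
      have hz : ∀ n : ℕ, F n x = 0 := fun n => by
        rw [hF]
        simp only
        rw [Finset.prod_eq_zero (Finset.mem_univ i) (auxg_of_nonpos hi), mul_zero]
      rw [tsum_congr hz, tsum_zero]
  -- integrability
  have hint : ∀ n : ℕ, Integrable (F n) := fun n => by
    rw [hF]
    exact (Integrable.fintype_prod
      (f := fun i => auxg (a i) (a i + s i) ((n:ℝ) + lam * t))
      (fun i => auxg_integrable (hcn n) (hb i))).const_mul _
  -- value of each integral
  have hval : ∀ n : ℕ, (∫ x : Fin q → ℝ, F n x)
      = ((1 - θ) ^ (lam * t) / Real.Gamma (lam * t) * R ^ (lam * t)) *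
        (Real.Gamma ((n:ℝ) + lam * t) / n.factorial * (θ * R) ^ n) := by
    intro n
    rw [hF]
    simp only
    rw [MeasureTheory.integral_const_mul,
      MeasureTheory.integral_fintype_prod_volume_eq_prod (ι := Fin q)
        (fun i => auxg (a i) (a i + s i) ((n:ℝ) + lam * t))]
    rw [Finset.prod_congr rfl fun i _ => auxg_integral (hcn n) (hb i) (ha i),
      Finset.prod_mul_distrib, Finset.prod_const,
      Real.finset_prod_rpow _ _ (fun i _ => (hr i).le), ← hRdef,
      Finset.card_univ, Fintype.card_fin]
    have hq1 : q - 1 + 1 = q := Nat.succ_pred_eq_of_pos hq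
    have hRc : R ^ ((n:ℝ) + lam * t) = R ^ (n:ℕ) * R ^ (lam * t) := by
      rw [Real.rpow_add hR, Real.rpow_natCast]
    have hΓq : Real.Gamma ((n:ℝ) + lam * t) ^ q
        = Real.Gamma ((n:ℝ) + lam * t) ^ (q - 1) * Real.Gamma ((n:ℝ) + lam * t) := by
      rw [← pow_succ, hq1]
    rw [hRc, hΓq, mul_pow]
    have h1 := (hΓn n).ne'
    have h2 : ((n.factorial : ℝ)) ≠ 0 := Nat.cast_ne_zero.mpr n.factorial_pos.ne'
    have h3 : Real.Gamma ((n:ℝ) + lam * t) ^ (q - 1) ≠ 0 := pow_ne_zero _ h1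
    field_simp
  -- nonnegativity
  have hnn : ∀ n (x : Fin q → ℝ), 0 ≤ F n x := fun n x => by
    rw [hF]
    simp only
    have hc0 : 0 ≤ (1 - θ) ^ (lam * t) / Real.Gamma (lam * t) *
        (θ ^ n / ((n.factorial : ℝ) * Real.Gamma ((n : ℝ) + lam * t) ^ (q - 1))) := by
      have := hΓn n
      have h2 : (0:ℝ) < n.factorial := by exact_mod_cast n.factorial_pos
      positivity
    exact mul_nonneg hc0 (Finset.prod_nonneg fun i _ => auxg_nonneg (ha i).le _)
  -- summability of integral norms
  have hsum : Summable fun n : ℕ => ∫ x : Fin q → ℝ, ‖F n x‖ := by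
    have heq : ∀ n : ℕ, (∫ x : Fin q → ℝ, ‖F n x‖)
        = ((1 - θ) ^ (lam * t) / Real.Gamma (lam * t) * R ^ (lam * t)) *
          (Real.Gamma ((n:ℝ) + lam * t) / n.factorial * (θ * R) ^ n) := fun n => by
      rw [← hval n]
      exact MeasureTheory.integral_congr_ae
        (Filter.Eventually.of_forall fun x => Real.norm_of_nonneg (hnn n x))
    simp_rw [heq]
    exact (auxSummable hα hθR0 hθR).mul_left _
  rw [← MeasureTheory.integral_indicator hS,
    MeasureTheory.integral_congr_ae (Filter.Eventually.of_forall hpt),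
    ← MeasureTheory.integral_tsum_of_summable_integral_norm hint hsum]
  rw [tsum_congr hval, tsum_mul_left, auxTsum hα hθR0 hθR]
  -- final algebra
  have hP : (∏ i, (1 + s i / a i)) = R⁻¹ := by
    rw [hRdef, ← Finset.prod_inv_distrib]
    refine Finset.prod_congr rfl fun i _ => ?_
    rw [inv_div, add_div, div_self (ha i).ne']
  have h2 : (∏ i, (1 + s i / a i)) - θ = (1 - θ * R) / R := by
    rw [hP]
    field_simp
  rw [h2, div_div_eq_mul_div, Real.div_rpow (by positivity) h1θR.le,
    Real.mul_rpow h1θ.le hR.le, Real.rpow_neg h1θR.le]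
  field_simp
end

section
/- Mean and covariance of the multivariate gamma subordinator: for every t > 0 and all indices i, j ∈ {1,…,q}, (a) ∫_{(0,∞)^q} x_i · g(x,t) dx = λt / (a_i (1−θ)); (b) if i ≠ j then ∫_{(0,∞)^q} x_i x_j · g(x,t) dx = λt(λt+θ) / (a_i a_j (1−θ)^2), so that the covariance ∫ x_i x_j g dx − (∫ x_i g dx)(∫ x_j g dx) equals λt·θ / (a_i a_j (1−θ)^2); (c) if i = j the covariance (variance) ∫ x_i^2 g dx − (∫ x_i g dx)^2 equals λt / (a_i^2 (1−θ)^2). -/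
open scoped BigOperators
open MeasureTheory

open MeasureTheory Set Real Filter Topology

lemma integrableOn_aux {b r : ℝ} (hb : 0 < b) (hr : 0 < r) :
    IntegrableOn (fun x : ℝ => x ^ (r - 1) * Real.exp (-(b * x))) (Set.Ioi 0) := by
  have h := integrableOn_rpow_mul_exp_neg_mul_rpow (s := r - 1) (p := 1) (by linarith) one_pos hb
  refine h.congr_fun (fun x _ => ?_) measurableSet_Ioi
  simp only [Real.rpow_one, neg_mul]

lemma integral_aux {b r : ℝ} (hb : 0 < b) (hr : 0 < r) :
    ∫ x in Ioi (0:ℝ), x ^ (r - 1) * Real.exp (-(b * x)) = Real.Gamma r / b ^ r := by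
  rw [Real.integral_rpow_mul_exp_neg_mul_Ioi hr hb, one_div, Real.inv_rpow hb.le]
  rw [inv_mul_eq_div]

lemma moment_fun_eq {A s : ℝ} (hA : 0 < A) (k : ℕ) {x : ℝ} (hx : x ∈ Ioi (0:ℝ)) :
    x ^ k * ((A * x) ^ s / x * Real.exp (-(A * x)))
      = A ^ s * (x ^ (s + k - 1) * Real.exp (-(A * x))) := by
  rw [mem_Ioi] at hx
  rw [Real.mul_rpow hA.le hx.le, Real.rpow_sub hx, Real.rpow_add hx, Real.rpow_one,
    Real.rpow_natCast]
  ring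

lemma moment_integrableOn {A s : ℝ} (hA : 0 < A) (hs : 0 < s) (k : ℕ) :
    IntegrableOn (fun x : ℝ => x ^ k * ((A * x) ^ s / x * Real.exp (-(A * x)))) (Ioi 0) := by
  have h : IntegrableOn (fun x : ℝ => A ^ s * (x ^ (s + k - 1) * Real.exp (-(A * x)))) (Ioi 0) :=
    (integrableOn_aux hA (show 0 < s + k by positivity)).const_mul (A ^ s)
  exact h.congr_fun (fun x hx => (moment_fun_eq hA k hx).symm) measurableSet_Ioi

lemma moment_integral {A s : ℝ} (hA : 0 < A) (hs : 0 < s) (k : ℕ) :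
    ∫ x in Ioi (0:ℝ), x ^ k * ((A * x) ^ s / x * Real.exp (-(A * x)))
      = Real.Gamma (s + k) / A ^ k := by
  rw [setIntegral_congr_fun measurableSet_Ioi (fun x hx => moment_fun_eq hA k hx),
    integral_const_mul, integral_aux hA (show 0 < s + k by positivity),
    Real.rpow_add hA, Real.rpow_natCast]
  have h1 : (0:ℝ) < A ^ s := Real.rpow_pos_of_pos hA s
  have h2 : (0:ℝ) < A ^ k := pow_pos hA k
  field_simp


section
variable {r θ : ℝ}

lemma gamma_term_pos (hr : 0 < r) (hθ0 : 0 < θ) (n : ℕ) :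
    0 < θ ^ n * Real.Gamma (n + r) / n.factorial := by
  have h1 : (0:ℝ) < (n:ℝ) + r := by positivity
  have h2 := Real.Gamma_pos_of_pos h1
  have h3 : (0:ℝ) < n.factorial := by exact_mod_cast n.factorial_pos
  positivity

lemma summable_gamma (hr : 0 < r) (hθ0 : 0 < θ) (hθ1 : θ < 1) :
    Summable (fun n : ℕ => θ ^ n * Real.Gamma (n + r) / n.factorial) := by
  apply summable_of_ratio_test_tendsto_lt_one hθ1
  · exact Eventually.of_forall fun n => (gamma_term_pos hr hθ0 n).ne'
  · have key : ∀ n : ℕ, ‖θ ^ (n+1) * Real.Gamma ((n+1 : ℕ) + r) / (n+1).factorial‖ /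
        ‖θ ^ n * Real.Gamma (n + r) / n.factorial‖ = θ * (1 + (r - 1) * (1 / ((n:ℝ)+1))) := by
      intro n
      rw [Real.norm_of_nonneg (gamma_term_pos hr hθ0 (n+1)).le,
        Real.norm_of_nonneg (gamma_term_pos hr hθ0 n).le]
      have h1 : (0:ℝ) < (n:ℝ) + r := by positivity
      have h2 := Real.Gamma_pos_of_pos h1
      have hΓ : Real.Gamma (((n:ℕ)+1 : ℕ) + r) = ((n:ℝ) + r) * Real.Gamma (n + r) := by
        rw [show (((n:ℕ)+1 : ℕ) : ℝ) + r = ((n:ℝ) + r) + 1 by push_cast; ring,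
          Real.Gamma_add_one h1.ne']
      rw [hΓ, Nat.factorial_succ]
      have h3 : (0:ℝ) < n.factorial := by exact_mod_cast n.factorial_pos
      have h4 : (0:ℝ) < (n:ℝ) + 1 := by positivity
      push_cast
      field_simp
      ring
    refine Tendsto.congr (fun n => (key n).symm) ?_
    have h := tendsto_one_div_add_atTop_nhds_zero_nat (𝕜 := ℝ)
    have : Tendsto (fun n : ℕ => θ * (1 + (r - 1) * (1 / ((n:ℝ)+1)))) atTop
        (𝓝 (θ * (1 + (r - 1) * 0))) :=
      tendsto_const_nhds.mul (tendsto_const_nhds.add (tendsto_const_nhds.mul h))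
    simpa using this
end


lemma tsum_gamma {r θ : ℝ} (hr : 0 < r) (hθ0 : 0 < θ) (hθ1 : θ < 1) :
    ∑' n : ℕ, θ ^ n * Real.Gamma (n + r) / n.factorial = Real.Gamma r / (1 - θ) ^ r := by
  set F : ℕ → ℝ → ℝ := fun n x => θ ^ n / n.factorial * (x ^ ((n:ℝ) + r - 1) *
    Real.exp (-(1 * x))) with hF
  have hfac : ∀ n : ℕ, (0:ℝ) < n.factorial := fun n => by exact_mod_cast n.factorial_pos
  have hFint : ∀ n : ℕ, Integrable (F n) (volume.restrict (Ioi 0)) := fun n =>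
    (integrableOn_aux one_pos (show 0 < (n:ℝ) + r by positivity)).const_mul _
  have hFval : ∀ n : ℕ, ∫ x in Ioi (0:ℝ), F n x = θ ^ n * Real.Gamma (n + r) / n.factorial := by
    intro n
    rw [hF]
    rw [integral_const_mul, integral_aux one_pos (show 0 < (n:ℝ) + r by positivity),
      Real.one_rpow, div_one, div_mul_eq_mul_div]
  have hFnorm : ∀ n : ℕ, ∫ x in Ioi (0:ℝ), ‖F n x‖
      = θ ^ n * Real.Gamma (n + r) / n.factorial := by
    intro n
    rw [← hFval n]
    refine setIntegral_congr_fun measurableSet_Ioi (fun x hx => ?_)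
    rw [mem_Ioi] at hx
    have : 0 ≤ F n x := by
      have h1 : (0:ℝ) ≤ x ^ ((n:ℝ) + r - 1) := Real.rpow_nonneg hx.le _
      have h2 := hfac n
      positivity
    exact Real.norm_of_nonneg this
  have hFsum : Summable (fun n : ℕ => ∫ x, ‖F n x‖ ∂(volume.restrict (Ioi 0))) :=
    (summable_gamma hr hθ0 hθ1).congr fun n => (hFnorm n).symm
  have hswap := integral_tsum_of_summable_integral_norm hFint hFsum
  have hL : ∑' n : ℕ, ∫ x, F n x ∂(volume.restrict (Ioi 0))
      = ∑' n : ℕ, θ ^ n * Real.Gamma (n + r) / n.factorial := tsum_congr fun n => hFval n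
  have hpt : ∀ x ∈ Ioi (0:ℝ), ∑' n : ℕ, F n x
      = x ^ (r - 1) * Real.exp (-((1 - θ) * x)) := by
    intro x hx
    rw [mem_Ioi] at hx
    have h1 : ∀ n : ℕ, F n x = (x ^ (r - 1) * Real.exp (-x)) * ((θ * x) ^ n / n.factorial) := by
      intro n
      rw [hF]
      dsimp only
      have : x ^ ((n:ℝ) + r - 1) = x ^ (n : ℕ) * x ^ (r - 1) := by
        rw [show (n:ℝ) + r - 1 = (n:ℝ) + (r - 1) by ring, Real.rpow_add hx, Real.rpow_natCast]
      rw [this, mul_pow, one_mul]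
      field_simp
    rw [tsum_congr h1, tsum_mul_left]
    have hexp : ∑' n : ℕ, (θ * x) ^ n / n.factorial = Real.exp (θ * x) := by
      rw [Real.exp_eq_exp_ℝ, NormedSpace.exp_eq_tsum_div]
    rw [hexp, mul_assoc, ← Real.exp_add, show -x + θ * x = -((1 - θ) * x) by ring]
  have hR : ∫ x in Ioi (0:ℝ), ∑' n : ℕ, F n x = Real.Gamma r / (1 - θ) ^ r := by
    rw [setIntegral_congr_fun measurableSet_Ioi hpt, integral_aux (by linarith) hr]
  rw [← hL, hswap, hR]


section
variable {q : ℕ}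

lemma measurableSet_S : MeasurableSet (Set.pi (univ : Set (Fin q)) fun _ => Ioi (0:ℝ)) :=
  MeasurableSet.univ_pi fun _ => measurableSet_Ioi

lemma indicator_pi_prod (f : Fin q → ℝ → ℝ) (x : Fin q → ℝ) :
    (Set.pi (univ : Set (Fin q)) fun _ => Ioi (0:ℝ)).indicator
      (fun x => ∏ i, f i (x i)) x = ∏ i, (Ioi (0:ℝ)).indicator (f i) (x i) := by
  by_cases hx : x ∈ Set.pi (univ : Set (Fin q)) fun _ => Ioi (0:ℝ)
  · rw [indicator_of_mem hx]
    exact Finset.prod_congr rfl fun i _ =>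
      (indicator_of_mem (hx i (Set.mem_univ i)) _).symm
  · rw [indicator_of_notMem hx]
    obtain ⟨i, hi⟩ : ∃ i, x i ∉ Ioi (0:ℝ) := by
      by_contra h
      push_neg at h
      exact hx fun i _ => h i
    exact (Finset.prod_eq_zero (Finset.mem_univ i) (indicator_of_notMem hi _)).symm

lemma pi_integrable {f : Fin q → ℝ → ℝ} (hf : ∀ i, IntegrableOn (f i) (Ioi 0)) :
    IntegrableOn (fun x : Fin q → ℝ => ∏ i, f i (x i))
      (Set.pi (univ : Set (Fin q)) fun _ => Ioi (0:ℝ)) := by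
  rw [← integrable_indicator_iff measurableSet_S]
  have h1 : Integrable (fun x : Fin q → ℝ => ∏ i, (Ioi (0:ℝ)).indicator (f i) (x i)) :=
    Integrable.fintype_prod fun i => (integrable_indicator_iff measurableSet_Ioi).2 (hf i)
  exact h1.congr (Eventually.of_forall fun x => (indicator_pi_prod f x).symm)

lemma pi_integral {f : Fin q → ℝ → ℝ} (hf : ∀ i, IntegrableOn (f i) (Ioi 0)) :
    ∫ x in Set.pi (univ : Set (Fin q)) fun _ => Ioi (0:ℝ), ∏ i, f i (x i)
      = ∏ i, ∫ y in Ioi (0:ℝ), f i y := by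
  rw [← integral_indicator measurableSet_S]
  simp_rw [indicator_pi_prod f]
  rw [MeasureTheory.integral_fintype_prod_volume_eq_prod (ι := Fin q)
    (fun i => (Ioi (0:ℝ)).indicator (f i))]
  exact Finset.prod_congr rfl fun i _ => integral_indicator measurableSet_Ioi
end


lemma core (q : ℕ) (lam θ : ℝ) (hlam : 0 < lam) (hθ0 : 0 < θ) (hθ1 : θ < 1)
    (a : Fin q → ℝ) (ha : ∀ i, 0 < a i) (t : ℝ) (ht : 0 < t) (w : Fin q → ℕ)
    (hsum : Summable (fun n : ℕ => θ ^ n / (n.factorial * Real.Gamma ((n:ℝ) + lam * t) ^ (q-1)) *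
      ∏ i, (Real.Gamma ((n:ℝ) + lam * t + w i) / a i ^ (w i)))) :
    ∫ x in Set.pi (univ : Set (Fin q)) fun _ => Ioi (0:ℝ),
        (∏ i, x i ^ w i) * mvGammaPdf q lam θ a x t
      = ((1 - θ) ^ (lam * t) / Real.Gamma (lam * t)) *
        ∑' n : ℕ, θ ^ n / (n.factorial * Real.Gamma ((n:ℝ) + lam * t) ^ (q-1)) *
          ∏ i, (Real.Gamma ((n:ℝ) + lam * t + w i) / a i ^ (w i)) := by
  have hs : 0 < lam * t := mul_pos hlam ht
  have hns : ∀ n : ℕ, 0 < (n:ℝ) + lam * t := fun n => by positivity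
  set c : ℝ := (1 - θ) ^ (lam * t) / Real.Gamma (lam * t) with hc
  set G : ℕ → (Fin q → ℝ) → ℝ := fun n x =>
    θ ^ n / (n.factorial * Real.Gamma ((n:ℝ) + lam * t) ^ (q-1)) *
      ∏ i, (x i ^ w i * ((a i * x i) ^ ((n:ℝ) + lam * t) / x i * Real.exp (-(a i * x i))))
    with hG
  have hcoef : ∀ n : ℕ, 0 < θ ^ n / (n.factorial * Real.Gamma ((n:ℝ) + lam * t) ^ (q-1)) := by
    intro n
    have h1 := Real.Gamma_pos_of_pos (hns n)
    have h2 : (0:ℝ) < n.factorial := by exact_mod_cast n.factorial_pos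
    positivity
  -- pointwise identity on S
  have hpt : ∀ x ∈ Set.pi (univ : Set (Fin q)) fun _ => Ioi (0:ℝ),
      (∏ i, x i ^ w i) * mvGammaPdf q lam θ a x t = c * ∑' n : ℕ, G n x := by
    intro x _
    rw [mvGammaPdf, ← hc, mul_left_comm, ← tsum_mul_left]
    congr 1
    refine tsum_congr fun n => ?_
    rw [hG]
    dsimp only
    simp only [Finset.prod_mul_distrib]
    ring
  -- integrability of each G n
  have hGint : ∀ n : ℕ, Integrable (G n)
      ((volume : Measure (Fin q → ℝ)).restrict (Set.pi univ fun _ => Ioi (0:ℝ))) := by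
    intro n
    exact (pi_integrable fun i => moment_integrableOn (ha i) (hns n) (w i)).const_mul _
  -- value of each integral
  have hGval : ∀ n : ℕ, ∫ x in Set.pi (univ : Set (Fin q)) fun _ => Ioi (0:ℝ), G n x
      = θ ^ n / (n.factorial * Real.Gamma ((n:ℝ) + lam * t) ^ (q-1)) *
        ∏ i, (Real.Gamma ((n:ℝ) + lam * t + w i) / a i ^ (w i)) := by
    intro n
    rw [hG]
    dsimp only
    rw [integral_const_mul, pi_integral fun i => moment_integrableOn (ha i) (hns n) (w i)]
    congr 1
    exact Finset.prod_congr rfl fun i _ => moment_integral (ha i) (hns n) (w i)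
  -- nonnegativity on S
  have hGnn : ∀ n : ℕ, ∀ x ∈ Set.pi (univ : Set (Fin q)) fun _ => Ioi (0:ℝ), 0 ≤ G n x := by
    intro n x hx
    refine mul_nonneg (hcoef n).le (Finset.prod_nonneg fun i _ => ?_)
    have hxi : 0 < x i := hx i (Set.mem_univ i)
    have h1 : (0:ℝ) ≤ (a i * x i) ^ ((n:ℝ) + lam * t) :=
      Real.rpow_nonneg (mul_pos (ha i) hxi).le _
    positivity
  have hGnorm : ∀ n : ℕ, ∫ x in Set.pi (univ : Set (Fin q)) fun _ => Ioi (0:ℝ), ‖G n x‖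
      = θ ^ n / (n.factorial * Real.Gamma ((n:ℝ) + lam * t) ^ (q-1)) *
        ∏ i, (Real.Gamma ((n:ℝ) + lam * t + w i) / a i ^ (w i)) := by
    intro n
    rw [← hGval n]
    exact setIntegral_congr_fun measurableSet_S fun x hx =>
      Real.norm_of_nonneg (hGnn n x hx)
  have hGsum : Summable fun n : ℕ => ∫ x in Set.pi (univ : Set (Fin q)) fun _ => Ioi (0:ℝ),
      ‖G n x‖ := hsum.congr fun n => (hGnorm n).symm
  rw [setIntegral_congr_fun measurableSet_S hpt, integral_const_mul,
    ← integral_tsum_of_summable_integral_norm hGint hGsum]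
  congr 1
  exact tsum_congr fun n => hGval n


section
variable {q : ℕ} {lam θ t : ℝ} {a : Fin q → ℝ}
variable (hlam : 0 < lam) (hθ0 : 0 < θ) (hθ1 : θ < 1) (ha : ∀ i, 0 < a i) (ht : 0 < t)

include hlam ht in
lemma vA_eq (ha : ∀ i, 0 < a i) (i : Fin q) (m : ℕ) (n : ℕ) :
    θ ^ n / (n.factorial * Real.Gamma ((n:ℝ) + lam * t) ^ (q - 1)) *
      ∏ k, (Real.Gamma ((n:ℝ) + lam * t + ((if k = i then m else 0 : ℕ) : ℝ)) /
        a k ^ (if k = i then m else 0 : ℕ))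
    = θ ^ n * Real.Gamma ((n:ℝ) + (lam * t + m)) / n.factorial * (a i ^ m)⁻¹ := by
  have hs : 0 < lam * t := mul_pos hlam ht
  have hg : 0 < Real.Gamma ((n:ℝ) + lam * t) := Real.Gamma_pos_of_pos (by positivity)
  have hfac : (0:ℝ) < n.factorial := by exact_mod_cast n.factorial_pos
  have hprod : ∏ k, (Real.Gamma ((n:ℝ) + lam * t + ((if k = i then m else 0 : ℕ) : ℝ)) /
        a k ^ (if k = i then m else 0 : ℕ))
      = Real.Gamma ((n:ℝ) + lam * t + m) / a i ^ m *
        Real.Gamma ((n:ℝ) + lam * t) ^ (q - 1) := by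
    rw [← Finset.mul_prod_erase Finset.univ _ (Finset.mem_univ i)]
    congr 1
    · simp
    · rw [Finset.prod_congr rfl (fun k hk => ?_), Finset.prod_const,
        Finset.card_erase_of_mem (Finset.mem_univ i), Finset.card_univ, Fintype.card_fin]
      rw [if_neg (Finset.mem_erase.1 hk).1]
      simp
  rw [hprod, show (n:ℝ) + (lam * t + m) = (n:ℝ) + lam * t + m by ring]
  have hgp : (0:ℝ) < Real.Gamma ((n:ℝ) + lam * t) ^ (q - 1) := pow_pos hg _
  have ham : (0:ℝ) < a i ^ m := pow_pos (ha i) m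
  field_simp

include hlam ht in
lemma vB_eq (ha : ∀ i, 0 < a i) (hq2 : 2 ≤ q) (i j : Fin q) (hij : i ≠ j) (n : ℕ) :
    θ ^ n / (n.factorial * Real.Gamma ((n:ℝ) + lam * t) ^ (q - 1)) *
      ∏ k, (Real.Gamma ((n:ℝ) + lam * t +
          ((if k = i then 1 else if k = j then 1 else 0 : ℕ) : ℝ)) /
        a k ^ (if k = i then 1 else if k = j then 1 else 0 : ℕ))
    = (θ ^ n * Real.Gamma ((n:ℝ) + (lam * t + 2)) / n.factorial
        - θ ^ n * Real.Gamma ((n:ℝ) + (lam * t + 1)) / n.factorial) * (a i * a j)⁻¹ := by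
  have hs : 0 < lam * t := mul_pos hlam ht
  have hns : (0:ℝ) < (n:ℝ) + lam * t := by positivity
  have hg : 0 < Real.Gamma ((n:ℝ) + lam * t) := Real.Gamma_pos_of_pos hns
  have hfac : (0:ℝ) < n.factorial := by exact_mod_cast n.factorial_pos
  have hj : j ∈ Finset.univ.erase i := Finset.mem_erase.2 ⟨(Ne.symm hij), Finset.mem_univ j⟩
  have hprod : ∏ k, (Real.Gamma ((n:ℝ) + lam * t +
          ((if k = i then 1 else if k = j then 1 else 0 : ℕ) : ℝ)) /
        a k ^ (if k = i then 1 else if k = j then 1 else 0 : ℕ))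
      = (Real.Gamma ((n:ℝ) + lam * t + 1) / a i) * ((Real.Gamma ((n:ℝ) + lam * t + 1) / a j) *
          Real.Gamma ((n:ℝ) + lam * t) ^ (q - 2)) := by
    rw [← Finset.mul_prod_erase Finset.univ _ (Finset.mem_univ i),
      ← Finset.mul_prod_erase _ _ hj]
    congr 1
    · simp
    congr 1
    · rw [if_neg (Ne.symm hij), if_pos rfl]
      simp
    · rw [Finset.prod_congr rfl (fun k hk => ?_), Finset.prod_const,
        Finset.card_erase_of_mem hj, Finset.card_erase_of_mem (Finset.mem_univ i),
        Finset.card_univ, Fintype.card_fin, show q - 1 - 1 = q - 2 by omega]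
      have hk2 := Finset.mem_erase.1 hk
      have hk3 := Finset.mem_erase.1 hk2.2
      rw [if_neg hk3.1, if_neg hk2.1]
      simp
  rw [hprod]
  have h1 : Real.Gamma ((n:ℝ) + lam * t + 1) = ((n:ℝ) + lam * t) * Real.Gamma ((n:ℝ) + lam * t) :=
    Real.Gamma_add_one hns.ne'
  have h2 : Real.Gamma ((n:ℝ) + (lam * t + 2))
      = ((n:ℝ) + lam * t + 1) * (((n:ℝ) + lam * t) * Real.Gamma ((n:ℝ) + lam * t)) := by
    rw [show (n:ℝ) + (lam * t + 2) = ((n:ℝ) + lam * t + 1) + 1 by ring,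
      Real.Gamma_add_one (by positivity), Real.Gamma_add_one hns.ne']
  have h3 : Real.Gamma ((n:ℝ) + (lam * t + 1)) = ((n:ℝ) + lam * t) * Real.Gamma ((n:ℝ) + lam * t) := by
    rw [show (n:ℝ) + (lam * t + 1) = ((n:ℝ) + lam * t) + 1 by ring, Real.Gamma_add_one hns.ne']
  have h4 : Real.Gamma ((n:ℝ) + lam * t) ^ (q - 1)
      = Real.Gamma ((n:ℝ) + lam * t) ^ (q - 2) * Real.Gamma ((n:ℝ) + lam * t) := by
    rw [show q - 1 = (q - 2) + 1 by omega, pow_succ]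
  rw [h1, h2, h3, h4]
  have hgp : (0:ℝ) < Real.Gamma ((n:ℝ) + lam * t) ^ (q - 2) := pow_pos hg _
  have hai := ha i
  have haj := ha j
  field_simp
  ring
end


section
variable {q : ℕ} {lam θ t : ℝ} {a : Fin q → ℝ}

lemma int_single (hlam : 0 < lam) (hθ0 : 0 < θ) (hθ1 : θ < 1) (ha : ∀ i, 0 < a i)
    (ht : 0 < t) (i : Fin q) (m : ℕ) :
    ∫ x in Set.pi (univ : Set (Fin q)) fun _ => Ioi (0:ℝ),
        (x i ^ m) * mvGammaPdf q lam θ a x t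
      = ((1 - θ) ^ (lam * t) / Real.Gamma (lam * t)) *
          (Real.Gamma (lam * t + m) / (1 - θ) ^ (lam * t + m)) * (a i ^ m)⁻¹ := by
  have hs : 0 < lam * t := mul_pos hlam ht
  have hrm : (0:ℝ) < lam * t + m := by positivity
  have hsum : Summable (fun n : ℕ =>
      θ ^ n / (n.factorial * Real.Gamma ((n:ℝ) + lam * t) ^ (q-1)) *
      ∏ k, (Real.Gamma ((n:ℝ) + lam * t + ((if k = i then m else 0 : ℕ) : ℝ)) /
        a k ^ (if k = i then m else 0 : ℕ))) :=
    (((summable_gamma hrm hθ0 hθ1).mul_right (a i ^ m)⁻¹).congr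
      fun n => (vA_eq hlam ht ha i m n).symm)
  have hcore := core q lam θ hlam hθ0 hθ1 a ha t ht (fun k => if k = i then m else 0) hsum
  have hxw : ∀ x : Fin q → ℝ, ∏ k, x k ^ (if k = i then m else 0 : ℕ) = x i ^ m := by
    intro x
    rw [Fintype.prod_eq_single i (fun k hk => by rw [if_neg hk, pow_zero]), if_pos rfl]
  rw [setIntegral_congr_fun measurableSet_S (fun x _ => by rw [← hxw x]), hcore,
    tsum_congr (fun n => vA_eq hlam ht ha i m n), tsum_mul_right,
    tsum_gamma hrm hθ0 hθ1, mul_assoc]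

lemma I_one (hlam : 0 < lam) (hθ0 : 0 < θ) (hθ1 : θ < 1) (ha : ∀ i, 0 < a i)
    (ht : 0 < t) (i : Fin q) :
    ∫ x in Set.pi (univ : Set (Fin q)) fun _ => Ioi (0:ℝ),
        x i * mvGammaPdf q lam θ a x t = lam * t / (a i * (1 - θ)) := by
  have h := int_single hlam hθ0 hθ1 ha ht i 1
  simp only [pow_one, Nat.cast_one] at h
  rw [h, Real.Gamma_add_one (mul_pos hlam ht).ne',
    Real.rpow_add_one (by linarith : (1:ℝ) - θ ≠ 0)]
  have h1 : 0 < Real.Gamma (lam * t) := Real.Gamma_pos_of_pos (mul_pos hlam ht)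
  have h2 : 0 < (1 - θ) ^ (lam * t) := Real.rpow_pos_of_pos (by linarith) _
  have h3 : (0:ℝ) < 1 - θ := by linarith
  have h4 := ha i
  field_simp

lemma I_two (hlam : 0 < lam) (hθ0 : 0 < θ) (hθ1 : θ < 1) (ha : ∀ i, 0 < a i)
    (ht : 0 < t) (i : Fin q) :
    ∫ x in Set.pi (univ : Set (Fin q)) fun _ => Ioi (0:ℝ),
        x i ^ 2 * mvGammaPdf q lam θ a x t
      = lam * t * (lam * t + 1) / (a i ^ 2 * (1 - θ) ^ 2) := by
  have h := int_single hlam hθ0 hθ1 ha ht i 2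
  simp only [Nat.cast_ofNat] at h
  rw [h, show lam * t + 2 = (lam * t + 1) + 1 by ring,
    Real.Gamma_add_one (by positivity : lam * t + 1 ≠ 0),
    Real.Gamma_add_one (mul_pos hlam ht).ne',
    Real.rpow_add_one (by linarith : (1:ℝ) - θ ≠ 0),
    Real.rpow_add_one (by linarith : (1:ℝ) - θ ≠ 0)]
  have h1 : 0 < Real.Gamma (lam * t) := Real.Gamma_pos_of_pos (mul_pos hlam ht)
  have h2 : 0 < (1 - θ) ^ (lam * t) := Real.rpow_pos_of_pos (by linarith) _
  have h3 : (0:ℝ) < 1 - θ := by linarith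
  have h4 := ha i
  field_simp

lemma I_pair (hlam : 0 < lam) (hθ0 : 0 < θ) (hθ1 : θ < 1) (ha : ∀ i, 0 < a i)
    (ht : 0 < t) (i j : Fin q) (hij : i ≠ j) :
    ∫ x in Set.pi (univ : Set (Fin q)) fun _ => Ioi (0:ℝ),
        x i * x j * mvGammaPdf q lam θ a x t
      = lam * t * (lam * t + θ) / (a i * a j * (1 - θ) ^ 2) := by
  have hs : 0 < lam * t := mul_pos hlam ht
  have hq2 : 2 ≤ q := by
    have := Fintype.one_lt_card_iff.2 ⟨i, j, hij⟩
    simp at this; omega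
  have hr1 : (0:ℝ) < lam * t + 1 := by positivity
  have hr2 : (0:ℝ) < lam * t + 2 := by positivity
  have hsum2 := summable_gamma hr2 hθ0 hθ1 (θ := θ)
  have hsum1 := summable_gamma hr1 hθ0 hθ1 (θ := θ)
  have hsum : Summable (fun n : ℕ =>
      θ ^ n / (n.factorial * Real.Gamma ((n:ℝ) + lam * t) ^ (q-1)) *
      ∏ k, (Real.Gamma ((n:ℝ) + lam * t +
          ((if k = i then 1 else if k = j then 1 else 0 : ℕ) : ℝ)) /
        a k ^ (if k = i then 1 else if k = j then 1 else 0 : ℕ))) :=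
    (((hsum2.sub hsum1).mul_right (a i * a j)⁻¹).congr
      fun n => (vB_eq hlam ht ha hq2 i j hij n).symm)
  have hcore := core q lam θ hlam hθ0 hθ1 a ha t ht
    (fun k => if k = i then 1 else if k = j then 1 else 0) hsum
  have hxw : ∀ x : Fin q → ℝ,
      ∏ k, x k ^ (if k = i then 1 else if k = j then 1 else 0 : ℕ) = x i * x j := by
    intro x
    rw [Fintype.prod_eq_mul i j hij (fun k hk => by
      rw [if_neg hk.1, if_neg hk.2, pow_zero]), if_pos rfl, if_neg (Ne.symm hij), if_pos rfl,
      pow_one, pow_one]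
  rw [setIntegral_congr_fun measurableSet_S (fun x _ => by rw [← hxw x]), hcore,
    tsum_congr (fun n => vB_eq hlam ht ha hq2 i j hij n), tsum_mul_right,
    Summable.tsum_sub hsum2 hsum1, tsum_gamma hr2 hθ0 hθ1, tsum_gamma hr1 hθ0 hθ1]
  rw [show lam * t + 2 = (lam * t + 1) + 1 by ring,
    Real.Gamma_add_one hr1.ne', Real.Gamma_add_one hs.ne',
    Real.rpow_add_one (by linarith : (1:ℝ) - θ ≠ 0),
    Real.rpow_add_one (by linarith : (1:ℝ) - θ ≠ 0)]
  have h1 : 0 < Real.Gamma (lam * t) := Real.Gamma_pos_of_pos hs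
  have h2 : 0 < (1 - θ) ^ (lam * t) := Real.rpow_pos_of_pos (by linarith) _
  have h3 : (0:ℝ) < 1 - θ := by linarith
  have h4 := ha i
  have h5 := ha j
  field_simp
  ring

end

theorem mvGammaPdf_mean_and_covariance
    (q : ℕ) (hq : 1 ≤ q) (lam θ : ℝ) (hlam : 0 < lam) (hθ0 : 0 < θ) (hθ1 : θ < 1)
    (a : Fin q → ℝ) (ha : ∀ i, 0 < a i) (t : ℝ) (ht : 0 < t) :
    (∀ i : Fin q,
      (∫ x in Set.univ.pi fun _ : Fin q => Set.Ioi (0 : ℝ), x i * mvGammaPdf q lam θ a x t)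
        = lam * t / (a i * (1 - θ))) ∧
    (∀ i j : Fin q, i ≠ j →
      (∫ x in Set.univ.pi fun _ : Fin q => Set.Ioi (0 : ℝ), x i * x j * mvGammaPdf q lam θ a x t)
          = lam * t * (lam * t + θ) / (a i * a j * (1 - θ) ^ 2) ∧
      (∫ x in Set.univ.pi fun _ : Fin q => Set.Ioi (0 : ℝ), x i * x j * mvGammaPdf q lam θ a x t)
          - (∫ x in Set.univ.pi fun _ : Fin q => Set.Ioi (0 : ℝ), x i * mvGammaPdf q lam θ a x t)
            * (∫ x in Set.univ.pi fun _ : Fin q => Set.Ioi (0 : ℝ), x j * mvGammaPdf q lam θ a x t)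
          = lam * t * θ / (a i * a j * (1 - θ) ^ 2)) ∧
    (∀ i : Fin q,
      (∫ x in Set.univ.pi fun _ : Fin q => Set.Ioi (0 : ℝ), x i ^ 2 * mvGammaPdf q lam θ a x t)
          - (∫ x in Set.univ.pi fun _ : Fin q => Set.Ioi (0 : ℝ), x i * mvGammaPdf q lam θ a x t) ^ 2
        = lam * t / (a i ^ 2 * (1 - θ) ^ 2)) := by
  have h3 : (0:ℝ) < 1 - θ := by linarith
  refine ⟨fun i => I_one hlam hθ0 hθ1 ha ht i, fun i j hij => ⟨I_pair hlam hθ0 hθ1 ha ht i j hij, ?_⟩,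
    fun i => ?_⟩
  · rw [I_pair hlam hθ0 hθ1 ha ht i j hij, I_one hlam hθ0 hθ1 ha ht i,
      I_one hlam hθ0 hθ1 ha ht j]
    have h4 := ha i
    have h5 := ha j
    field_simp
    ring
  · rw [I_two hlam hθ0 hθ1 ha ht i, I_one hlam hθ0 hθ1 ha ht i]
    have h4 := ha i
    field_simp
    ring
end

section
/- Codifference identities for the multivariate gamma subordinator: for every t > 0 and all indices i ≠ j in {1,…,q}, the complex-valued integral ∫_{(0,∞)^q} e^{𝕚(x_i − x_j)} · g(x,t) dx equals ( a_i a_j (1−θ) / ( a_i a_j (1−θ) + 𝕚 a_i − 𝕚 a_j + 1 ) )^{λt}, and moreover ∫_{(0,∞)^q} e^{𝕚 x_i} · g(x,t) dx = ( a_i(1−θ) / ( a_i(1−θ) − 𝕚 ) )^{λt}, where 𝕚 = √(−1) and z^{λt} denotes the principal complex power (note that both bases lie in the right half-plane). -/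
open scoped BigOperators
open MeasureTheory Complex

open Set Filter

-- cpow algebra for right half plane
lemma cpow_mul_pos_re {z w : ℂ} (hz : 0 < z.re) (hw : 0 < w.re) (s : ℂ) :
    (z * w) ^ s = z ^ s * w ^ s := by
  have hz0 : z ≠ 0 := fun h => by simp [h] at hz
  have hw0 : w ≠ 0 := fun h => by simp [h] at hw
  have haz : |z.arg| < Real.pi / 2 := Complex.abs_arg_lt_pi_div_two_iff.2 (Or.inl hz)
  have haw : |w.arg| < Real.pi / 2 := Complex.abs_arg_lt_pi_div_two_iff.2 (Or.inl hw)
  have harg : z.arg + w.arg ∈ Set.Ioc (-Real.pi) Real.pi := by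
    constructor
    · nlinarith [abs_lt.1 haz, abs_lt.1 haw, Real.pi_pos]
    · nlinarith [abs_lt.1 haz, abs_lt.1 haw, Real.pi_pos]
  rw [Complex.cpow_def_of_ne_zero (mul_ne_zero hz0 hw0),
    Complex.cpow_def_of_ne_zero hz0, Complex.cpow_def_of_ne_zero hw0,
    Complex.log_mul hz0 hw0 harg, add_mul, Complex.exp_add]

lemma re_inv_pos {w : ℂ} (hw : 0 < w.re) : 0 < w⁻¹.re := by
  rw [Complex.inv_re]
  exact div_pos hw (Complex.normSq_pos.2 (fun h => by simp [h] at hw))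

lemma cpow_div_pos_re {z w : ℂ} (hz : 0 < z.re) (hw : 0 < w.re) (s : ℂ) :
    (z / w) ^ s = z ^ s / w ^ s := by
  have hw0 : w ≠ 0 := fun h => by simp [h] at hw
  have harg : w.arg ≠ Real.pi := by
    intro h
    exact absurd (Complex.arg_eq_pi_iff.1 h).1 (by linarith)
  rw [div_eq_mul_inv, cpow_mul_pos_re hz (re_inv_pos hw) s, Complex.inv_cpow _ _ harg,
    div_eq_mul_inv]


lemma gammaSeq_summable {c ρ : ℝ} (hc : 0 < c) (hρ0 : 0 ≤ ρ) (hρ : ρ < 1) :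
    Summable (fun n : ℕ => Real.Gamma ((n : ℝ) + c) / (n.factorial : ℝ) * ρ ^ n) := by
  set f : ℕ → ℝ := fun n => Real.Gamma ((n : ℝ) + c) / (n.factorial : ℝ) * ρ ^ n with hf
  have hr : (ρ + 1) / 2 < 1 := by linarith
  apply summable_of_ratio_norm_eventually_le hr
  have htend : Tendsto (fun n : ℕ => ρ * (((n : ℝ) + c) / ((n : ℝ) + 1))) atTop (nhds ρ) := by
    have h1 : Tendsto (fun n : ℕ => ((n : ℝ) + c) / ((n : ℝ) + 1)) atTop (nhds 1) := by
      have h2 : Tendsto (fun n : ℕ => 1 + (c - 1) * (1 / ((n : ℝ) + 1))) atTop (nhds 1) := by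
        have := tendsto_one_div_add_atTop_nhds_zero_nat (𝕜 := ℝ)
        have h3 := (tendsto_const_nhds (x := c - 1) (f := atTop (α := ℕ))).mul this
        simpa using (tendsto_const_nhds (x := (1:ℝ)) (f := atTop (α := ℕ))).add h3
      refine h2.congr' ?_
      filter_upwards [eventually_gt_atTop 0] with n _
      have hn1 : ((n : ℝ) + 1) ≠ 0 := by positivity
      field_simp
      ring
    simpa using (tendsto_const_nhds (x := ρ) (f := atTop (α := ℕ))).mul h1
  have hev : ∀ᶠ n : ℕ in atTop, ρ * (((n : ℝ) + c) / ((n : ℝ) + 1)) < (ρ + 1) / 2 :=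
    htend.eventually_lt_const (by linarith)
  filter_upwards [hev] with n hn
  have hgpos : 0 < Real.Gamma ((n : ℝ) + c) := Real.Gamma_pos_of_pos (by positivity)
  have hfac : (0 : ℝ) < (n.factorial : ℝ) := by positivity
  have hfn : ‖f n‖ = f n := by
    rw [Real.norm_eq_abs, _root_.abs_of_nonneg]
    positivity
  have hsucc : f (n + 1) = (ρ * (((n : ℝ) + c) / ((n : ℝ) + 1))) * f n := by
    have hGamma : Real.Gamma (((n + 1 : ℕ) : ℝ) + c) = ((n : ℝ) + c) * Real.Gamma ((n : ℝ) + c) := by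
      have : (((n + 1 : ℕ) : ℝ) + c) = ((n : ℝ) + c) + 1 := by push_cast; ring
      rw [this, Real.Gamma_add_one (by positivity)]
    have hfact : ((n + 1).factorial : ℝ) = ((n : ℝ) + 1) * (n.factorial : ℝ) := by
      rw [Nat.factorial_succ]; push_cast; ring
    rw [hf]
    simp only [hGamma, hfact, pow_succ]
    field_simp
  rw [hfn, hsucc, Real.norm_eq_abs, abs_mul]
  have h1 : |ρ * (((n : ℝ) + c) / ((n : ℝ) + 1))| = ρ * (((n : ℝ) + c) / ((n : ℝ) + 1)) := by
    rw [_root_.abs_of_nonneg]; positivity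
  have hfpos : 0 ≤ |f n| := abs_nonneg _
  rw [h1]
  have : |f n| = f n := by rw [_root_.abs_of_nonneg]; positivity
  rw [this]
  apply mul_le_mul_of_nonneg_right hn.le
  positivity


lemma integrableOn_rpow_exp {p b : ℝ} (hp : 0 < p) (hb : 0 < b) :
    IntegrableOn (fun x : ℝ => x ^ (p - 1) * Real.exp (-(b * x))) (Ioi 0) := by
  have base := Real.GammaIntegral_convergent hp
  have h1 : IntegrableOn (fun x : ℝ => Real.exp (-(b * x)) * (b * x) ^ (p - 1)) (Ioi 0) := by
    have := (integrableOn_Ioi_comp_mul_left_iff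
      (fun x : ℝ => Real.exp (-x) * x ^ (p - 1)) 0 hb).2 (by simpa using base)
    simpa using this
  have h2 := h1.const_mul (b ^ (1 - p))
  refine IntegrableOn.congr_fun h2 (fun x hx => ?_) measurableSet_Ioi
  have hx0 : (0 : ℝ) < x := hx
  rw [Real.mul_rpow hb.le hx0.le]
  have hbb : b ^ (1 - p) * b ^ (p - 1) = 1 := by
    rw [← Real.rpow_add hb]; norm_num
  calc b ^ (1 - p) * (Real.exp (-(b * x)) * (b ^ (p - 1) * x ^ (p - 1)))
      = (b ^ (1 - p) * b ^ (p - 1)) * (x ^ (p - 1) * Real.exp (-(b * x))) := by ring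
    _ = x ^ (p - 1) * Real.exp (-(b * x)) := by rw [hbb, one_mul]

lemma integrableOn_cpow_exp {p : ℝ} (hp : 0 < p) {d : ℂ} (hd : 0 < d.re) :
    IntegrableOn (fun x : ℝ => (x : ℂ) ^ ((p : ℂ) - 1) * Complex.exp (-(d * x))) (Ioi 0) := by
  constructor
  · refine ContinuousOn.aestronglyMeasurable ?_ measurableSet_Ioi
    apply ContinuousOn.mul
    · apply continuousOn_of_forall_continuousAt
      intro x hx
      exact (continuousAt_cpow_const <| Complex.ofReal_mem_slitPlane.2 hx).comp
        Complex.continuous_ofReal.continuousAt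
    · exact (Complex.continuous_exp.comp
        ((continuous_const.mul Complex.continuous_ofReal).neg)).continuousOn
  · rw [← hasFiniteIntegral_norm_iff]
    refine HasFiniteIntegral.congr (integrableOn_rpow_exp hp hd).2 ?_
    apply (ae_restrict_iff' measurableSet_Ioi).mpr
    filter_upwards with x hx
    rw [norm_mul, Complex.norm_cpow_eq_rpow_re_of_pos hx, Complex.norm_exp]
    simp [Complex.sub_re, Complex.mul_re]

lemma contOn_cpow (s : ℂ) : ContinuousOn (fun x : ℝ => (x : ℂ) ^ s) (Ioi 0) := by
  apply continuousOn_of_forall_continuousAt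
  intro x hx
  exact (continuousAt_cpow_const <| Complex.ofReal_mem_slitPlane.2 hx).comp
    Complex.continuous_ofReal.continuousAt

lemma contOn_cpow_exp (s d : ℂ) :
    ContinuousOn (fun x : ℝ => (x : ℂ) ^ s * Complex.exp (-(d * x))) (Ioi 0) :=
  (contOn_cpow s).mul (Complex.continuous_exp.comp
    ((continuous_const.mul Complex.continuous_ofReal).neg)).continuousOn

lemma laplace_cpow {p : ℝ} (hp : 0 < p) {d : ℂ} (hd : 0 < d.re) :
    ∫ x : ℝ in Ioi 0, (x : ℂ) ^ ((p : ℂ) - 1) * Complex.exp (-(d * x))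
      = d ^ (-(p : ℂ)) * Complex.Gamma p := by
  set U : Set ℂ := {z : ℂ | 0 < z.re} with hU
  have hU_open : IsOpen U := isOpen_lt continuous_const Complex.continuous_re
  have hU_conn : IsPreconnected U := (convex_halfSpace_re_gt 0).isPreconnected
  set f : ℂ → ℂ := fun d => ∫ x : ℝ in Ioi 0, (x : ℂ) ^ ((p : ℂ) - 1) * Complex.exp (-(d * x))
    with hf
  set g : ℂ → ℂ := fun d => d ^ (-(p : ℂ)) * Complex.Gamma p with hg
  -- differentiability of f
  have hf_diff : DifferentiableOn ℂ f U := by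
    intro d₀ hd₀
    have hd₀re : 0 < d₀.re := hd₀
    set ε : ℝ := d₀.re / 2 with hε
    have hεpos : 0 < ε := by positivity
    have key := hasDerivAt_integral_of_dominated_loc_of_deriv_le
      (μ := volume.restrict (Ioi (0:ℝ)))
      (F := fun (d : ℂ) (x : ℝ) => (x : ℂ) ^ ((p : ℂ) - 1) * Complex.exp (-(d * x)))
      (F' := fun (d : ℂ) (x : ℝ) =>
        (x : ℂ) ^ ((p : ℂ) - 1) * (Complex.exp (-(d * x)) * (-(x : ℂ))))
      (x₀ := d₀) (bound := fun x : ℝ => x ^ ((p + 1) - 1) * Real.exp (-(ε * x)))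
      (Metric.ball_mem_nhds d₀ hεpos)
      (Eventually.of_forall fun d =>
        (contOn_cpow_exp _ d).aestronglyMeasurable measurableSet_Ioi)
      (integrableOn_cpow_exp hp hd₀re)
      (((contOn_cpow _).mul ((Complex.continuous_exp.comp
          ((continuous_const.mul Complex.continuous_ofReal).neg)).continuousOn.mul
          (Complex.continuous_ofReal.neg.continuousOn))).aestronglyMeasurable
        measurableSet_Ioi)
      ?_ ((integrableOn_rpow_exp (by linarith) hεpos))
      ?_
    · exact key.2.differentiableAt.differentiableWithinAt
    · apply (ae_restrict_iff' measurableSet_Ioi).mpr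
      filter_upwards with x hx
      intro d hdball
      have hx0 : (0 : ℝ) < x := hx
      have hre : ε ≤ d.re := by
        have h1 : ‖d - d₀‖ < ε := by
          simpa [Complex.dist_eq] using (Metric.mem_ball.1 hdball)
        have h2 : |(d - d₀).re| ≤ ‖d - d₀‖ := Complex.abs_re_le_norm _
        have h3 : |d.re - d₀.re| < ε := by
          simpa [Complex.sub_re] using lt_of_le_of_lt h2 h1
        have := abs_lt.1 h3
        simp only [hε] at *
        linarith [this.1]
      have hnorm : ‖(x : ℂ) ^ ((p : ℂ) - 1) * (Complex.exp (-(d * x)) * (-(x : ℂ)))‖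
          = x ^ (p - 1) * (Real.exp (-(d.re * x)) * x) := by
        rw [norm_mul, norm_mul, Complex.norm_cpow_eq_rpow_re_of_pos hx0,
          Complex.norm_exp, norm_neg, Complex.norm_real, Real.norm_eq_abs, abs_of_pos hx0]
        simp [Complex.sub_re, Complex.mul_re]
      rw [hnorm]
      have h4 : x ^ (p - 1) * (Real.exp (-(d.re * x)) * x) = x ^ ((p+1) - 1) * Real.exp (-(d.re * x)) := by
        have : x ^ ((p+1) - 1) = x ^ (p - 1) * x := by
          have he : p + 1 - 1 = (p - 1) + 1 := by ring
          rw [he, Real.rpow_add hx0, Real.rpow_one]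
        rw [this]; ring
      rw [h4]
      apply mul_le_mul_of_nonneg_left _ (Real.rpow_nonneg hx0.le _)
      apply Real.exp_le_exp.2
      have := mul_le_mul_of_nonneg_right hre hx0.le
      linarith
    · apply (ae_restrict_iff' measurableSet_Ioi).mpr
      filter_upwards with x hx
      intro d _
      have h1 : HasDerivAt (fun d : ℂ => -(d * x)) (-(x : ℂ)) d :=
        ((hasDerivAt_mul_const (x : ℂ)).neg)
      have h2 := h1.cexp
      exact h2.const_mul _
  -- differentiability of g
  have hg_diff : DifferentiableOn ℂ g U := by
    intro d hd
    apply DifferentiableAt.differentiableWithinAt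
    apply DifferentiableAt.mul_const
    exact (differentiableAt_id.cpow (differentiableAt_const _)
      (Complex.mem_slitPlane_iff.2 (Or.inl hd)))
  have hf_an := hf_diff.analyticOnNhd hU_open
  have hg_an := hg_diff.analyticOnNhd hU_open
  -- they agree frequently near 1
  have heq : ∀ r : ℝ, 0 < r → f r = g r := by
    intro r hr
    have := integral_cpow_mul_exp_neg_mul_Ioi
      (by rwa [Complex.ofReal_re] : 0 < ((p : ℂ)).re) hr
    rw [hf, hg]
    simp only []
    rw [this]
    congr 1
    rw [one_div, Complex.inv_cpow _ _ (by
      rw [Complex.arg_ofReal_of_nonneg hr.le]; exact Real.pi_ne_zero.symm), ← Complex.cpow_neg]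
  have hfreq : ∃ᶠ z in nhdsWithin (1 : ℂ) {(1 : ℂ)}ᶜ, f z = g z := by
    have hu : Tendsto (fun n : ℕ => ((1 + ((n : ℝ) + 1)⁻¹ : ℝ) : ℂ)) atTop
        (nhdsWithin (1 : ℂ) {(1 : ℂ)}ᶜ) := by
      apply tendsto_nhdsWithin_of_tendsto_nhds_of_eventually_within
      · have hre : Tendsto (fun n : ℕ => (1 + ((n : ℝ) + 1)⁻¹ : ℝ)) atTop (nhds 1) := by
          have h0 : Tendsto (fun n : ℕ => (((n : ℝ) + 1)⁻¹ : ℝ)) atTop (nhds 0) := by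
            simpa using tendsto_one_div_add_atTop_nhds_zero_nat (𝕜 := ℝ)
          simpa using (tendsto_const_nhds (x := (1:ℝ)) (f := atTop (α := ℕ))).add h0
        have := (Complex.continuous_ofReal.tendsto (1 : ℝ)).comp hre
        simpa only [Function.comp_def, Complex.ofReal_one] using this
      · apply Eventually.of_forall
        intro n
        simp only [mem_compl_iff, mem_singleton_iff]
        intro hcon
        have : (1 + ((n : ℝ) + 1)⁻¹ : ℝ) = 1 := by exact_mod_cast hcon
        have hpos : (0 : ℝ) < ((n : ℝ) + 1)⁻¹ := by positivity
        linarith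
    apply hu.frequently
    apply Frequently.of_forall
    intro n
    exact heq _ (by positivity)
  have h1U : (1 : ℂ) ∈ U := by simp [hU]
  have := hf_an.eqOn_of_preconnected_of_frequently_eq hg_an hU_conn h1U hfreq
  exact this hd


lemma binomial_sum {c : ℝ} (hc : 0 < c) {z : ℂ} (hz : ‖z‖ < 1) :
    ∑' n : ℕ, ((Real.Gamma ((n : ℝ) + c) / (n.factorial : ℝ) : ℝ) : ℂ) * z ^ n
      = Complex.Gamma (c : ℂ) * (1 - z) ^ (-(c : ℂ)) := by
  have hd : 0 < (1 - z).re := by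
    have h1 : z.re ≤ ‖z‖ := Complex.re_le_norm z
    simp only [Complex.sub_re, Complex.one_re]
    linarith
  set F : ℕ → ℝ → ℂ := fun n x => (z ^ n / (n.factorial : ℂ)) *
    ((x : ℂ) ^ ((((n : ℝ) + c : ℝ) : ℂ) - 1) * Complex.exp (-((1 : ℂ) * x))) with hF
  have hpnc : ∀ n : ℕ, (0 : ℝ) < (n : ℝ) + c := fun n => by positivity
  have hint : ∀ n : ℕ, Integrable (F n) (volume.restrict (Ioi 0)) := fun n =>
    ((integrableOn_cpow_exp (hpnc n) (d := 1) (by simp)).const_mul _)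
  have hnormval : ∀ n : ℕ, ∫ x in Ioi (0:ℝ), ‖F n x‖
      = Real.Gamma ((n : ℝ) + c) / (n.factorial : ℝ) * ‖z‖ ^ n := by
    intro n
    have : ∀ x ∈ Ioi (0:ℝ), ‖F n x‖
        = (‖z‖ ^ n / (n.factorial : ℝ)) * (x ^ (((n : ℝ) + c) - 1) * Real.exp (-(1 * x))) := by
      intro x hx
      have hx0 : (0 : ℝ) < x := hx
      rw [hF]
      simp only [norm_mul, norm_div, norm_pow]
      rw [Complex.norm_cpow_eq_rpow_re_of_pos hx0, Complex.norm_exp]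
      simp [Complex.sub_re, Complex.ofReal_re, Complex.norm_natCast]
    rw [setIntegral_congr_fun measurableSet_Ioi this, MeasureTheory.integral_const_mul,
      Real.integral_rpow_mul_exp_neg_mul_Ioi (hpnc n) one_pos]
    simp only [one_div, inv_one, Real.one_rpow, one_mul]
    ring
  have hsum : Summable (fun n : ℕ => ∫ x in Ioi (0:ℝ), ‖F n x‖) := by
    apply Summable.congr (f := fun n : ℕ =>
      Real.Gamma ((n : ℝ) + c) / (n.factorial : ℝ) * ‖z‖ ^ n)
    · exact gammaSeq_summable hc (norm_nonneg z) hz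
    · intro n; exact (hnormval n).symm
  have swap := integral_tsum_of_summable_integral_norm hint hsum
  have hLHS : ∀ n : ℕ, ∫ x in Ioi (0:ℝ), F n x
      = ((Real.Gamma ((n : ℝ) + c) / (n.factorial : ℝ) : ℝ) : ℂ) * z ^ n := by
    intro n
    rw [hF]
    simp only []
    rw [MeasureTheory.integral_const_mul, laplace_cpow (hpnc n) (d := 1) (by simp), one_cpow,
      Complex.Gamma_ofReal]
    push_cast
    ring
  have hRHS : ∫ x in Ioi (0:ℝ), (∑' n : ℕ, F n x)
      = Complex.Gamma (c : ℂ) * (1 - z) ^ (-(c : ℂ)) := by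
    have hptwise : ∀ x ∈ Ioi (0:ℝ), (∑' n : ℕ, F n x)
        = (x : ℂ) ^ ((c : ℂ) - 1) * Complex.exp (-((1 - z) * x)) := by
      intro x hx
      have hx0 : (0 : ℝ) < x := hx
      have hxne : (x : ℂ) ≠ 0 := Complex.ofReal_ne_zero.2 hx0.ne'
      have hterm : ∀ n : ℕ, F n x
          = ((x : ℂ) ^ ((c : ℂ) - 1) * Complex.exp (-((1:ℂ) * x))) * ((z * x) ^ n / (n.factorial : ℂ)) := by
        intro n
        rw [hF]
        simp only []
        have hcast : ((((n : ℝ) + c : ℝ)) : ℂ) - 1 = (n : ℂ) + ((c : ℂ) - 1) := by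
          push_cast; ring
        rw [hcast, Complex.cpow_add _ _ hxne, Complex.cpow_natCast, mul_pow]
        ring
      rw [tsum_congr hterm, tsum_mul_left]
      have hexp : (∑' n : ℕ, (z * x) ^ n / (n.factorial : ℂ)) = Complex.exp (z * x) := by
        have h1 := congrFun Complex.exp_eq_exp_ℂ (z * (x : ℂ))
        rw [NormedSpace.exp_eq_tsum_div] at h1
        exact h1.symm
      rw [hexp, mul_assoc, ← Complex.exp_add]
      congr 2
      ring
    rw [setIntegral_congr_fun measurableSet_Ioi hptwise, laplace_cpow hc hd]
    ring
  calc ∑' n : ℕ, ((Real.Gamma ((n : ℝ) + c) / (n.factorial : ℝ) : ℝ) : ℂ) * z ^ n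
      = ∑' n : ℕ, ∫ x in Ioi (0:ℝ), F n x := by
        exact (tsum_congr hLHS).symm
    _ = ∫ x in Ioi (0:ℝ), (∑' n : ℕ, F n x) := swap
    _ = Complex.Gamma (c : ℂ) * (1 - z) ^ (-(c : ℂ)) := hRHS


lemma bridge {A wk pn y : ℝ} (hA : 0 < A) (hpn : 0 < pn) (hy : 0 < y) :
    (((A * y) ^ pn / y * Real.exp (-(A * y)) : ℝ) : ℂ) * Complex.exp (Complex.I * wk * y)
      = ((A ^ pn : ℝ) : ℂ) *
        (((y : ℂ)) ^ ((pn : ℂ) - 1) * Complex.exp (-(((A : ℂ) - Complex.I * wk) * y))) := by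
  have hyne : (y : ℂ) ≠ 0 := Complex.ofReal_ne_zero.2 hy.ne'
  have h1 : ((A * y : ℝ) ^ pn : ℝ) = A ^ pn * y ^ pn := Real.mul_rpow hA.le hy.le
  have h2 : ((y ^ pn : ℝ) : ℂ) = (y : ℂ) ^ (pn : ℂ) := Complex.ofReal_cpow hy.le (pn)
  have h3 : (y : ℂ) ^ ((pn : ℂ) - 1) = (y : ℂ) ^ (pn : ℂ) / (y : ℂ) := by
    rw [Complex.cpow_sub _ _ hyne, Complex.cpow_one]
  have h4 : Complex.exp (-((A : ℂ) * y)) * Complex.exp (Complex.I * wk * y)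
      = Complex.exp (-(((A : ℂ) - Complex.I * wk) * y)) := by
    rw [← Complex.exp_add]
    congr 1
    ring
  rw [h1]
  push_cast [h2, ← Complex.ofReal_exp]
  rw [h3]
  rw [← h4]
  push_cast
  ring

lemma mv_main (q : ℕ) (hq : 1 ≤ q) (lam θ : ℝ) (hlam : 0 < lam) (hθ0 : 0 < θ) (hθ1 : θ < 1)
    (a : Fin q → ℝ) (ha : ∀ i, 0 < a i) (t : ℝ) (ht : 0 < t) (w : Fin q → ℝ) :
    (∫ x in Set.univ.pi fun _ : Fin q => Set.Ioi (0 : ℝ),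
        Complex.exp (Complex.I * (∑ k, (w k : ℂ) * (x k : ℂ))) * (mvGammaPdf q lam θ a x t : ℂ))
      = ((1 - θ : ℝ) : ℂ) ^ ((lam * t : ℝ) : ℂ)
        * (1 - (θ : ℂ) * ∏ k, ((a k : ℂ) / ((a k : ℂ) - Complex.I * (w k : ℂ))))
            ^ (-((lam * t : ℝ) : ℂ))
        * ∏ k, ((a k : ℂ) / ((a k : ℂ) - Complex.I * (w k : ℂ))) ^ ((lam * t : ℝ) : ℂ) := by
  have hc : 0 < lam * t := mul_pos hlam ht
  set c : ℝ := lam * t with hcdef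
  set S : Set (Fin q → ℝ) := Set.univ.pi fun _ : Fin q => Set.Ioi (0 : ℝ) with hSdef
  have hS : MeasurableSet S := MeasurableSet.univ_pi (fun _ => measurableSet_Ioi)
  set d : Fin q → ℂ := fun k => (a k : ℂ) - Complex.I * (w k : ℂ) with hddef
  have hdre : ∀ k, (d k).re = a k := by
    intro k
    simp [hddef, Complex.sub_re, Complex.mul_re]
  have hdpos : ∀ k, 0 < (d k).re := fun k => by rw [hdre k]; exact ha k
  have hdne : ∀ k, d k ≠ 0 := fun k => fun h => by
    have := hdre k
    rw [h] at this
    exact absurd this.symm (ne_of_gt (by simpa using ha k))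
  set p : ℕ → ℝ := fun n => (n : ℝ) + c with hpdef
  have hp : ∀ n, 0 < p n := fun n => by positivity
  set C₀ : ℝ := (1 - θ) ^ c / Real.Gamma c with hC₀def
  have hΓc : 0 < Real.Gamma c := Real.Gamma_pos_of_pos hc
  have hΓp : ∀ n, 0 < Real.Gamma (p n) := fun n => Real.Gamma_pos_of_pos (hp n)
  have hC₀ : 0 < C₀ := div_pos (Real.rpow_pos_of_pos (by linarith) _) hΓc
  set γ : ℕ → ℝ := fun n => C₀ * (θ ^ n / ((n.factorial : ℝ) * Real.Gamma (p n) ^ (q - 1)))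
    with hγdef
  have hγpos : ∀ n, 0 < γ n := fun n => by
    apply mul_pos hC₀
    apply div_pos (pow_pos hθ0 n)
    exact mul_pos (by exact_mod_cast n.factorial_pos) (pow_pos (hΓp n) _)
  have hreal : ∀ n : ℕ, γ n * Real.Gamma (p n) ^ q
      = C₀ * (Real.Gamma (p n) / (n.factorial : ℝ) * θ ^ n) := by
    intro n
    have hq' : q = (q - 1) + 1 := (Nat.succ_pred_eq_of_pos hq).symm
    rw [hγdef]
    simp only []
    rw [hq', pow_succ]
    have hfac : ((n.factorial : ℝ)) ≠ 0 := by exact_mod_cast n.factorial_pos.ne'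
    have hΓne : Real.Gamma (p n) ^ (q - 1 + 1 - 1) ≠ 0 := pow_ne_zero _ (hΓp n).ne'
    field_simp
    rw [Nat.add_sub_cancel]
  set G : ℕ → Fin q → ℝ → ℂ := fun n k => (Ioi (0:ℝ)).indicator (fun y =>
    ((a k ^ (p n) : ℝ) : ℂ) * ((y : ℂ) ^ (((p n : ℝ) : ℂ) - 1) * Complex.exp (-(d k * y))))
    with hGdef
  set F : ℕ → (Fin q → ℝ) → ℂ := fun n x => ((γ n : ℝ) : ℂ) * ∏ k, G n k (x k) with hFdef
  -- pointwise identity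
  have hpt : ∀ x : Fin q → ℝ,
      S.indicator (fun x => Complex.exp (Complex.I * (∑ k, (w k : ℂ) * (x k : ℂ))) *
        (mvGammaPdf q lam θ a x t : ℂ)) x = ∑' n : ℕ, F n x := by
    intro x
    by_cases hxS : x ∈ S
    · have hxk : ∀ k, 0 < x k := fun k => (Set.mem_pi.1 hxS) k (Set.mem_univ k)
      rw [Set.indicator_of_mem hxS]
      simp only [mvGammaPdf, ← hcdef]
      rw [Complex.ofReal_mul, Complex.ofReal_tsum]
      have hterm : ∀ n : ℕ, ((θ ^ n / ((n.factorial : ℝ) * Real.Gamma ((n : ℝ) + c) ^ (q - 1)) *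
            ∏ i, ((a i * x i) ^ ((n : ℝ) + c) / x i * Real.exp (-(a i * x i))) : ℝ) : ℂ)
          = ((θ ^ n / ((n.factorial : ℝ) * Real.Gamma (p n) ^ (q - 1)) : ℝ) : ℂ) *
            ∏ i, (((a i * x i) ^ (p n) / x i * Real.exp (-(a i * x i)) : ℝ) : ℂ) := by
        intro n
        rw [Complex.ofReal_mul, Complex.ofReal_prod]
      rw [tsum_congr hterm]
      rw [← tsum_mul_left, ← tsum_mul_left]
      apply tsum_congr
      intro n
      have hprod : ∏ k, G n k (x k)
          = ∏ k, ((((a k * x k) ^ (p n) / x k * Real.exp (-(a k * x k)) : ℝ) : ℂ) *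
            Complex.exp (Complex.I * (w k : ℂ) * (x k : ℂ))) := by
        apply Finset.prod_congr rfl
        intro k _
        rw [hGdef]
        simp only []
        rw [Set.indicator_of_mem (Set.mem_Ioi.2 (hxk k))]
        exact (bridge (ha k) (hp n) (hxk k)).symm
      have hE : Complex.exp (Complex.I * (∑ k, (w k : ℂ) * (x k : ℂ)))
          = ∏ k, Complex.exp (Complex.I * (w k : ℂ) * (x k : ℂ)) := by
        rw [← Complex.exp_sum]
        congr 1
        rw [Finset.mul_sum]
        apply Finset.sum_congr rfl
        intro k _
        ring
      rw [hFdef]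
      simp only []
      rw [hprod, Finset.prod_mul_distrib]
      simp only [hγdef, hC₀def, hpdef]
      push_cast
      rw [hE]
      ring
    · rw [Set.indicator_of_notMem hxS]
      rw [Set.mem_pi] at hxS
      push_neg at hxS
      obtain ⟨k₀, _, hk₀⟩ := hxS
      have hzero : ∀ n : ℕ, F n x = 0 := by
        intro n
        rw [hFdef]
        simp only []
        have : G n k₀ (x k₀) = 0 := by
          rw [hGdef]
          simp only []
          exact Set.indicator_of_notMem hk₀ _
        rw [Finset.prod_eq_zero (Finset.mem_univ k₀) this, mul_zero]
      rw [tsum_congr hzero, tsum_zero]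
  -- integrability
  have hGint : ∀ n k, Integrable (G n k) := by
    intro n k
    rw [hGdef]
    simp only []
    rw [integrable_indicator_iff measurableSet_Ioi]
    exact (integrableOn_cpow_exp (hp n) (hdpos k)).const_mul _
  have hFint : ∀ n, Integrable (F n) := by
    intro n
    exact (Integrable.fintype_prod (f := fun k => G n k) (fun k => hGint n k)).const_mul _
  -- norm integrals
  have hGnorm : ∀ n k, (∫ y : ℝ, ‖G n k y‖) = Real.Gamma (p n) := by
    intro n k
    have h1 : ∀ y : ℝ, ‖G n k y‖ = (Ioi (0:ℝ)).indicator
        (fun y => a k ^ (p n) * (y ^ ((p n) - 1) * Real.exp (-(a k * y)))) y := by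
      intro y
      rw [hGdef]
      simp only []
      rw [norm_indicator_eq_indicator_norm]
      by_cases hy : y ∈ Ioi (0:ℝ)
      · rw [Set.indicator_of_mem hy, Set.indicator_of_mem hy]
        have hy0 : (0:ℝ) < y := hy
        rw [norm_mul, norm_mul, Complex.norm_real, Real.norm_eq_abs,
          _root_.abs_of_nonneg (Real.rpow_nonneg (ha k).le _),
          Complex.norm_cpow_eq_rpow_re_of_pos hy0, Complex.norm_exp]
        have e1 : ((((p n : ℝ)) : ℂ) - 1).re = p n - 1 := by simp
        have e2 : (-(d k * (y : ℂ))).re = -(a k * y) := by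
          simp [Complex.neg_re, Complex.mul_re, Complex.ofReal_re, Complex.ofReal_im, hdre k]
        rw [e1, e2]
      · rw [Set.indicator_of_notMem hy, Set.indicator_of_notMem hy]
    rw [MeasureTheory.integral_congr_ae (Eventually.of_forall h1),
      MeasureTheory.integral_indicator measurableSet_Ioi, MeasureTheory.integral_const_mul,
      Real.integral_rpow_mul_exp_neg_mul_Ioi (hp n) (ha k), ← mul_assoc,
      ← Real.mul_rpow (ha k).le (le_of_lt (one_div_pos.2 (ha k))), mul_one_div_cancel (ha k).ne',
      Real.one_rpow, one_mul]
  have hFnorm : ∀ n, (∫ x : Fin q → ℝ, ‖F n x‖) = γ n * Real.Gamma (p n) ^ q := by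
    intro n
    have h1 : ∀ x : Fin q → ℝ, ‖F n x‖ = γ n * ∏ k, ‖G n k (x k)‖ := by
      intro x
      rw [hFdef]
      simp only []
      rw [norm_mul, norm_prod, Complex.norm_real, Real.norm_eq_abs,
        _root_.abs_of_pos (hγpos n)]
    rw [MeasureTheory.integral_congr_ae (Eventually.of_forall h1),
      MeasureTheory.integral_const_mul,
      MeasureTheory.integral_fintype_prod_volume_eq_prod (ι := Fin q) (fun k y => ‖G n k y‖)]
    have : ∀ k, (∫ y : ℝ, ‖G n k y‖) = Real.Gamma (p n) := hGnorm n
    rw [Finset.prod_congr rfl (fun k _ => this k), Finset.prod_const, Finset.card_univ,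
      Fintype.card_fin]
  have hsummable : Summable (fun n : ℕ => ∫ x : Fin q → ℝ, ‖F n x‖) := by
    apply Summable.congr (f := fun n : ℕ =>
      C₀ * (Real.Gamma ((n : ℝ) + c) / (n.factorial : ℝ) * θ ^ n))
    · exact (gammaSeq_summable hc hθ0.le hθ1).mul_left C₀
    · intro n
      rw [hFnorm n, hreal n]
  -- swap
  have hswap := integral_tsum_of_summable_integral_norm hFint hsummable
  -- values of one-dim integrals
  have hGval : ∀ n k, (∫ y : ℝ, G n k y)
      = ((a k ^ (p n) : ℝ) : ℂ) * ((d k) ^ (-((p n : ℝ) : ℂ)) * Complex.Gamma ((p n : ℝ) : ℂ)) := by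
    intro n k
    rw [hGdef]
    simp only []
    rw [MeasureTheory.integral_indicator measurableSet_Ioi, MeasureTheory.integral_const_mul,
      laplace_cpow (hp n) (hdpos k)]
  have hFval : ∀ n, (∫ x : Fin q → ℝ, F n x)
      = ((γ n : ℝ) : ℂ) * ∏ k, (((a k ^ (p n) : ℝ) : ℂ) *
        ((d k) ^ (-((p n : ℝ) : ℂ)) * Complex.Gamma ((p n : ℝ) : ℂ))) := by
    intro n
    rw [hFdef]
    simp only []
    rw [MeasureTheory.integral_const_mul,
      MeasureTheory.integral_fintype_prod_volume_eq_prod (ι := Fin q) (fun k => G n k)]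
    rw [Finset.prod_congr rfl (fun k _ => hGval n k)]
  -- series algebra
  set R : ℂ := ∏ k, ((a k : ℂ) * (d k)⁻¹) with hRdef
  set Q : ℂ := ∏ k, ((a k : ℂ) ^ ((c : ℝ) : ℂ) * (d k) ^ (-((c : ℝ) : ℂ))) with hQdef
  have habsR : ‖R‖ ≤ 1 := by
    rw [hRdef, norm_prod]
    apply Finset.prod_le_one
    · intro k _
      exact (norm_nonneg _)
    · intro k _
      rw [norm_mul, norm_inv, Complex.norm_real, Real.norm_eq_abs, _root_.abs_of_pos (ha k)]
      have h2 : a k ≤ ‖d k‖ := by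
        have := Complex.abs_re_le_norm (d k)
        rw [hdre k] at this
        exact (le_abs_self _).trans this
      have h3 : 0 < ‖d k‖ := by
        rw [norm_pos_iff]
        exact hdne k
      rw [mul_inv_le_iff₀ h3, one_mul]
      exact h2
  have habs : ‖(θ : ℂ) * R‖ < 1 := by
    rw [norm_mul, Complex.norm_real, Real.norm_eq_abs, _root_.abs_of_pos hθ0]
    calc θ * ‖R‖ ≤ θ * 1 := by
          exact mul_le_mul_of_nonneg_left habsR hθ0.le
      _ < 1 := by linarith
  have hterm2 : ∀ n : ℕ, ((γ n : ℝ) : ℂ) * ∏ k, (((a k ^ (p n) : ℝ) : ℂ) *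
        ((d k) ^ (-((p n : ℝ) : ℂ)) * Complex.Gamma ((p n : ℝ) : ℂ)))
      = ((C₀ : ℝ) : ℂ) * Q *
        (((Real.Gamma ((n : ℝ) + c) / (n.factorial : ℝ) : ℝ) : ℂ) * ((θ : ℂ) * R) ^ n) := by
    intro n
    have h1 : ∏ k, (((a k ^ (p n) : ℝ) : ℂ) *
          ((d k) ^ (-((p n : ℝ) : ℂ)) * Complex.Gamma ((p n : ℝ) : ℂ)))
        = (∏ k, (((a k ^ (p n) : ℝ) : ℂ) * (d k) ^ (-((p n : ℝ) : ℂ)))) *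
          Complex.Gamma ((p n : ℝ) : ℂ) ^ q := by
      calc ∏ k, (((a k ^ (p n) : ℝ) : ℂ) *
            ((d k) ^ (-((p n : ℝ) : ℂ)) * Complex.Gamma ((p n : ℝ) : ℂ)))
          = ∏ k, ((((a k ^ (p n) : ℝ) : ℂ) * (d k) ^ (-((p n : ℝ) : ℂ))) *
            Complex.Gamma ((p n : ℝ) : ℂ)) := Finset.prod_congr rfl (fun k _ => by ring)
        _ = (∏ k, (((a k ^ (p n) : ℝ) : ℂ) * (d k) ^ (-((p n : ℝ) : ℂ)))) *
            ∏ _k : Fin q, Complex.Gamma ((p n : ℝ) : ℂ) := Finset.prod_mul_distrib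
        _ = _ := by rw [Finset.prod_const, Finset.card_univ, Fintype.card_fin]
    have h2 : ∀ k, (((a k ^ (p n) : ℝ) : ℂ) * (d k) ^ (-((p n : ℝ) : ℂ)))
        = ((a k : ℂ) * (d k)⁻¹) ^ n * ((a k : ℂ) ^ ((c : ℝ) : ℂ) * (d k) ^ (-((c : ℝ) : ℂ))) := by
      intro k
      have hane : ((a k : ℝ) : ℂ) ≠ 0 := Complex.ofReal_ne_zero.2 (ha k).ne'
      have e1 : ((p n : ℝ) : ℂ) = (n : ℂ) + ((c : ℝ) : ℂ) := by
        rw [hpdef]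
        push_cast
        ring
      rw [Complex.ofReal_cpow (ha k).le, e1]
      have e2 : -((n : ℂ) + ((c : ℝ) : ℂ)) = (-(n : ℂ)) + (-((c : ℝ) : ℂ)) := by ring
      rw [e2, Complex.cpow_add _ _ hane, Complex.cpow_add _ _ (hdne k), Complex.cpow_natCast]
      have e3 : (d k) ^ (-((n : ℕ) : ℂ)) = ((d k)⁻¹) ^ n := by
        rw [Complex.cpow_neg, Complex.cpow_natCast, inv_pow]
      rw [e3]
      ring
    rw [h1, Finset.prod_congr rfl (fun k _ => h2 k), Finset.prod_mul_distrib,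
      Finset.prod_pow, ← hRdef, ← hQdef, Complex.Gamma_ofReal]
    have h3 : ((γ n : ℝ) : ℂ) * ((Real.Gamma (p n) : ℝ) : ℂ) ^ q
        = ((γ n * Real.Gamma (p n) ^ q : ℝ) : ℂ) := by push_cast; ring
    have h4 : ((γ n * Real.Gamma (p n) ^ q : ℝ) : ℂ)
        = ((C₀ : ℝ) : ℂ) * (((Real.Gamma ((n : ℝ) + c) / (n.factorial : ℝ) : ℝ) : ℂ) * ((θ : ℝ) : ℂ) ^ n) := by
      rw [hreal n]
      simp only [hpdef]
      push_cast
      ring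
    calc ((γ n : ℝ) : ℂ) * (R ^ n * Q * ((Real.Gamma (p n) : ℝ) : ℂ) ^ q)
        = (((γ n : ℝ) : ℂ) * ((Real.Gamma (p n) : ℝ) : ℂ) ^ q) * (R ^ n * Q) := by ring
      _ = (((C₀ : ℝ) : ℂ) * (((Real.Gamma ((n : ℝ) + c) / (n.factorial : ℝ) : ℝ) : ℂ) * ((θ : ℝ) : ℂ) ^ n)) * (R ^ n * Q) := by
          rw [h3, h4]
      _ = ((C₀ : ℝ) : ℂ) * Q *
          (((Real.Gamma ((n : ℝ) + c) / (n.factorial : ℝ) : ℝ) : ℂ) * ((θ : ℂ) * R) ^ n) := by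
          rw [mul_pow]
          ring
  -- final assembly
  have hC₀Γ : ((C₀ : ℝ) : ℂ) * Complex.Gamma ((c : ℝ) : ℂ) = ((1 - θ : ℝ) : ℂ) ^ ((c : ℝ) : ℂ) := by
    rw [Complex.Gamma_ofReal, ← Complex.ofReal_mul, hC₀def, div_mul_cancel₀ _ hΓc.ne',
      Complex.ofReal_cpow (by linarith : (0:ℝ) ≤ 1 - θ)]
  have hQ2 : Q = ∏ k, ((a k : ℂ) / d k) ^ ((c : ℝ) : ℂ) := by
    rw [hQdef]
    apply Finset.prod_congr rfl
    intro k _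
    rw [cpow_div_pos_re (by simpa using ha k) (hdpos k), Complex.cpow_neg, div_eq_mul_inv]
  have hR2 : R = ∏ k, ((a k : ℂ) / d k) := by
    rw [hRdef]
    exact Finset.prod_congr rfl (fun k _ => (div_eq_mul_inv _ _).symm)
  rw [← MeasureTheory.integral_indicator hS,
    MeasureTheory.integral_congr_ae (Eventually.of_forall hpt), ← hswap,
    tsum_congr (fun n => by rw [hFval n, hterm2 n] :
      ∀ n : ℕ, (∫ x : Fin q → ℝ, F n x) = ((C₀ : ℝ) : ℂ) * Q *
        (((Real.Gamma ((n : ℝ) + c) / (n.factorial : ℝ) : ℝ) : ℂ) * ((θ : ℂ) * R) ^ n)),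
    tsum_mul_left, binomial_sum hc habs]
  calc ((C₀ : ℝ) : ℂ) * Q * (Complex.Gamma ((c : ℝ) : ℂ) * (1 - (θ : ℂ) * R) ^ (-((c : ℝ) : ℂ)))
      = (((C₀ : ℝ) : ℂ) * Complex.Gamma ((c : ℝ) : ℂ)) *
        (1 - (θ : ℂ) * R) ^ (-((c : ℝ) : ℂ)) * Q := by ring
    _ = ((1 - θ : ℝ) : ℂ) ^ ((c : ℝ) : ℂ) *
        (1 - (θ : ℂ) * ∏ k, ((a k : ℂ) / d k)) ^ (-((c : ℝ) : ℂ)) *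
        ∏ k, ((a k : ℂ) / d k) ^ ((c : ℝ) : ℂ) := by rw [hC₀Γ, hQ2, hR2]


lemma alg_one {θ A : ℝ} (hθ1 : θ < 1) (hA : 0 < A) (s : ℂ) :
    ((1 - θ : ℝ) : ℂ) ^ s * (1 - (θ : ℂ) * ((A : ℂ) / ((A : ℂ) - Complex.I))) ^ (-s) *
      ((A : ℂ) / ((A : ℂ) - Complex.I)) ^ s
      = (((A : ℂ) * (1 - (θ : ℂ))) / ((A : ℂ) * (1 - (θ : ℂ)) - Complex.I)) ^ s := by
  have hθ1' : 0 < 1 - θ := by linarith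
  set D : ℂ := (A : ℂ) - Complex.I with hD
  have hDre : 0 < D.re := by
    rw [hD]
    simp only [Complex.sub_re, Complex.I_re, Complex.ofReal_re, sub_zero]
    exact hA
  have hD0 : D ≠ 0 := fun h => by rw [h] at hDre; simp at hDre
  have hAre : 0 < ((A : ℝ) : ℂ).re := by simpa using hA
  have hMre : 0 < ((A * (1 - θ) : ℝ) : ℂ).re := by
    simp only [Complex.ofReal_re]
    positivity
  set N : ℂ := ((A * (1 - θ) : ℝ) : ℂ) - Complex.I with hN
  have hNre : 0 < N.re := by
    rw [hN]
    simp only [Complex.sub_re, Complex.I_re, Complex.ofReal_re, sub_zero]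
    positivity
  have hN0 : N ≠ 0 := fun h => by rw [h] at hNre; simp at hNre
  have hbase : (A : ℂ) * (1 - (θ : ℂ)) - Complex.I = N := by rw [hN]; push_cast; ring
  have hnum : (A : ℂ) * (1 - (θ : ℂ)) = ((A * (1 - θ) : ℝ) : ℂ) := by push_cast; ring
  have h1 : 1 - (θ : ℂ) * ((A : ℂ) / D) = N / D := by
    rw [hN]
    field_simp
    push_cast
    ring
  rw [hbase, hnum, h1, Complex.cpow_neg, cpow_div_pos_re hNre hDre,
    cpow_div_pos_re hAre hDre, cpow_div_pos_re hMre hNre, inv_div]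
  have hDs : D ^ s ≠ 0 := by
    simp [Complex.cpow_eq_zero_iff, hD0]
  have hNs : N ^ s ≠ 0 := by
    simp [Complex.cpow_eq_zero_iff, hN0]
  have hmul : ((1 - θ : ℝ) : ℂ) ^ s * ((A : ℝ) : ℂ) ^ s = ((A * (1 - θ) : ℝ) : ℂ) ^ s := by
    rw [← Complex.mul_cpow_ofReal_nonneg hθ1'.le hA.le]
    congr 1
    push_cast
    ring
  rw [← hmul]
  field_simp

lemma alg_two {θ A B : ℝ} (hθ1 : θ < 1) (hA : 0 < A) (hB : 0 < B) (s : ℂ) :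
    ((1 - θ : ℝ) : ℂ) ^ s *
      (1 - (θ : ℂ) * ((A : ℂ) / ((A : ℂ) - Complex.I) * ((B : ℂ) / ((B : ℂ) + Complex.I)))) ^ (-s) *
      (((A : ℂ) / ((A : ℂ) - Complex.I)) ^ s * ((B : ℂ) / ((B : ℂ) + Complex.I)) ^ s)
      = (((A : ℂ) * (B : ℂ) * (1 - (θ : ℂ))) /
          ((A : ℂ) * (B : ℂ) * (1 - (θ : ℂ)) + Complex.I * (A : ℂ)
            - Complex.I * (B : ℂ) + 1)) ^ s := by
  have hθ1' : 0 < 1 - θ := by linarith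
  set D1 : ℂ := (A : ℂ) - Complex.I with hD1
  set D2 : ℂ := (B : ℂ) + Complex.I with hD2
  have hD1re : 0 < D1.re := by
    rw [hD1]
    simp only [Complex.sub_re, Complex.I_re, Complex.ofReal_re, sub_zero]
    exact hA
  have hD2re : 0 < D2.re := by
    rw [hD2]
    simp only [Complex.add_re, Complex.I_re, Complex.ofReal_re, add_zero]
    exact hB
  have hD10 : D1 ≠ 0 := fun h => by rw [h] at hD1re; simp at hD1re
  have hD20 : D2 ≠ 0 := fun h => by rw [h] at hD2re; simp at hD2re
  have hAre : 0 < ((A : ℝ) : ℂ).re := by simpa using hA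
  have hBre : 0 < ((B : ℝ) : ℂ).re := by simpa using hB
  have hMre : 0 < ((A * B * (1 - θ) : ℝ) : ℂ).re := by
    simp only [Complex.ofReal_re]
    positivity
  set N : ℂ := ((A * B * (1 - θ) : ℝ) : ℂ) + Complex.I * (A : ℂ) - Complex.I * (B : ℂ) + 1
    with hNd
  have hNre : 0 < N.re := by
    rw [hNd]
    simp only [Complex.add_re, Complex.sub_re, Complex.mul_re, Complex.I_re, Complex.I_im,
      Complex.ofReal_re, Complex.ofReal_im, Complex.one_re]
    nlinarith [mul_pos (mul_pos hA hB) hθ1']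
  have hN0 : N ≠ 0 := fun h => by rw [h] at hNre; simp at hNre
  have hbase : (A : ℂ) * (B : ℂ) * (1 - (θ : ℂ)) + Complex.I * (A : ℂ)
      - Complex.I * (B : ℂ) + 1 = N := by rw [hNd]; push_cast; ring
  have hnum : (A : ℂ) * (B : ℂ) * (1 - (θ : ℂ)) = ((A * B * (1 - θ) : ℝ) : ℂ) := by
    push_cast; ring
  have hEre : 0 < (D1 * D2).re := by
    rw [hD1, hD2]
    simp only [Complex.mul_re, Complex.sub_re, Complex.add_re, Complex.sub_im, Complex.add_im,
      Complex.I_re, Complex.I_im, Complex.ofReal_re, Complex.ofReal_im]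
    ring_nf
    positivity
  have hI : Complex.I * Complex.I = -1 := Complex.I_mul_I
  have hE : D1 * D2 = ((A : ℂ) * (B : ℂ)) + Complex.I * (A : ℂ) - Complex.I * (B : ℂ) + 1 := by
    rw [hD1, hD2]
    linear_combination (-1 : ℂ) * hI
  have h1 : 1 - (θ : ℂ) * ((A : ℂ) / D1 * ((B : ℂ) / D2)) = N / (D1 * D2) := by
    rw [eq_div_iff (mul_ne_zero hD10 hD20), hNd]
    have hx : (A : ℂ) / D1 * ((B : ℂ) / D2) * (D1 * D2) = (A : ℂ) * (B : ℂ) := by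
      field_simp
    calc (1 - (θ : ℂ) * ((A : ℂ) / D1 * ((B : ℂ) / D2))) * (D1 * D2)
        = D1 * D2 - (θ : ℂ) * ((A : ℂ) / D1 * ((B : ℂ) / D2) * (D1 * D2)) := by ring
      _ = D1 * D2 - (θ : ℂ) * ((A : ℂ) * (B : ℂ)) := by rw [hx]
      _ = _ := by rw [hE]; push_cast; ring
  rw [hbase, hnum, h1, Complex.cpow_neg, cpow_div_pos_re hNre hEre,
    cpow_div_pos_re hAre hD1re, cpow_div_pos_re hBre hD2re, cpow_div_pos_re hMre hNre,
    inv_div, cpow_mul_pos_re hD1re hD2re]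
  have hD1s : D1 ^ s ≠ 0 := by simp [Complex.cpow_eq_zero_iff, hD10]
  have hD2s : D2 ^ s ≠ 0 := by simp [Complex.cpow_eq_zero_iff, hD20]
  have hNs : N ^ s ≠ 0 := by simp [Complex.cpow_eq_zero_iff, hN0]
  have hmul : ((1 - θ : ℝ) : ℂ) ^ s * (((A : ℝ) : ℂ) ^ s * ((B : ℝ) : ℂ) ^ s)
      = ((A * B * (1 - θ) : ℝ) : ℂ) ^ s := by
    have e1 : ((A * B * (1 - θ) : ℝ) : ℂ) = (((1 - θ : ℝ)) : ℂ) * (((A * B : ℝ)) : ℂ) := by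
      push_cast; ring
    rw [e1, Complex.mul_cpow_ofReal_nonneg hθ1'.le (by positivity : (0:ℝ) ≤ A * B)]
    have e2 : ((A * B : ℝ) : ℂ) = ((A : ℝ) : ℂ) * ((B : ℝ) : ℂ) := by push_cast; ring
    rw [e2, Complex.mul_cpow_ofReal_nonneg hA.le hB.le]
  rw [← hmul]
  field_simp


lemma prod_pair_ite {M : Type*} [CommMonoid M] {q : ℕ} (i j : Fin q) (hij : i ≠ j) (u v : M) :
    (∏ k : Fin q, if k = i then u else if k = j then v else 1) = u * v := by
  classical
  rw [← Finset.prod_subset (Finset.subset_univ ({i, j} : Finset (Fin q)))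
    (fun x _ hx => by
      simp only [Finset.mem_insert, Finset.mem_singleton] at hx
      push_neg at hx
      rw [if_neg hx.1, if_neg hx.2])]
  rw [Finset.prod_pair hij, if_pos rfl, if_neg (Ne.symm hij), if_pos rfl]

lemma prod_single_ite {M : Type*} [CommMonoid M] {q : ℕ} (i : Fin q) (u : M) :
    (∏ k : Fin q, if k = i then u else 1) = u := by
  classical
  rw [Finset.prod_eq_single i (fun k _ hk => if_neg hk)
    (fun h => absurd (Finset.mem_univ i) h), if_pos rfl]

theorem mvGammaPdf_codifference_identities
    (q : ℕ) (hq : 1 ≤ q) (lam θ : ℝ) (hlam : 0 < lam) (hθ0 : 0 < θ) (hθ1 : θ < 1)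
    (a : Fin q → ℝ) (ha : ∀ i, 0 < a i) (t : ℝ) (ht : 0 < t)
    (i j : Fin q) (hij : i ≠ j) :
    (∫ x in Set.univ.pi fun _ : Fin q => Set.Ioi (0 : ℝ),
        Complex.exp (Complex.I * ((x i : ℂ) - (x j : ℂ))) * (mvGammaPdf q lam θ a x t : ℂ))
      = (((a i : ℂ) * (a j : ℂ) * (1 - (θ : ℂ))) /
          ((a i : ℂ) * (a j : ℂ) * (1 - (θ : ℂ)) + Complex.I * (a i : ℂ)
            - Complex.I * (a j : ℂ) + 1)) ^ ((lam * t : ℝ) : ℂ) ∧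
    (∫ x in Set.univ.pi fun _ : Fin q => Set.Ioi (0 : ℝ),
        Complex.exp (Complex.I * (x i : ℂ)) * (mvGammaPdf q lam θ a x t : ℂ))
      = (((a i : ℂ) * (1 - (θ : ℂ))) / ((a i : ℂ) * (1 - (θ : ℂ)) - Complex.I))
          ^ ((lam * t : ℝ) : ℂ) := by
  have hS : MeasurableSet (Set.univ.pi fun _ : Fin q => Set.Ioi (0 : ℝ)) :=
    MeasurableSet.univ_pi (fun _ => measurableSet_Ioi)
  constructor
  · set w : Fin q → ℝ := fun k => if k = i then 1 else if k = j then -1 else 0 with hw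
    have hsum : ∀ x : Fin q → ℝ, (∑ k, (w k : ℂ) * (x k : ℂ)) = (x i : ℂ) - (x j : ℂ) := by
      intro x
      have hterm : ∀ k : Fin q, (w k : ℂ) * (x k : ℂ)
          = (if k = i then (x k : ℂ) else 0) - (if k = j then (x k : ℂ) else 0) := by
        intro k
        simp only [hw]
        by_cases hki : k = i
        · subst hki
          rw [if_pos rfl, if_pos rfl, if_neg hij]
          norm_num
        · by_cases hkj : k = j
          · subst hkj
            rw [if_neg hki, if_pos rfl, if_pos rfl, if_neg hki]
            push_cast
            ring
          · rw [if_neg hki, if_neg hkj, if_neg hki, if_neg hkj]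
            norm_num
      rw [Finset.sum_congr rfl (fun k _ => hterm k), Finset.sum_sub_distrib,
        Finset.sum_ite_eq' Finset.univ i (fun k => ((x k : ℂ))),
        Finset.sum_ite_eq' Finset.univ j (fun k => ((x k : ℂ))),
        if_pos (Finset.mem_univ i), if_pos (Finset.mem_univ j)]
    have hfac : ∀ k : Fin q, ((a k : ℂ) / ((a k : ℂ) - Complex.I * (w k : ℂ)))
        = if k = i then (a i : ℂ) / ((a i : ℂ) - Complex.I)
          else if k = j then (a j : ℂ) / ((a j : ℂ) + Complex.I) else 1 := by
      intro k
      by_cases hki : k = i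
      · subst hki
        rw [if_pos rfl]; simp only [hw]
        simp
      · by_cases hkj : k = j
        · subst hkj
          rw [if_neg hki, if_pos rfl]; simp only [hw]
          simp only [if_neg hki, if_pos rfl]
          push_cast
          ring_nf
        · rw [if_neg hki, if_neg hkj]; simp only [hw]
          simp only [if_neg hki, if_neg hkj]
          push_cast
          rw [mul_zero, sub_zero, div_self (Complex.ofReal_ne_zero.2 (ha k).ne')]
    have hprod1 : (∏ k, ((a k : ℂ) / ((a k : ℂ) - Complex.I * (w k : ℂ))))
        = (a i : ℂ) / ((a i : ℂ) - Complex.I) * ((a j : ℂ) / ((a j : ℂ) + Complex.I)) := by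
      rw [Finset.prod_congr rfl (fun k _ => hfac k), prod_pair_ite i j hij]
    have hprod2 : (∏ k, ((a k : ℂ) / ((a k : ℂ) - Complex.I * (w k : ℂ)))
          ^ ((lam * t : ℝ) : ℂ))
        = ((a i : ℂ) / ((a i : ℂ) - Complex.I)) ^ ((lam * t : ℝ) : ℂ) *
          ((a j : ℂ) / ((a j : ℂ) + Complex.I)) ^ ((lam * t : ℝ) : ℂ) := by
      have : ∀ k : Fin q, ((a k : ℂ) / ((a k : ℂ) - Complex.I * (w k : ℂ)))
            ^ ((lam * t : ℝ) : ℂ)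
          = if k = i then ((a i : ℂ) / ((a i : ℂ) - Complex.I)) ^ ((lam * t : ℝ) : ℂ)
            else if k = j then ((a j : ℂ) / ((a j : ℂ) + Complex.I)) ^ ((lam * t : ℝ) : ℂ)
            else 1 := by
        intro k
        rw [hfac k]
        by_cases hki : k = i
        · rw [if_pos hki, if_pos hki]
        · by_cases hkj : k = j
          · rw [if_neg hki, if_neg hki, if_pos hkj, if_pos hkj]
          · rw [if_neg hki, if_neg hki, if_neg hkj, if_neg hkj, Complex.one_cpow]
      rw [Finset.prod_congr rfl (fun k _ => this k), prod_pair_ite i j hij]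
    have hleft : (∫ x in Set.univ.pi fun _ : Fin q => Set.Ioi (0 : ℝ),
          Complex.exp (Complex.I * ((x i : ℂ) - (x j : ℂ))) * (mvGammaPdf q lam θ a x t : ℂ))
        = ∫ x in Set.univ.pi fun _ : Fin q => Set.Ioi (0 : ℝ),
          Complex.exp (Complex.I * (∑ k, (w k : ℂ) * (x k : ℂ))) *
            (mvGammaPdf q lam θ a x t : ℂ) := by
      apply setIntegral_congr_fun hS
      intro x _
      simp only [hsum x]
    rw [hleft, mv_main q hq lam θ hlam hθ0 hθ1 a ha t ht w, hprod1, hprod2]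
    exact alg_two hθ1 (ha i) (ha j) _
  · set w : Fin q → ℝ := fun k => if k = i then 1 else 0 with hw
    have hsum : ∀ x : Fin q → ℝ, (∑ k, (w k : ℂ) * (x k : ℂ)) = (x i : ℂ) := by
      intro x
      have hterm : ∀ k : Fin q, (w k : ℂ) * (x k : ℂ)
          = if k = i then (x k : ℂ) else 0 := by
        intro k
        simp only [hw]
        by_cases hki : k = i
        · rw [if_pos hki, if_pos hki]
          norm_num
        · rw [if_neg hki, if_neg hki]
          norm_num
      rw [Finset.sum_congr rfl (fun k _ => hterm k),
        Finset.sum_ite_eq' Finset.univ i (fun k => ((x k : ℂ))), if_pos (Finset.mem_univ i)]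
    have hfac : ∀ k : Fin q, ((a k : ℂ) / ((a k : ℂ) - Complex.I * (w k : ℂ)))
        = if k = i then (a i : ℂ) / ((a i : ℂ) - Complex.I) else 1 := by
      intro k
      by_cases hki : k = i
      · subst hki
        rw [if_pos rfl]; simp only [hw]
        simp
      · rw [if_neg hki]; simp only [hw]
        simp only [if_neg hki]
        push_cast
        rw [mul_zero, sub_zero, div_self (Complex.ofReal_ne_zero.2 (ha k).ne')]
    have hprod1 : (∏ k, ((a k : ℂ) / ((a k : ℂ) - Complex.I * (w k : ℂ))))
        = (a i : ℂ) / ((a i : ℂ) - Complex.I) := by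
      rw [Finset.prod_congr rfl (fun k _ => hfac k), prod_single_ite i]
    have hprod2 : (∏ k, ((a k : ℂ) / ((a k : ℂ) - Complex.I * (w k : ℂ)))
          ^ ((lam * t : ℝ) : ℂ))
        = ((a i : ℂ) / ((a i : ℂ) - Complex.I)) ^ ((lam * t : ℝ) : ℂ) := by
      have : ∀ k : Fin q, ((a k : ℂ) / ((a k : ℂ) - Complex.I * (w k : ℂ)))
            ^ ((lam * t : ℝ) : ℂ)
          = if k = i then ((a i : ℂ) / ((a i : ℂ) - Complex.I)) ^ ((lam * t : ℝ) : ℂ)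
            else 1 := by
        intro k
        rw [hfac k]
        by_cases hki : k = i
        · rw [if_pos hki, if_pos hki]
        · rw [if_neg hki, if_neg hki, Complex.one_cpow]
      rw [Finset.prod_congr rfl (fun k _ => this k), prod_single_ite i]
    have hleft : (∫ x in Set.univ.pi fun _ : Fin q => Set.Ioi (0 : ℝ),
          Complex.exp (Complex.I * (x i : ℂ)) * (mvGammaPdf q lam θ a x t : ℂ))
        = ∫ x in Set.univ.pi fun _ : Fin q => Set.Ioi (0 : ℝ),
          Complex.exp (Complex.I * (∑ k, (w k : ℂ) * (x k : ℂ))) *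
            (mvGammaPdf q lam θ a x t : ℂ) := by
      apply setIntegral_congr_fun hS
      intro x _
      simp only [hsum x]
    rw [hleft, mv_main q hq lam θ hlam hθ0 hθ1 a ha t ht w, hprod1, hprod2]
    exact alg_one hθ1 (ha i) _
end

section
/- Gamma-mixed state probabilities of the generalized counting process (single coordinate of Eq. (stateMZ)): let k ≥ 1 be an integer, λ_1,…,λ_k > 0, λ_• = Σ_{j=1}^k λ_j, a > 0, and let r = λt > 0. Then for every n ∈ ℕ, ∫_0^∞ p(n,x) · γ_{r,a}(x) dx = (a/(a+λ_•))^{r} · Σ_{(m_1,…,m_k) ∈ Ω(k,n)} (Γ(η + r)/Γ(r)) · ∏_{j=1}^k ( (λ_j/(a+λ_•))^{m_j} / m_j! ), where η = m_1 + ⋯ + m_k. -/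
open scoped BigOperators
open MeasureTheory

/-- `Omega k n` is the (finite) set of `(m_1, …, m_k) ∈ ℕ^k` with `Σ_j j·m_j = n`
(indices `j` running over `1, …, k`). -/
def Omega (k n : ℕ) : Finset (Fin k → ℕ) :=
  (Fintype.piFinset fun _ => Finset.range (n + 1)).filter fun m => ∑ j, (j.val + 1) * m j = n

/-- State probability of the generalized counting process with jump rates `Λ`. -/
noncomputable def gcpProb (k : ℕ) (Λ : Fin k → ℝ) (n : ℕ) (x : ℝ) : ℝ :=
  ∑ m ∈ Omega k n, ∏ j, ((Λ j * x) ^ (m j) / ((m j).factorial : ℝ) * Real.exp (-(Λ j * x)))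

lemma integrableOn_rpow_mul_exp_neg_mul' {c b : ℝ} (hc : 0 < c) (hb : 0 < b) :
    IntegrableOn (fun x : ℝ => x ^ (c - 1) * Real.exp (-(b * x))) (Set.Ioi 0) := by
  have h := integrableOn_rpow_mul_exp_neg_mul_rpow (by linarith : (-1:ℝ) < c - 1) (zero_lt_one : (0:ℝ) < 1) hb
  refine h.congr_fun (fun x hx => ?_) measurableSet_Ioi
  simp only [Real.rpow_one, neg_mul]

theorem gcp_gamma_mixed_state_probabilities
    (k : ℕ) (hk : 1 ≤ k) (Λ : Fin k → ℝ) (hΛ : ∀ j, 0 < Λ j)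
    (a r : ℝ) (ha : 0 < a) (hr : 0 < r) (n : ℕ) :
    (∫ x in Set.Ioi (0 : ℝ), gcpProb k Λ n x * gammaPdf r a x)
      = (a / (a + ∑ j, Λ j)) ^ r *
          ∑ m ∈ Omega k n, (Real.Gamma ((∑ j, m j : ℕ) + r) / Real.Gamma r) *
            ∏ j, ((Λ j / (a + ∑ j', Λ j')) ^ (m j) / ((m j).factorial : ℝ)) := by
  have hΓr : Real.Gamma r ≠ 0 := (Real.Gamma_pos_of_pos hr).ne'
  set S : ℝ := ∑ j, Λ j with hS
  have hSpos : 0 < S := Finset.sum_pos (fun j _ => hΛ j) ⟨⟨0, hk⟩, Finset.mem_univ _⟩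
  have hb : 0 < a + S := by positivity
  -- pointwise rewriting of each summand's integrand
  have hint : ∀ (m : Fin k → ℕ), ∀ x ∈ Set.Ioi (0:ℝ),
      (∏ j, ((Λ j * x) ^ (m j) / ((m j).factorial : ℝ) * Real.exp (-(Λ j * x)))) * gammaPdf r a x
      = ((∏ j, (Λ j ^ (m j) / ((m j).factorial : ℝ))) * a ^ r / Real.Gamma r) *
        (x ^ (((∑ j, m j : ℕ) : ℝ) + r - 1) * Real.exp (-((a + S) * x))) := by
    intro m x hx
    have hx0 : (0:ℝ) < x := hx
    have h1 : (∏ j, ((Λ j * x) ^ (m j) / ((m j).factorial : ℝ) * Real.exp (-(Λ j * x))))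
        = (∏ j, (Λ j ^ (m j) / ((m j).factorial : ℝ))) * (x ^ (∑ j, m j) * Real.exp (-(S * x))) := by
      have h2 : ∑ j, -(Λ j * x) = -(S * x) := by
        rw [hS, Finset.sum_mul, ← Finset.sum_neg_distrib]
      have hA : ∏ j, ((Λ j * x) ^ (m j) / ((m j).factorial : ℝ))
          = (∏ j, (Λ j ^ (m j) / ((m j).factorial : ℝ))) * x ^ (∑ j, m j) := by
        rw [← Finset.prod_pow_eq_pow_sum, ← Finset.prod_mul_distrib]
        exact Finset.prod_congr rfl fun j _ => by rw [mul_pow]; ring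
      rw [Finset.prod_mul_distrib, ← Real.exp_sum, h2, hA]
      ring
    have h3 : (x:ℝ) ^ (∑ j, m j) * x ^ (r - 1) = x ^ (((∑ j, m j : ℕ) : ℝ) + r - 1) := by
      rw [← Real.rpow_natCast x (∑ j, m j), ← Real.rpow_add hx0]
      ring_nf
    have h4 : Real.exp (-(S * x)) * Real.exp (-(a * x)) = Real.exp (-((a + S) * x)) := by
      rw [← Real.exp_add]; ring_nf
    rw [gammaPdf, h1, ← h3, ← h4]
    ring
  -- integrability of each summand
  have hintg : ∀ m ∈ Omega k n, IntegrableOn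
      (fun x => (∏ j, ((Λ j * x) ^ (m j) / ((m j).factorial : ℝ) * Real.exp (-(Λ j * x)))) *
        gammaPdf r a x) (Set.Ioi 0) := by
    intro m _
    have hc : (0:ℝ) < ((∑ j, m j : ℕ) : ℝ) + r := by positivity
    have h5 : IntegrableOn (fun x : ℝ =>
        ((∏ j, (Λ j ^ (m j) / ((m j).factorial : ℝ))) * a ^ r / Real.Gamma r) *
          (x ^ (((∑ j, m j : ℕ) : ℝ) + r - 1) * Real.exp (-((a + S) * x)))) (Set.Ioi 0) :=
      (integrableOn_rpow_mul_exp_neg_mul' hc hb).const_mul _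
    refine h5.congr_fun (fun x hx => ?_) measurableSet_Ioi
    exact (hint m x hx).symm
  -- value of each summand's integral
  have key : ∀ m ∈ Omega k n,
      (∫ x in Set.Ioi (0:ℝ),
        (∏ j, ((Λ j * x) ^ (m j) / ((m j).factorial : ℝ) * Real.exp (-(Λ j * x)))) * gammaPdf r a x)
      = (a / (a + S)) ^ r * ((Real.Gamma (((∑ j, m j : ℕ) : ℝ) + r) / Real.Gamma r) *
          ∏ j, ((Λ j / (a + S)) ^ (m j) / ((m j).factorial : ℝ))) := by
    intro m _
    set η : ℕ := ∑ j, m j with hη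
    have hc : (0:ℝ) < (η : ℝ) + r := by positivity
    rw [setIntegral_congr_fun measurableSet_Ioi (hint m), integral_const_mul,
      Real.integral_rpow_mul_exp_neg_mul_Ioi hc hb]
    have e1 : ((1:ℝ) / (a + S)) ^ ((η : ℝ) + r) = (1 / (a + S)) ^ η * (1 / (a + S)) ^ r := by
      rw [Real.rpow_add (by positivity), Real.rpow_natCast]
    have e2 : (a / (a + S)) ^ r = a ^ r * (1 / (a + S)) ^ r := by
      rw [← Real.mul_rpow ha.le (by positivity)]
      ring_nf
    have e3 : (∏ j, ((Λ j / (a + S)) ^ (m j) / ((m j).factorial : ℝ)))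
        = (∏ j, (Λ j ^ (m j) / ((m j).factorial : ℝ))) * (1 / (a + S)) ^ η := by
      rw [← Finset.prod_pow_eq_pow_sum, ← Finset.prod_mul_distrib]
      exact Finset.prod_congr rfl fun j _ => by rw [div_pow, div_pow, one_pow]; ring
    rw [e1, e2, e3]
    field_simp
  rw [show (∫ x in Set.Ioi (0:ℝ), gcpProb k Λ n x * gammaPdf r a x)
      = ∑ m ∈ Omega k n, ∫ x in Set.Ioi (0:ℝ),
        (∏ j, ((Λ j * x) ^ (m j) / ((m j).factorial : ℝ) * Real.exp (-(Λ j * x)))) * gammaPdf r a x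
      from by
        rw [← integral_finset_sum _ hintg]
        simp_rw [gcpProb, Finset.sum_mul],
    Finset.sum_congr rfl key, ← Finset.mul_sum]
end

section
/- State probabilities of the multivariate GCP time-changed by the multivariate gamma subordinator: for every t > 0 and every n̄ = (n_1,…,n_q) ∈ ℕ^q, p̂(n̄,t) = (1−θ)^{λt} · Σ_{h=0}^∞ (θ^h/h!) (λt)_h · ∏_{i=1}^q ( a_i/(a_i+λ_i) )^{h+λt} · Σ_{(m_1,…,m_{k_i}) ∈ Ω(k_i,n_i)} (h+λt)_{η_i} ∏_{j=1}^{k_i} ( (λ_{ij}/(a_i+λ_i))^{m_j} / m_j! ), where η_i = m_1 + ⋯ + m_{k_i} and (x)_h denotes the rising factorial x(x+1)⋯(x+h−1) with (x)_0 = 1. -/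
open scoped BigOperators
open MeasureTheory

/-- State probabilities of the multivariate GCP time-changed by the multivariate gamma
subordinator. -/
noncomputable def phat (q : ℕ) (lam θ : ℝ) (a : Fin q → ℝ) (k : Fin q → ℕ)
    (Λ : (i : Fin q) → Fin (k i) → ℝ) (nb : Fin q → ℕ) (t : ℝ) : ℝ :=
  ∫ x in Set.univ.pi fun _ : Fin q => Set.Ioi (0 : ℝ),
    (∏ i, gcpProb (k i) (Λ i) (nb i) (x i)) * mvGammaPdf q lam θ a x t

/-- Rising factorial (Pochhammer symbol) `(x)_h = x (x+1) ⋯ (x+h-1)`. -/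
noncomputable def risingFactorial (x : ℝ) (h : ℕ) : ℝ :=
  ∏ i ∈ Finset.range h, (x + i)

namespace TCaux

lemma rising_nonneg {x : ℝ} (hx : 0 ≤ x) (n : ℕ) : 0 ≤ risingFactorial x n :=
  Finset.prod_nonneg fun i _ => by positivity

lemma rising_mono {x y : ℝ} (hx : 0 ≤ x) (hxy : x ≤ y) (n : ℕ) :
    risingFactorial x n ≤ risingFactorial y n :=
  Finset.prod_le_prod (fun i _ => by positivity) (fun i _ => by linarith)

lemma rising_add (x : ℝ) (n m : ℕ) :
    risingFactorial x (n + m) = risingFactorial x n * risingFactorial (x + n) m := by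
  unfold risingFactorial
  rw [Finset.prod_range_add]
  congr 1
  refine Finset.prod_congr rfl fun i _ => ?_
  push_cast; ring

lemma rising_one_eq_factorial (n : ℕ) : risingFactorial 1 n = n.factorial := by
  induction n with
  | zero => simp [risingFactorial]
  | succ n ih =>
    unfold risingFactorial at *
    rw [Finset.prod_range_succ, ih, Nat.factorial_succ]
    push_cast; ring

lemma one_le_rising_one (m : ℕ) : (1 : ℝ) ≤ risingFactorial 1 m := by
  rw [rising_one_eq_factorial]
  exact_mod_cast Nat.one_le_iff_ne_zero.mpr m.factorial_ne_zero

lemma Gamma_rising {x : ℝ} (hx : 0 < x) (n : ℕ) :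
    Real.Gamma (x + n) = Real.Gamma x * risingFactorial x n := by
  induction n with
  | zero => simp [risingFactorial]
  | succ n ih =>
    have hxn : x + (n : ℝ) ≠ 0 := by positivity
    have : x + ((n : ℕ) + 1 : ℕ) = (x + n) + 1 := by push_cast; ring
    rw [this, Real.Gamma_add_one hxn, ih]
    unfold risingFactorial
    rw [Finset.prod_range_succ]
    ring

lemma rising_le_pow {x y : ℝ} (hx : 0 ≤ x) {n N : ℕ} (hxy : x + n ≤ y) (hy : 1 ≤ y)
    (hnN : n ≤ N) : risingFactorial x n ≤ y ^ N := by
  calc risingFactorial x n ≤ ∏ _i ∈ Finset.range n, y := by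
        refine Finset.prod_le_prod (fun i _ => by positivity) (fun i hi => ?_)
        have : (i : ℝ) ≤ n := by exact_mod_cast (Finset.mem_range.mp hi).le
        linarith
    _ = y ^ n := by rw [Finset.prod_const, Finset.card_range]
    _ ≤ y ^ N := pow_le_pow_right₀ hy hnN

lemma rising_le_factorial_mul {T : ℝ} (hT : 0 ≤ T) {K : ℕ} (hK1 : 1 ≤ K) (hTK : T ≤ K)
    (n : ℕ) : risingFactorial T n ≤ n.factorial * ((n : ℝ) + K) ^ K := by
  have hKc : ((K - 1 : ℕ) : ℝ) = (K : ℝ) - 1 := by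
    rw [Nat.cast_sub hK1]; simp
  have h1 : risingFactorial T n ≤ risingFactorial (K : ℝ) n :=
    rising_mono hT hTK n
  have key : risingFactorial 1 (K - 1) * risingFactorial (K : ℝ) n
      = (n.factorial : ℝ) * risingFactorial ((n : ℝ) + 1) (K - 1) := by
    have e1 : risingFactorial 1 ((K - 1) + n)
        = risingFactorial 1 (K - 1) * risingFactorial (K : ℝ) n := by
      rw [rising_add]
      congr 2
      rw [hKc]; ring
    have e2 : risingFactorial 1 (n + (K - 1))
        = (n.factorial : ℝ) * risingFactorial ((n : ℝ) + 1) (K - 1) := by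
      rw [rising_add, rising_one_eq_factorial]
      congr 2
      ring
    rw [← e1, ← e2]
    congr 1
    omega
  have h2 : risingFactorial (K : ℝ) n
      ≤ (n.factorial : ℝ) * risingFactorial ((n : ℝ) + 1) (K - 1) := by
    calc risingFactorial (K : ℝ) n
        ≤ risingFactorial 1 (K - 1) * risingFactorial (K : ℝ) n := by
          have := rising_nonneg (x := (K : ℝ)) (by positivity) n
          nlinarith [one_le_rising_one (K - 1)]
      _ = (n.factorial : ℝ) * risingFactorial ((n : ℝ) + 1) (K - 1) := key
  have h3 : risingFactorial ((n : ℝ) + 1) (K - 1) ≤ ((n : ℝ) + K) ^ K := by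
    refine rising_le_pow (by positivity) ?_ ?_ (Nat.sub_le K 1)
    · rw [hKc]; ring_nf; linarith
    · have : (1 : ℝ) ≤ (K : ℝ) := by exact_mod_cast hK1
      linarith [Nat.cast_nonneg (α := ℝ) n]
  calc risingFactorial T n ≤ risingFactorial (K : ℝ) n := h1
    _ ≤ (n.factorial : ℝ) * risingFactorial ((n : ℝ) + 1) (K - 1) := h2
    _ ≤ (n.factorial : ℝ) * ((n : ℝ) + K) ^ K := by
        have : (0 : ℝ) ≤ n.factorial := by positivity
        exact mul_le_mul_of_nonneg_left h3 this

lemma summable_poly_geom {θ : ℝ} (hθ0 : 0 < θ) (hθ1 : θ < 1) (E : ℕ) {B : ℝ} (hB : 0 ≤ B) :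
    Summable (fun n : ℕ => ((n : ℝ) + B) ^ E * θ ^ n) := by
  have hnorm : ‖θ‖ < 1 := by rw [Real.norm_eq_abs, abs_of_nonneg hθ0.le]; exact hθ1
  have h0 : Summable (fun n : ℕ => (n : ℝ) ^ E * θ ^ n) :=
    summable_pow_mul_geometric_of_norm_lt_one E hnorm
  have h1 : Summable (fun n : ℕ => ((n + 1 : ℕ) : ℝ) ^ E * θ ^ (n + 1)) :=
    h0.comp_injective (add_left_injective 1)
  have h2 : Summable (fun n : ℕ => ((n : ℝ) + 1) ^ E * θ ^ n) := by
    have := h1.mul_left (1 / θ)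
    refine this.congr fun n => ?_
    push_cast
    field_simp
    ring
  refine Summable.of_nonneg_of_le (fun n => by positivity) (fun n => ?_) (h2.mul_left ((B + 1) ^ E))
  have hle : (n : ℝ) + B ≤ ((n : ℝ) + 1) * (B + 1) := by nlinarith [Nat.cast_nonneg (α := ℝ) n]
  calc ((n : ℝ) + B) ^ E * θ ^ n ≤ (((n : ℝ) + 1) * (B + 1)) ^ E * θ ^ n := by
        have h0 : (0:ℝ) ≤ (n : ℝ) + B := by positivity
        have h1 : (0:ℝ) ≤ θ ^ n := by positivity
        exact mul_le_mul_of_nonneg_right (pow_le_pow_left₀ h0 hle E) h1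
    _ = (B + 1) ^ E * (((n : ℝ) + 1) ^ E * θ ^ n) := by rw [mul_pow]; ring

lemma integrableOn_rpow_mul_exp_neg_mul {s r : ℝ} (hs : 0 < s) (hr : 0 < r) :
    IntegrableOn (fun x : ℝ => x ^ (s - 1) * Real.exp (-(r * x))) (Set.Ioi 0) := by
  have h0 : IntegrableOn (fun y : ℝ => y ^ (s - 1) * Real.exp (-y)) (Set.Ioi 0) :=
    (Real.GammaIntegral_convergent hs).congr_fun (fun y _ => mul_comm _ _) measurableSet_Ioi
  have h1 : IntegrableOn (fun x : ℝ => (r * x) ^ (s - 1) * Real.exp (-(r * x))) (Set.Ioi 0) := by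
    have := (integrableOn_Ioi_comp_mul_left_iff
      (fun y : ℝ => y ^ (s - 1) * Real.exp (-y)) 0 hr).2
    simpa using this (by simpa using h0)
  have h2 : IntegrableOn (fun x : ℝ => (r ^ (s - 1))⁻¹ * ((r * x) ^ (s - 1) * Real.exp (-(r * x)))) (Set.Ioi 0) := h1.const_mul _
  refine IntegrableOn.congr_fun h2 (fun x hx => ?_) measurableSet_Ioi
  have hx0 : (0 : ℝ) < x := hx
  rw [Real.mul_rpow hr.le hx0.le]
  have : r ^ (s - 1) ≠ 0 := (Real.rpow_pos_of_pos hr _).ne'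
  field_simp

lemma one_coord {kk : ℕ} (Λ : Fin kk → ℝ) (hΛ : ∀ j, 0 < Λ j) {aa s : ℝ} (haa : 0 < aa)
    (hs : 0 < s) (N : ℕ) :
    IntegrableOn (fun x : ℝ => gcpProb kk Λ N x * ((aa * x) ^ s / x * Real.exp (-(aa * x))))
      (Set.Ioi 0) ∧
    ∫ x in Set.Ioi (0:ℝ), gcpProb kk Λ N x * ((aa * x) ^ s / x * Real.exp (-(aa * x)))
      = Real.Gamma s * ((aa / (aa + ∑ j, Λ j)) ^ s *
          ∑ m ∈ Omega kk N, risingFactorial s (∑ j, m j) *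
            ∏ j, ((Λ j / (aa + ∑ j', Λ j')) ^ (m j) / ((m j).factorial : ℝ))) := by
  set bb := aa + ∑ j, Λ j with hbb
  have hsl : (0:ℝ) ≤ ∑ j, Λ j := Finset.sum_nonneg fun j _ => (hΛ j).le
  have hb : 0 < bb := by rw [hbb]; positivity
  set C : (Fin kk → ℕ) → ℝ :=
    fun m => (∏ j, (Λ j) ^ (m j) / ((m j).factorial : ℝ)) * aa ^ s with hC
  set can : (Fin kk → ℕ) → ℝ → ℝ :=
    fun m x => x ^ ((s + (∑ j, m j : ℕ)) - 1) * Real.exp (-(bb * x)) with hcan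
  have hpt : ∀ m : Fin kk → ℕ, ∀ x ∈ Set.Ioi (0:ℝ),
      (∏ j, ((Λ j * x) ^ (m j) / ((m j).factorial : ℝ) * Real.exp (-(Λ j * x)))) *
        ((aa * x) ^ s / x * Real.exp (-(aa * x))) = C m * can m x := by
    intro m x hx
    have hx0 : (0:ℝ) < x := hx
    have e1 : ∏ j, ((Λ j * x) ^ (m j) / ((m j).factorial : ℝ) * Real.exp (-(Λ j * x)))
        = (∏ j, (Λ j) ^ (m j) / ((m j).factorial : ℝ)) * x ^ (∑ j, m j) *
            Real.exp (-((∑ j, Λ j) * x)) := by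
      rw [Finset.prod_mul_distrib]
      congr 1
      · rw [← Finset.prod_pow_eq_pow_sum, ← Finset.prod_mul_distrib]
        refine Finset.prod_congr rfl fun j _ => ?_
        rw [mul_pow]; ring
      · rw [← Real.exp_sum]
        congr 1
        rw [Finset.sum_mul, ← Finset.sum_neg_distrib]
    have ecan : can m x = x ^ (∑ j, m j) * x ^ s / x *
        (Real.exp (-((∑ j, Λ j) * x)) * Real.exp (-(aa * x))) := by
      rw [hcan]
      simp only
      rw [← Real.exp_add]
      have eexp : -((∑ j, Λ j) * x) + -(aa * x) = -(bb * x) := by rw [hbb]; ring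
      rw [eexp]
      congr 1
      rw [Real.rpow_sub hx0, Real.rpow_one, Real.rpow_add hx0, Real.rpow_natCast]
      ring
    rw [e1, Real.mul_rpow haa.le hx0.le, ecan, hC]
    ring
  have hint : ∀ m : Fin kk → ℕ, IntegrableOn (fun x => C m * can m x) (Set.Ioi 0) := by
    intro m
    have h0 : (0:ℝ) < s + (∑ j, m j : ℕ) := by positivity
    exact (integrableOn_rpow_mul_exp_neg_mul h0 hb).const_mul _
  have hsum_eq : Set.EqOn
      (fun x : ℝ => gcpProb kk Λ N x * ((aa * x) ^ s / x * Real.exp (-(aa * x))))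
      (fun x : ℝ => ∑ m ∈ Omega kk N, C m * can m x) (Set.Ioi 0) := by
    intro x hx
    simp only [gcpProb, Finset.sum_mul]
    exact Finset.sum_congr rfl fun m _ => hpt m x hx
  have hintsum : IntegrableOn (fun x : ℝ => ∑ m ∈ Omega kk N, C m * can m x) (Set.Ioi 0) :=
    MeasureTheory.integrable_finset_sum _ (fun m _ => hint m)
  constructor
  · exact hintsum.congr_fun hsum_eq.symm measurableSet_Ioi
  · rw [setIntegral_congr_fun measurableSet_Ioi hsum_eq,
      integral_finset_sum _ (fun m _ => hint m)]
    rw [Finset.mul_sum, Finset.mul_sum]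
    refine Finset.sum_congr rfl fun m _ => ?_
    have h0 : (0:ℝ) < s + (∑ j, m j : ℕ) := by positivity
    have hval : ∫ x in Set.Ioi (0:ℝ), C m * can m x
        = C m * ((1 / bb) ^ (s + (∑ j, m j : ℕ)) * Real.Gamma (s + (∑ j, m j : ℕ))) := by
      rw [hcan]
      simp only
      rw [MeasureTheory.integral_const_mul, Real.integral_rpow_mul_exp_neg_mul_Ioi h0 hb]
    rw [hval]
    have hΓ : Real.Gamma (s + (∑ j, m j : ℕ)) = Real.Gamma s * risingFactorial s (∑ j, m j) :=
      Gamma_rising hs _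
    have hpow : (1 / bb) ^ (s + ((∑ j, m j : ℕ) : ℝ)) = (1 / bb) ^ s * (1 / bb) ^ (∑ j, m j) := by
      rw [Real.rpow_add (by positivity), Real.rpow_natCast]
    have hab : aa ^ s * (1 / bb) ^ s = (aa / bb) ^ s := by
      rw [← Real.mul_rpow haa.le (by positivity), mul_one_div]
    have hprod : (∏ j, (Λ j) ^ (m j) / ((m j).factorial : ℝ)) * (1 / bb : ℝ) ^ (∑ j, m j)
        = ∏ j, ((Λ j / bb) ^ (m j) / ((m j).factorial : ℝ)) := by
      rw [← Finset.prod_pow_eq_pow_sum, ← Finset.prod_mul_distrib]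
      refine Finset.prod_congr rfl fun j _ => ?_
      rw [div_mul_eq_mul_div, ← mul_pow, mul_one_div]
    rw [hΓ, hpow, ← hab, ← hprod, hC]
    ring
  done

lemma pi_indicator_prod {q : ℕ} (f : Fin q → ℝ → ℝ) :
    (Set.univ.pi fun _ : Fin q => Set.Ioi (0:ℝ)).indicator (fun x => ∏ i, f i (x i))
      = fun x => ∏ i, (Set.Ioi (0:ℝ)).indicator (f i) (x i) := by
  funext x
  by_cases hx : x ∈ Set.univ.pi fun _ : Fin q => Set.Ioi (0:ℝ)
  · rw [Set.indicator_of_mem hx]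
    exact Finset.prod_congr rfl fun i _ =>
      (Set.indicator_of_mem (hx i (Set.mem_univ i)) _).symm
  · rw [Set.indicator_of_notMem hx]
    rw [Set.mem_univ_pi] at hx
    push_neg at hx
    obtain ⟨i, hi⟩ := hx
    exact (Finset.prod_eq_zero (Finset.mem_univ i) (Set.indicator_of_notMem hi _)).symm

lemma main_aux (q : ℕ) (hq : 1 ≤ q) (T θ : ℝ) (hT : 0 < T) (hθ0 : 0 < θ) (hθ1 : θ < 1)
    (F : ℕ → Fin q → ℝ → ℝ) (V : Fin q → ℕ → ℝ)
    (hint : ∀ n i, IntegrableOn (F n i) (Set.Ioi 0))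
    (hval : ∀ n i, ∫ x in Set.Ioi (0:ℝ), F n i x = Real.Gamma ((n:ℝ) + T) * V i n)
    (hFnn : ∀ n i, ∀ x ∈ Set.Ioi (0:ℝ), 0 ≤ F n i x)
    (hVnn : ∀ i n, 0 ≤ V i n)
    (hVle : ∃ D, 0 ≤ D ∧ ∃ B, 1 ≤ B ∧ ∃ M : ℕ,
      ∀ n : ℕ, ∏ i, V i n ≤ D * ((n:ℝ) + B) ^ M) :
    (∫ x in Set.univ.pi fun _ : Fin q => Set.Ioi (0:ℝ),
        ∑' n : ℕ, (θ ^ n / ((n.factorial : ℝ) * Real.Gamma ((n : ℝ) + T) ^ (q - 1))) *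
          ∏ i, F n i (x i))
      = Real.Gamma T *
          ∑' n : ℕ, (θ ^ n / (n.factorial : ℝ)) * risingFactorial T n * ∏ i, V i n := by
  set S : Set (Fin q → ℝ) := Set.univ.pi fun _ : Fin q => Set.Ioi (0:ℝ) with hS_def
  have hS : MeasurableSet S := MeasurableSet.univ_pi fun i => measurableSet_Ioi
  set c : ℕ → ℝ := fun n =>
    θ ^ n / ((n.factorial : ℝ) * Real.Gamma ((n : ℝ) + T) ^ (q - 1)) with hc_def
  set G : ℕ → (Fin q → ℝ) → ℝ := fun n x => c n * ∏ i, F n i (x i) with hG_def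
  have hsT : ∀ n : ℕ, (0:ℝ) < (n:ℝ) + T := fun n => by positivity
  have hΓpos : ∀ n : ℕ, 0 < Real.Gamma ((n:ℝ) + T) := fun n => Real.Gamma_pos_of_pos (hsT n)
  have hcnn : ∀ n, 0 ≤ c n := fun n =>
    div_nonneg (pow_nonneg hθ0.le n)
      (mul_nonneg (Nat.cast_nonneg _) (pow_nonneg (hΓpos n).le _))
  -- integrability of each G n on S
  have hprodint : ∀ n, IntegrableOn (fun x : Fin q → ℝ => ∏ i, F n i (x i)) S := by
    intro n
    rw [← integrable_indicator_iff hS, hS_def, pi_indicator_prod]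
    exact Integrable.fintype_prod (𝕜 := ℝ)
      fun i => (integrable_indicator_iff measurableSet_Ioi).2 (hint n i)
  have hGint : ∀ n, IntegrableOn (G n) S := by
    intro n
    exact (hprodint n).const_mul _
  -- value of each integral
  have hGval : ∀ n, ∫ x in S, G n x = c n * ∏ i, (Real.Gamma ((n:ℝ) + T) * V i n) := by
    intro n
    rw [hG_def]
    simp only
    rw [MeasureTheory.integral_const_mul]
    congr 1
    rw [hS_def, ← integral_indicator hS, pi_indicator_prod,
      integral_fintype_prod_volume_eq_prod (𝕜 := ℝ) (ι := Fin q)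
        (f := fun i => (Set.Ioi (0:ℝ)).indicator (F n i))]
    refine Finset.prod_congr rfl fun i _ => ?_
    rw [integral_indicator measurableSet_Ioi]
    exact hval n i
  -- simplification of the value
  have hvsimp : ∀ n, c n * ∏ i, (Real.Gamma ((n:ℝ) + T) * V i n)
      = Real.Gamma T * ((θ ^ n / (n.factorial : ℝ)) * risingFactorial T n * ∏ i, V i n) := by
    intro n
    rw [Finset.prod_mul_distrib, Finset.prod_const, Finset.card_univ, Fintype.card_fin]
    have hpowq : Real.Gamma ((n:ℝ) + T) ^ q
        = Real.Gamma ((n:ℝ) + T) ^ (q - 1) * Real.Gamma ((n:ℝ) + T) := by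
      conv_lhs => rw [← Nat.sub_add_cancel hq]
      rw [pow_succ]
    have hGn : Real.Gamma ((n:ℝ) + T) = Real.Gamma T * risingFactorial T n := by
      rw [add_comm]; exact Gamma_rising hT n
    rw [hc_def]
    simp only
    rw [hpowq]
    have hne : Real.Gamma ((n:ℝ) + T) ^ (q - 1) ≠ 0 := pow_ne_zero _ (hΓpos n).ne'
    have hfne : ((n.factorial : ℝ)) ≠ 0 := Nat.cast_ne_zero.2 n.factorial_ne_zero
    field_simp
    rw [hGn]
    ring
  -- summability
  obtain ⟨D, hD, B, hB, M, hVB⟩ := hVle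
  set K : ℕ := max (Nat.ceil T) 1 with hK_def
  have hK1 : 1 ≤ K := le_max_right _ _
  have hTK : T ≤ (K : ℝ) := le_trans (Nat.le_ceil T) (by exact_mod_cast le_max_left _ _)
  set B2 : ℝ := (K : ℝ) + B with hB2_def
  have hB2 : 0 ≤ B2 := by positivity
  have hwle : ∀ n : ℕ,
      Real.Gamma T * ((θ ^ n / (n.factorial : ℝ)) * risingFactorial T n * ∏ i, V i n)
        ≤ (Real.Gamma T * D) * (((n:ℝ) + B2) ^ (K + M) * θ ^ n) := by
    intro n
    have h1 : (θ ^ n / (n.factorial : ℝ)) * risingFactorial T n ≤ θ ^ n * ((n:ℝ) + K) ^ K := by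
      have hr := rising_le_factorial_mul hT.le hK1 hTK n
      have hfpos : (0:ℝ) < n.factorial := by exact_mod_cast n.factorial_pos
      calc (θ ^ n / (n.factorial : ℝ)) * risingFactorial T n
          ≤ (θ ^ n / (n.factorial : ℝ)) * ((n.factorial : ℝ) * ((n:ℝ) + K) ^ K) := by
            refine mul_le_mul_of_nonneg_left hr (by positivity)
        _ = θ ^ n * ((n:ℝ) + K) ^ K := by field_simp
    have h2 : ∏ i, V i n ≤ D * ((n:ℝ) + B) ^ M := hVB n
    have hprod_nn : 0 ≤ ∏ i, V i n := Finset.prod_nonneg fun i _ => hVnn i n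
    have hrise_nn : 0 ≤ (θ ^ n / (n.factorial : ℝ)) * risingFactorial T n := by
      have := rising_nonneg hT.le n
      positivity
    have h3 : ((n:ℝ) + K) ^ K * ((n:ℝ) + B) ^ M ≤ ((n:ℝ) + B2) ^ (K + M) := by
      rw [pow_add]
      have e1 : ((n:ℝ) + K) ^ K ≤ ((n:ℝ) + B2) ^ K := by
        apply pow_le_pow_left₀ (by positivity)
        rw [hB2_def]; linarith
      have e2 : ((n:ℝ) + B) ^ M ≤ ((n:ℝ) + B2) ^ M := by
        apply pow_le_pow_left₀ (by positivity)
        have hKnn : (0:ℝ) ≤ (K:ℝ) := Nat.cast_nonneg K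
        rw [hB2_def]; linarith
      exact mul_le_mul e1 e2 (by positivity) (by positivity)
    calc Real.Gamma T * ((θ ^ n / (n.factorial : ℝ)) * risingFactorial T n * ∏ i, V i n)
        ≤ Real.Gamma T * ((θ ^ n * ((n:ℝ) + K) ^ K) * (D * ((n:ℝ) + B) ^ M)) := by
          refine mul_le_mul_of_nonneg_left ?_ (Real.Gamma_pos_of_pos hT).le
          exact mul_le_mul h1 h2 hprod_nn (by positivity)
      _ = (Real.Gamma T * D) * ((((n:ℝ) + K) ^ K * ((n:ℝ) + B) ^ M) * θ ^ n) := by ring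
      _ ≤ (Real.Gamma T * D) * (((n:ℝ) + B2) ^ (K + M) * θ ^ n) := by
          refine mul_le_mul_of_nonneg_left ?_ (by positivity)
          exact mul_le_mul_of_nonneg_right h3 (by positivity)
  have hw_nonneg : ∀ n : ℕ,
      0 ≤ Real.Gamma T * ((θ ^ n / (n.factorial : ℝ)) * risingFactorial T n * ∏ i, V i n) := by
    intro n
    have h1 := rising_nonneg hT.le n
    have h2 : 0 ≤ ∏ i, V i n := Finset.prod_nonneg fun i _ => hVnn i n
    have h3 := (Real.Gamma_pos_of_pos hT).le
    positivity
  have hwSummable : Summable (fun n : ℕ =>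
      Real.Gamma T * ((θ ^ n / (n.factorial : ℝ)) * risingFactorial T n * ∏ i, V i n)) :=
    Summable.of_nonneg_of_le hw_nonneg hwle
      ((summable_poly_geom hθ0 hθ1 (K + M) hB2).mul_left (Real.Gamma T * D))
  -- nonnegativity of G n on S, to identify the norm integral
  have hnormval : ∀ n, (∫ x in S, ‖G n x‖) = ∫ x in S, G n x := by
    intro n
    refine MeasureTheory.integral_congr_ae ?_
    refine (MeasureTheory.ae_restrict_iff' hS).2 (Filter.Eventually.of_forall fun x hx => ?_)
    refine Real.norm_of_nonneg ?_
    have : 0 ≤ ∏ i, F n i (x i) :=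
      Finset.prod_nonneg fun i _ => hFnn n i (x i) (hx i (Set.mem_univ i))
    exact mul_nonneg (hcnn n) this
  have hsumnorm : Summable (fun n => ∫ x in S, ‖G n x‖) := by
    refine hwSummable.congr fun n => ?_
    rw [← hvsimp n, ← hGval n, ← hnormval n]
  have hswap := MeasureTheory.integral_tsum_of_summable_integral_norm
    (μ := volume.restrict S) (F := G) hGint hsumnorm
  calc (∫ x in S, ∑' n : ℕ, c n * ∏ i, F n i (x i))
      = ∑' n : ℕ, ∫ x in S, G n x := hswap.symm
    _ = ∑' n : ℕ, Real.Gamma T *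
          ((θ ^ n / (n.factorial : ℝ)) * risingFactorial T n * ∏ i, V i n) := by
        exact tsum_congr fun n => (hGval n).trans (hvsimp n)
    _ = Real.Gamma T *
          ∑' n : ℕ, (θ ^ n / (n.factorial : ℝ)) * risingFactorial T n * ∏ i, V i n := by
        rw [tsum_mul_left]

end TCaux

open TCaux in
theorem timeChanged_mvGCP_state_probabilities
    (q : ℕ) (hq : 1 ≤ q) (lam θ : ℝ) (hlam : 0 < lam) (hθ0 : 0 < θ) (hθ1 : θ < 1)
    (a : Fin q → ℝ) (ha : ∀ i, 0 < a i)
    (k : Fin q → ℕ) (hk : ∀ i, 1 ≤ k i)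
    (Λ : (i : Fin q) → Fin (k i) → ℝ) (hΛ : ∀ i j, 0 < Λ i j)
    (t : ℝ) (ht : 0 < t) (nb : Fin q → ℕ) :
    phat q lam θ a k Λ nb t
      = (1 - θ) ^ (lam * t) *
          ∑' h : ℕ, (θ ^ h / (h.factorial : ℝ)) * risingFactorial (lam * t) h *
            ∏ i, ((a i / (a i + ∑ j, Λ i j)) ^ ((h : ℝ) + lam * t) *
              ∑ m ∈ Omega (k i) (nb i),
                risingFactorial ((h : ℝ) + lam * t) (∑ j, m j) *
                  ∏ j, ((Λ i j / (a i + ∑ j', Λ i j')) ^ (m j) / ((m j).factorial : ℝ))) := by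
  have hT : 0 < lam * t := mul_pos hlam ht
  have hsT : ∀ n : ℕ, (0:ℝ) < (n:ℝ) + lam * t := fun n => by positivity
  have hΛsum_nn : ∀ i, (0:ℝ) ≤ ∑ j, Λ i j :=
    fun i => Finset.sum_nonneg fun j _ => (hΛ i j).le
  have hbpos : ∀ i, (0:ℝ) < a i + ∑ j, Λ i j := fun i => by
    have := ha i; have := hΛsum_nn i; linarith
  -- the coordinate functions and values
  have hcoord : ∀ (n : ℕ) (i : Fin q),
      IntegrableOn (fun y : ℝ => gcpProb (k i) (Λ i) (nb i) y *
        ((a i * y) ^ ((n:ℝ) + lam * t) / y * Real.exp (-(a i * y)))) (Set.Ioi 0) ∧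
      ∫ y in Set.Ioi (0:ℝ), gcpProb (k i) (Λ i) (nb i) y *
          ((a i * y) ^ ((n:ℝ) + lam * t) / y * Real.exp (-(a i * y)))
        = Real.Gamma ((n:ℝ) + lam * t) *
            ((a i / (a i + ∑ j, Λ i j)) ^ ((n:ℝ) + lam * t) *
              ∑ m ∈ Omega (k i) (nb i),
                risingFactorial ((n:ℝ) + lam * t) (∑ j, m j) *
                  ∏ j, ((Λ i j / (a i + ∑ j', Λ i j')) ^ (m j) / ((m j).factorial : ℝ))) :=
    fun n i => one_coord (Λ i) (hΛ i) (ha i) (hsT n) (nb i)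
  -- nonnegativity of coordinate functions
  have hFnn : ∀ (n : ℕ) (i : Fin q), ∀ y ∈ Set.Ioi (0:ℝ),
      0 ≤ gcpProb (k i) (Λ i) (nb i) y *
        ((a i * y) ^ ((n:ℝ) + lam * t) / y * Real.exp (-(a i * y))) := by
    intro n i y hy
    have hy0 : (0:ℝ) < y := hy
    refine mul_nonneg ?_ ?_
    · refine Finset.sum_nonneg fun m _ => Finset.prod_nonneg fun j _ => ?_
      refine mul_nonneg (div_nonneg (pow_nonneg ?_ _) (Nat.cast_nonneg _)) (Real.exp_pos _).le
      exact mul_nonneg (hΛ i j).le hy0.le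
    · refine mul_nonneg (div_nonneg (Real.rpow_nonneg ?_ _) hy0.le) (Real.exp_pos _).le
      exact mul_nonneg (ha i).le hy0.le
  -- nonnegativity of the values
  have hVnn : ∀ (i : Fin q) (n : ℕ),
      0 ≤ (a i / (a i + ∑ j, Λ i j)) ^ ((n:ℝ) + lam * t) *
          ∑ m ∈ Omega (k i) (nb i),
            risingFactorial ((n:ℝ) + lam * t) (∑ j, m j) *
              ∏ j, ((Λ i j / (a i + ∑ j', Λ i j')) ^ (m j) / ((m j).factorial : ℝ)) := by
    intro i n
    refine mul_nonneg (Real.rpow_nonneg (div_nonneg (ha i).le (hbpos i).le) _) ?_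
    refine Finset.sum_nonneg fun m _ => mul_nonneg (rising_nonneg (hsT n).le _) ?_
    refine Finset.prod_nonneg fun j _ => ?_
    exact div_nonneg (pow_nonneg (div_nonneg (hΛ i j).le (hbpos i).le) _) (Nat.cast_nonneg _)
  -- polynomial bound on the values
  have hVle : ∃ D, 0 ≤ D ∧ ∃ B, 1 ≤ B ∧ ∃ M : ℕ, ∀ n : ℕ,
      (∏ i, ((a i / (a i + ∑ j, Λ i j)) ^ ((n:ℝ) + lam * t) *
          ∑ m ∈ Omega (k i) (nb i),
            risingFactorial ((n:ℝ) + lam * t) (∑ j, m j) *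
              ∏ j, ((Λ i j / (a i + ∑ j', Λ i j')) ^ (m j) / ((m j).factorial : ℝ))))
        ≤ D * ((n:ℝ) + B) ^ M := by
    set M : ℕ := ∑ i, nb i with hM_def
    set B : ℝ := lam * t + M + 1 with hB_def
    set D : Fin q → ℝ := fun i => ∑ m ∈ Omega (k i) (nb i),
      ∏ j, ((Λ i j / (a i + ∑ j', Λ i j')) ^ (m j) / ((m j).factorial : ℝ)) with hD_def
    have hDnn : ∀ i, 0 ≤ D i := by
      intro i
      refine Finset.sum_nonneg fun m _ => Finset.prod_nonneg fun j _ => ?_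
      exact div_nonneg (pow_nonneg (div_nonneg (hΛ i j).le (hbpos i).le) _) (Nat.cast_nonneg _)
    have hB1 : (1:ℝ) ≤ B := by
      rw [hB_def]
      have : (0:ℝ) ≤ M := Nat.cast_nonneg M
      linarith
    refine ⟨∏ i, D i, Finset.prod_nonneg fun i _ => hDnn i, B, hB1, M, fun n => ?_⟩
    have hVi : ∀ i : Fin q,
        ((a i / (a i + ∑ j, Λ i j)) ^ ((n:ℝ) + lam * t) *
          ∑ m ∈ Omega (k i) (nb i),
            risingFactorial ((n:ℝ) + lam * t) (∑ j, m j) *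
              ∏ j, ((Λ i j / (a i + ∑ j', Λ i j')) ^ (m j) / ((m j).factorial : ℝ)))
          ≤ D i * ((n:ℝ) + B) ^ (nb i) := by
      intro i
      have hsum_le : (∑ m ∈ Omega (k i) (nb i),
          risingFactorial ((n:ℝ) + lam * t) (∑ j, m j) *
            ∏ j, ((Λ i j / (a i + ∑ j', Λ i j')) ^ (m j) / ((m j).factorial : ℝ)))
          ≤ D i * ((n:ℝ) + B) ^ (nb i) := by
        rw [hD_def]
        simp only
        rw [Finset.sum_mul]
        refine Finset.sum_le_sum fun m hm => ?_
        have hcm_nn : 0 ≤ ∏ j, ((Λ i j / (a i + ∑ j', Λ i j')) ^ (m j) / ((m j).factorial : ℝ)) :=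
          Finset.prod_nonneg fun j _ =>
            div_nonneg (pow_nonneg (div_nonneg (hΛ i j).le (hbpos i).le) _) (Nat.cast_nonneg _)
        have hη : (∑ j, m j) ≤ nb i := by
          have hmem := (Finset.mem_filter.mp hm).2
          calc (∑ j, m j) ≤ ∑ j, (j.val + 1) * m j :=
                Finset.sum_le_sum fun j _ => Nat.le_mul_of_pos_left (m j) (Nat.succ_pos _)
            _ = nb i := hmem
        have hnbM : (nb i : ℝ) ≤ M := by
          exact_mod_cast Finset.single_le_sum (f := fun i => nb i)
            (fun i _ => Nat.zero_le _) (Finset.mem_univ i)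
        have hrle : risingFactorial ((n:ℝ) + lam * t) (∑ j, m j) ≤ ((n:ℝ) + B) ^ (nb i) := by
          refine rising_le_pow (hsT n).le ?_ ?_ hη
          · have : ((∑ j, m j : ℕ) : ℝ) ≤ (nb i : ℝ) := by exact_mod_cast hη
            rw [hB_def]
            linarith
          · rw [hB_def]
            have : (0:ℝ) ≤ (n:ℝ) := Nat.cast_nonneg n
            have : (0:ℝ) ≤ M := Nat.cast_nonneg M
            have := Nat.cast_nonneg (α := ℝ) n
            nlinarith
        calc risingFactorial ((n:ℝ) + lam * t) (∑ j, m j) *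
              ∏ j, ((Λ i j / (a i + ∑ j', Λ i j')) ^ (m j) / ((m j).factorial : ℝ))
            ≤ ((n:ℝ) + B) ^ (nb i) *
              ∏ j, ((Λ i j / (a i + ∑ j', Λ i j')) ^ (m j) / ((m j).factorial : ℝ)) :=
              mul_le_mul_of_nonneg_right hrle hcm_nn
          _ = (∏ j, ((Λ i j / (a i + ∑ j', Λ i j')) ^ (m j) / ((m j).factorial : ℝ))) *
              ((n:ℝ) + B) ^ (nb i) := by ring
      have hsum_nn : 0 ≤ ∑ m ∈ Omega (k i) (nb i),
          risingFactorial ((n:ℝ) + lam * t) (∑ j, m j) *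
            ∏ j, ((Λ i j / (a i + ∑ j', Λ i j')) ^ (m j) / ((m j).factorial : ℝ)) := by
        refine Finset.sum_nonneg fun m _ => mul_nonneg (rising_nonneg (hsT n).le _) ?_
        exact Finset.prod_nonneg fun j _ =>
          div_nonneg (pow_nonneg (div_nonneg (hΛ i j).le (hbpos i).le) _) (Nat.cast_nonneg _)
      have hrpow1 : (a i / (a i + ∑ j, Λ i j)) ^ ((n:ℝ) + lam * t) ≤ 1 := by
        refine Real.rpow_le_one (div_nonneg (ha i).le (hbpos i).le) ?_ (hsT n).le
        rw [div_le_one (hbpos i)]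
        have := hΛsum_nn i
        linarith
      calc (a i / (a i + ∑ j, Λ i j)) ^ ((n:ℝ) + lam * t) *
            (∑ m ∈ Omega (k i) (nb i),
              risingFactorial ((n:ℝ) + lam * t) (∑ j, m j) *
                ∏ j, ((Λ i j / (a i + ∑ j', Λ i j')) ^ (m j) / ((m j).factorial : ℝ)))
          ≤ ∑ m ∈ Omega (k i) (nb i),
              risingFactorial ((n:ℝ) + lam * t) (∑ j, m j) *
                ∏ j, ((Λ i j / (a i + ∑ j', Λ i j')) ^ (m j) / ((m j).factorial : ℝ)) :=
            mul_le_of_le_one_left hsum_nn hrpow1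
        _ ≤ D i * ((n:ℝ) + B) ^ (nb i) := hsum_le
    calc (∏ i, ((a i / (a i + ∑ j, Λ i j)) ^ ((n:ℝ) + lam * t) *
          ∑ m ∈ Omega (k i) (nb i),
            risingFactorial ((n:ℝ) + lam * t) (∑ j, m j) *
              ∏ j, ((Λ i j / (a i + ∑ j', Λ i j')) ^ (m j) / ((m j).factorial : ℝ))))
        ≤ ∏ i, (D i * ((n:ℝ) + B) ^ (nb i)) := by
          refine Finset.prod_le_prod (fun i _ => hVnn i n) (fun i _ => hVi i)
      _ = (∏ i, D i) * ((n:ℝ) + B) ^ M := by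
          rw [Finset.prod_mul_distrib, Finset.prod_pow_eq_pow_sum, hM_def]
  -- the key application
  have key : (∫ x in Set.univ.pi fun _ : Fin q => Set.Ioi (0:ℝ),
      ∑' n : ℕ, (θ ^ n / ((n.factorial : ℝ) * Real.Gamma ((n : ℝ) + lam * t) ^ (q - 1))) *
        ∏ i, (gcpProb (k i) (Λ i) (nb i) (x i) *
          ((a i * x i) ^ ((n:ℝ) + lam * t) / x i * Real.exp (-(a i * x i)))))
      = Real.Gamma (lam * t) *
          ∑' n : ℕ, (θ ^ n / (n.factorial : ℝ)) * risingFactorial (lam * t) n *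
            ∏ i, ((a i / (a i + ∑ j, Λ i j)) ^ ((n : ℝ) + lam * t) *
              ∑ m ∈ Omega (k i) (nb i),
                risingFactorial ((n : ℝ) + lam * t) (∑ j, m j) *
                  ∏ j, ((Λ i j / (a i + ∑ j', Λ i j')) ^ (m j) / ((m j).factorial : ℝ))) :=
    main_aux q hq (lam * t) θ hT hθ0 hθ1
      (fun n i y => gcpProb (k i) (Λ i) (nb i) y *
        ((a i * y) ^ ((n:ℝ) + lam * t) / y * Real.exp (-(a i * y))))
      (fun i n => (a i / (a i + ∑ j, Λ i j)) ^ ((n:ℝ) + lam * t) *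
        ∑ m ∈ Omega (k i) (nb i),
          risingFactorial ((n:ℝ) + lam * t) (∑ j, m j) *
            ∏ j, ((Λ i j / (a i + ∑ j', Λ i j')) ^ (m j) / ((m j).factorial : ℝ)))
      (fun n i => (hcoord n i).1) (fun n i => (hcoord n i).2) hFnn hVnn hVle
  -- rewrite phat's integrand
  have hpoint : ∀ x : Fin q → ℝ,
      (∏ i, gcpProb (k i) (Λ i) (nb i) (x i)) * mvGammaPdf q lam θ a x t
        = ((1 - θ) ^ (lam * t) / Real.Gamma (lam * t)) *
          ∑' n : ℕ, (θ ^ n / ((n.factorial : ℝ) * Real.Gamma ((n : ℝ) + lam * t) ^ (q - 1))) *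
            ∏ i, (gcpProb (k i) (Λ i) (nb i) (x i) *
              ((a i * x i) ^ ((n:ℝ) + lam * t) / x i * Real.exp (-(a i * x i)))) := by
    intro x
    rw [mvGammaPdf]
    have h2 : (∑' n : ℕ, (θ ^ n / ((n.factorial : ℝ) * Real.Gamma ((n : ℝ) + lam * t) ^ (q - 1))) *
        ∏ i, (gcpProb (k i) (Λ i) (nb i) (x i) *
          ((a i * x i) ^ ((n:ℝ) + lam * t) / x i * Real.exp (-(a i * x i)))))
        = (∏ i, gcpProb (k i) (Λ i) (nb i) (x i)) *
          ∑' n : ℕ, (θ ^ n / ((n.factorial : ℝ) * Real.Gamma ((n : ℝ) + lam * t) ^ (q - 1))) *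
            ∏ i, ((a i * x i) ^ ((n : ℝ) + lam * t) / x i * Real.exp (-(a i * x i))) := by
      rw [← tsum_mul_left]
      refine tsum_congr fun n => ?_
      rw [Finset.prod_mul_distrib]
      ring
    rw [h2]
    ring
  rw [phat]
  simp only [hpoint]
  rw [MeasureTheory.integral_const_mul, key, ← mul_assoc,
    div_mul_cancel₀ _ (Real.Gamma_pos_of_pos hT).ne']
end
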